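/- arXiv:2206.15344 — 10 statements merged into one kernel-verified Lean document; each statement's English description precedes it below -/
import Mathlib

section
/- A branchwise-real tree is continuously gradable if and only if it admits an ℝ-grading, i.e. a strictly order-preserving function into the reals. -/
/-- A tree order: a partial order with a minimum element (the root) in which
the set of predecessors of any element is a chain. -/
def IsTreeOrder (X : Type) [PartialOrder X] : Prop :=
  (∃ r : X, ∀ x : X, r ≤ x) ∧ ∀ x : X, IsChain (· ≤ ·) {y : X | y ≤ x}

/-- A branch: a maximal chain. -/
def IsBranch {X : Type} [PartialOrder X] (B : Set X) : Prop :=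
  IsMaxChain (· ≤ ·) B

/-- A ray: a final segment of a branch. -/
def IsRay {X : Type} [PartialOrder X] (R : Set X) : Prop :=
  ∃ B : Set X, IsBranch B ∧ R ⊆ B ∧ ∀ a ∈ R, ∀ b ∈ B, a ≤ b → b ∈ R

/-- A branchwise-real tree: a tree order in which every branch is
order-isomorphic to a real interval and every two elements have a meet. -/
def IsBranchwiseReal (X : Type) [PartialOrder X] : Prop :=
  IsTreeOrder X ∧
  (∀ B : Set X, IsBranch B → ∃ I : Set ℝ, I.OrdConnected ∧ Nonempty (B ≃o I)) ∧
  (∀ x y : X, ∃ m : X, m ≤ x ∧ m ≤ y ∧ ∀ z : X, z ≤ x → z ≤ y → z ≤ m)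

/-- The set of connected components above `x`: equivalence classes of
`{y | y > x}` under `y ∼ z` iff `∃ w > x, w ≤ y ∧ w ≤ z`. -/
def ComponentsAbove {X : Type} [PartialOrder X] (x : X) : Set (Set X) :=
  {C | ∃ y : X, x < y ∧ C = {z : X | ∃ w : X, x < w ∧ w ≤ y ∧ w ≤ z}}

/-- The degree of a point: the number of connected components above it. -/
noncomputable def degreeOf {X : Type} [PartialOrder X] (x : X) : Cardinal :=
  Cardinal.mk (ComponentsAbove x)

/-- Rigidity: the only order-automorphism is the identity. -/
def Rigid (X : Type) [PartialOrder X] : Prop :=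
  ∀ f : X ≃o X, ∀ x : X, f x = x

/-- A continuous ℝ-grading: a strictly order-preserving map to ℝ whose
restriction to every interval `[x,y]` is an order isomorphism onto `[ℓ x, ℓ y]`. -/
def IsContinuousGrading {X : Type} [PartialOrder X] (ℓ : X → ℝ) : Prop :=
  StrictMono ℓ ∧ ∀ x y : X, x < y →
    ∃ e : Set.Icc x y ≃o Set.Icc (ℓ x) (ℓ y), ∀ z : Set.Icc x y, (e z : ℝ) = ℓ (z : X)

/-- A tree is continuously gradable if it admits a continuous ℝ-grading. -/
def ContinuouslyGradable (X : Type) [PartialOrder X] : Prop :=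
  ∃ ℓ : X → ℝ, IsContinuousGrading ℓ

/-- A rank function: an order-preserving ordinal-valued function whose image on
every branch is downwards-closed, whose fibre at `0` or a limit is an antichain,
and whose fibre at any successor is a disjoint union of pairwise incomparable rays. -/
def IsRankFunction {X : Type} [PartialOrder X] (ρ : X → Ordinal) : Prop :=
  Monotone ρ ∧
  (∀ B : Set X, IsBranch B → ∀ α β : Ordinal, β ≤ α → α ∈ ρ '' B → β ∈ ρ '' B) ∧
  (∀ α : Ordinal, (α = 0 ∨ Order.IsSuccLimit α) → IsAntichain (· ≤ ·) (ρ ⁻¹' {α})) ∧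
  (∀ α β : Ordinal, α = β + 1 →
    ∃ 𝒮 : Set (Set X), (ρ ⁻¹' {α} = ⋃₀ 𝒮) ∧ (∀ R ∈ 𝒮, IsRay R) ∧
      ∀ R ∈ 𝒮, ∀ R' ∈ 𝒮, R ≠ R' → ∀ a ∈ R, ∀ b ∈ R', ¬a ≤ b ∧ ¬b ≤ a)


/-- Auxiliary: a "good graph" of a partial grading: a set of pairs `(x, value)`
forming a partial strictly monotone function, downward closed, bounded by `f`,
and segment-surjective. -/
def GoodGraph {X : Type} [PartialOrder X] (f : X → ℝ) (r : X) (G : Set (X × ℝ)) : Prop :=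
  (r, f r) ∈ G ∧
  (∀ P ∈ G, ∀ Q ∈ G, (P : X × ℝ).1 = (Q : X × ℝ).1 → (P : X × ℝ).2 = (Q : X × ℝ).2) ∧
  (∀ P ∈ G, ∀ y : X, y ≤ (P : X × ℝ).1 → ∃ b, (y, b) ∈ G) ∧
  (∀ P ∈ G, ∀ Q ∈ G, (P : X × ℝ).1 < (Q : X × ℝ).1 → (P : X × ℝ).2 < (Q : X × ℝ).2) ∧
  (∀ P ∈ G, (P : X × ℝ).2 ≤ f (P : X × ℝ).1) ∧
  (∀ P ∈ G, ∀ Q ∈ G, (P : X × ℝ).1 < (Q : X × ℝ).1 → ∀ c : ℝ, (P : X × ℝ).2 ≤ c →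
    c ≤ (Q : X × ℝ).2 → ∃ z : X, (z, c) ∈ G ∧ (P : X × ℝ).1 ≤ z ∧ z ≤ (Q : X × ℝ).1)

lemma goodGraph_singleton {X : Type} [PartialOrder X] (f : X → ℝ) (r : X)
    (hr : ∀ x, r ≤ x) : GoodGraph f r {(r, f r)} := by
  refine ⟨rfl, ?_, ?_, ?_, ?_, ?_⟩
  · rintro P hP Q hQ h
    simp only [Set.mem_singleton_iff] at hP hQ
    rw [hP, hQ]
  · rintro P hP y hy
    simp only [Set.mem_singleton_iff] at hP
    have : y = r := le_antisymm (by rw [hP] at hy; exact hy) (hr y)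
    exact ⟨f r, by rw [this]; exact rfl⟩
  · rintro P hP Q hQ h
    simp only [Set.mem_singleton_iff] at hP hQ
    rw [hP, hQ] at h
    exact absurd h (lt_irrefl _)
  · rintro P hP
    simp only [Set.mem_singleton_iff] at hP
    rw [hP]
  · rintro P hP Q hQ h
    simp only [Set.mem_singleton_iff] at hP hQ
    rw [hP, hQ] at h
    exact absurd h (lt_irrefl _)

lemma goodGraph_sUnion {X : Type} [PartialOrder X] (f : X → ℝ) (r : X)
    (c : Set (Set (X × ℝ))) (hcS : ∀ g ∈ c, GoodGraph f r g)
    (hchain : IsChain (· ⊆ ·) c) (hne : c.Nonempty) : GoodGraph f r (⋃₀ c) := by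
  obtain ⟨g₀, hg₀⟩ := hne
  have pairup : ∀ P ∈ ⋃₀ c, ∀ Q ∈ ⋃₀ c, ∃ g ∈ c, P ∈ g ∧ Q ∈ g := by
    rintro P ⟨g1, hg1, hP⟩ Q ⟨g2, hg2, hQ⟩
    rcases hchain.total hg1 hg2 with h | h
    · exact ⟨g2, hg2, h hP, hQ⟩
    · exact ⟨g1, hg1, hP, h hQ⟩
  refine ⟨Set.mem_sUnion.2 ⟨g₀, hg₀, (hcS g₀ hg₀).1⟩, ?_, ?_, ?_, ?_, ?_⟩
  · intro P hP Q hQ h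
    obtain ⟨g, hg, hPg, hQg⟩ := pairup P hP Q hQ
    exact (hcS g hg).2.1 P hPg Q hQg h
  · rintro P ⟨g, hg, hPg⟩ y hy
    obtain ⟨b, hb⟩ := (hcS g hg).2.2.1 P hPg y hy
    exact ⟨b, Set.mem_sUnion.2 ⟨g, hg, hb⟩⟩
  · intro P hP Q hQ h
    obtain ⟨g, hg, hPg, hQg⟩ := pairup P hP Q hQ
    exact (hcS g hg).2.2.2.1 P hPg Q hQg h
  · rintro P ⟨g, hg, hPg⟩
    exact (hcS g hg).2.2.2.2.1 P hPg
  · intro P hP Q hQ h cc h1 h2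
    obtain ⟨g, hg, hPg, hQg⟩ := pairup P hP Q hQ
    obtain ⟨z, hz, hz1, hz2⟩ := (hcS g hg).2.2.2.2.2 P hPg Q hQg h cc h1 h2
    exact ⟨z, Set.mem_sUnion.2 ⟨g, hg, hz⟩, hz1, hz2⟩

lemma grading_of_surj {X : Type} [PartialOrder X]
    (hc : ∀ x : X, IsChain (· ≤ ·) {y : X | y ≤ x})
    (ℓ : X → ℝ) (hm : StrictMono ℓ)
    (hs : ∀ x y : X, x < y → ∀ c, ℓ x ≤ c → c ≤ ℓ y → ∃ z, x ≤ z ∧ z ≤ y ∧ ℓ z = c) :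
    IsContinuousGrading ℓ := by
  refine ⟨hm, fun x y hxy => ?_⟩
  have hFmem : ∀ z : Set.Icc x y, ℓ z.1 ∈ Set.Icc (ℓ x) (ℓ y) :=
    fun z => ⟨hm.monotone z.2.1, hm.monotone z.2.2⟩
  set F : Set.Icc x y → Set.Icc (ℓ x) (ℓ y) := fun z => ⟨ℓ z.1, hFmem z⟩ with hF
  have hinj : ∀ z w : Set.Icc x y, ℓ z.1 = ℓ w.1 → z = w := by
    intro z w h
    rcases (hc y).total (z.2.2 : z.1 ∈ {u : X | u ≤ y}) (w.2.2 : w.1 ∈ {u : X | u ≤ y}) with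
      hh | hh
    · rcases eq_or_lt_of_le hh with he | hlt
      · exact Subtype.ext he
      · exact absurd h (ne_of_lt (hm hlt))
    · rcases eq_or_lt_of_le hh with he | hlt
      · exact Subtype.ext he.symm
      · exact absurd h.symm (ne_of_lt (hm hlt))
  have hbij : Function.Bijective F := by
    constructor
    · intro z w h
      exact hinj z w (congrArg Subtype.val h)
    · rintro ⟨cc, hc1, hc2⟩
      obtain ⟨z, hz1, hz2, hz3⟩ := hs x y hxy cc hc1 hc2
      exact ⟨⟨z, hz1, hz2⟩, Subtype.ext hz3⟩
  refine ⟨{ Equiv.ofBijective F hbij with map_rel_iff' := ?_ }, fun z => rfl⟩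
  intro a b
  show F a ≤ F b ↔ a ≤ b
  constructor
  · intro h
    have hab : ℓ a.1 ≤ ℓ b.1 := h
    rcases (hc y).total (a.2.2 : a.1 ∈ {z : X | z ≤ y}) (b.2.2 : b.1 ∈ {z : X | z ≤ y}) with
      hh | hh
    · exact hh
    · have h2 : ℓ b.1 ≤ ℓ a.1 := hm.monotone hh
      exact le_of_eq (hinj a b (le_antisymm hab h2))
  · intro h
    exact hm.monotone (Subtype.coe_le_coe.2 h)

lemma goodGraph_extend {X : Type} [PartialOrder X]
    (f : X → ℝ) (hf : StrictMono f) (r : X) (hr : ∀ x, r ≤ x)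
    (hc : ∀ x : X, IsChain (· ≤ ·) {y : X | y ≤ x})
    (hbr : ∀ B : Set X, IsBranch B → ∃ I : Set ℝ, I.OrdConnected ∧ Nonempty (B ≃o I))
    (G : Set (X × ℝ)) (hG : GoodGraph f r G) (x₀ : X) (hx₀ : ∀ b : ℝ, (x₀, b) ∉ G) :
    ∃ G', GoodGraph f r G' ∧ G ⊆ G' ∧ G' ≠ G := by
  classical
  obtain ⟨hroot, hfun, hdown, hmono, hlef, hsurj⟩ := hG
  set S : Set X := {x | ∃ b, (x, b) ∈ G} with hSdef
  have hℓex : ∀ x ∈ S, ∃ b, (x, b) ∈ G := fun x hx => hx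
  choose ℓ0 hℓ0 using hℓex
  obtain ⟨ℓ, hℓ⟩ : ∃ ℓ : X → ℝ, ∀ x, ∀ h : x ∈ S, (x, ℓ x) ∈ G :=
    ⟨fun x => if h : x ∈ S then ℓ0 x h else 0,
     fun x h => by simp only [dif_pos h]; exact hℓ0 x h⟩
  have huniq : ∀ x b, (x, b) ∈ G → x ∈ S ∧ b = ℓ x := by
    intro x b hb
    have hxS : x ∈ S := ⟨b, hb⟩
    exact ⟨hxS, hfun (x, b) hb (x, ℓ x) (hℓ x hxS) rfl⟩
  have hSdown : ∀ x, x ∈ S → ∀ y, y ≤ x → y ∈ S := by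
    intro x hx y hy
    obtain ⟨b, hb⟩ := hdown (x, ℓ x) (hℓ x hx) y hy
    exact ⟨b, hb⟩
  have hmono' : ∀ x, x ∈ S → ∀ y, y ∈ S → x < y → ℓ x < ℓ y :=
    fun x hx y hy h => hmono (x, ℓ x) (hℓ x hx) (y, ℓ y) (hℓ y hy) h
  have hlef' : ∀ x, x ∈ S → ℓ x ≤ f x := fun x hx => hlef (x, ℓ x) (hℓ x hx)
  have hsurj' : ∀ x, x ∈ S → ∀ y, y ∈ S → x < y → ∀ cc : ℝ, ℓ x ≤ cc → cc ≤ ℓ y →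
      ∃ z, (z, cc) ∈ G ∧ x ≤ z ∧ z ≤ y :=
    fun x hx y hy h cc h1 h2 => hsurj (x, ℓ x) (hℓ x hx) (y, ℓ y) (hℓ y hy) h cc h1 h2
  -- a maximal chain (branch) through the predecessors of x₀
  obtain ⟨B, hBmax, hBsub⟩ := (hc x₀).exists_maxChain
  have hBchain : IsChain (· ≤ ·) B := hBmax.1
  obtain ⟨I, hIoc, ⟨φ⟩⟩ := hbr B hBmax
  obtain ⟨p, hpdef⟩ : ∃ p : X → ℝ, ∀ x, ∀ h : x ∈ B, p x = ((φ ⟨x, h⟩) : ℝ) :=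
    ⟨fun x => if h : x ∈ B then ((φ ⟨x, h⟩) : ℝ) else 0,
     fun x h => by simp only [dif_pos h]⟩
  have hpmono : ∀ a, a ∈ B → ∀ b, b ∈ B → a ≤ b → p a ≤ p b := by
    intro a ha b hb hab
    rw [hpdef a ha, hpdef b hb]
    exact Subtype.coe_le_coe.2 (φ.le_iff_le.2 (Subtype.mk_le_mk.2 hab))
  have hprefl : ∀ a, a ∈ B → ∀ b, b ∈ B → p a ≤ p b → a ≤ b := by
    intro a ha b hb hab
    rw [hpdef a ha, hpdef b hb] at hab
    exact Subtype.mk_le_mk.1 (φ.le_iff_le.1 (Subtype.coe_le_coe.1 hab))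
  have hpinj : ∀ a, a ∈ B → ∀ b, b ∈ B → p a = p b → a = b := by
    intro a ha b hb hab
    exact le_antisymm (hprefl a ha b hb (le_of_eq hab)) (hprefl b hb a ha (le_of_eq hab.symm))
  have hplt : ∀ a, a ∈ B → ∀ b, b ∈ B → a < b → p a < p b := by
    intro a ha b hb hab
    rcases lt_or_eq_of_le (hpmono a ha b hb (le_of_lt hab)) with h | h
    · exact h
    · exact absurd (hpinj a ha b hb h) (ne_of_lt hab)
  have hBdown : ∀ y, y ∈ B → ∀ z, z ≤ y → z ∈ B := by
    intro y hy z hz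
    have hins : IsChain (· ≤ ·) (insert z B) := by
      apply hBchain.insert
      intro b hb hne
      rcases hBchain.total hb hy with h | h
      · exact ((hc y).total (h : b ∈ {w : X | w ≤ y}) (hz : z ∈ {w : X | w ≤ y})).symm
      · exact Or.inl (le_trans hz h)
    have := hBmax.2 hins (Set.subset_insert z B)
    rw [this]; exact Set.mem_insert z B
  have hseg : ∀ a, ∀ _ : a ∈ B, ∀ b, ∀ _ : b ∈ B, ∀ t : ℝ, p a ≤ t → t ≤ p b →
      ∃ z, z ∈ B ∧ p z = t ∧ a ≤ z ∧ z ≤ b := by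
    intro a ha b hb t h1 h2
    rw [hpdef a ha] at h1
    rw [hpdef b hb] at h2
    have htI : t ∈ I := hIoc.out (φ ⟨a, ha⟩).2 (φ ⟨b, hb⟩).2 ⟨h1, h2⟩
    refine ⟨(φ.symm ⟨t, htI⟩).1, (φ.symm ⟨t, htI⟩).2, ?_, ?_, ?_⟩
    · rw [hpdef _ (φ.symm ⟨t, htI⟩).2]
      have he : (⟨(φ.symm ⟨t, htI⟩).1, (φ.symm ⟨t, htI⟩).2⟩ : B) = φ.symm ⟨t, htI⟩ := rfl
      rw [he, φ.apply_symm_apply]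
    · have h3 : φ ⟨a, ha⟩ ≤ (⟨t, htI⟩ : I) := Subtype.coe_le_coe.1 h1
      have h4 : (⟨a, ha⟩ : B) ≤ φ.symm ⟨t, htI⟩ := by
        rw [← φ.symm_apply_apply ⟨a, ha⟩]
        exact φ.symm.monotone h3
      exact Subtype.coe_le_coe.2 h4
    · have h3 : (⟨t, htI⟩ : I) ≤ φ ⟨b, hb⟩ := Subtype.coe_le_coe.1 h2
      have h4 : φ.symm ⟨t, htI⟩ ≤ (⟨b, hb⟩ : B) := by
        rw [← φ.symm_apply_apply ⟨b, hb⟩]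
        exact φ.symm.monotone h3
      exact Subtype.coe_le_coe.2 h4
  -- the branch splits into the old part C and the new part R
  set C : Set X := B ∩ S with hCdef
  set R : Set X := B \ S with hRdef
  have hx₀B : x₀ ∈ B := hBsub (show x₀ ∈ {y : X | y ≤ x₀} from le_refl x₀)
  have hx₀S : x₀ ∉ S := fun h => by obtain ⟨b, hb⟩ := h; exact hx₀ b hb
  have hx₀R : x₀ ∈ R := ⟨hx₀B, hx₀S⟩
  have hrB : r ∈ B := hBsub (show r ∈ {y : X | y ≤ x₀} from hr x₀)
  have hrS : r ∈ S := ⟨f r, hroot⟩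
  have hrC : r ∈ C := ⟨hrB, hrS⟩
  have hCltR : ∀ cx, cx ∈ C → ∀ ρ, ρ ∈ R → cx < ρ := by
    intro cx hcx ρ hρ
    have hne : cx ≠ ρ := fun h => hρ.2 (h ▸ hcx.2)
    rcases hBchain hcx.1 hρ.1 hne with h | h
    · exact lt_of_le_of_ne h hne
    · exact absurd (hSdown cx hcx.2 ρ h) hρ.2
  have hRup : ∀ ρ, ρ ∈ R → ∀ z, z ∈ B → ρ ≤ z → z ∈ R := by
    intro ρ hρ z hz hle
    exact ⟨hz, fun hzS => hρ.2 (hSdown z hzS ρ hle)⟩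
  -- the supremum of the old values along C
  set s : ℝ := sSup (ℓ '' C) with hsdef
  have himgne : (ℓ '' C).Nonempty := ⟨ℓ r, r, hrC, rfl⟩
  have hsleR : ∀ ρ, ρ ∈ R → s ≤ f ρ := by
    intro ρ hρ
    apply csSup_le himgne
    rintro b ⟨cx, hcx, rfl⟩
    have h1 := hlef' cx hcx.2
    have h2 := hf (hCltR cx hcx ρ hρ)
    linarith
  have hbddℓC : BddAbove (ℓ '' C) := by
    refine ⟨f x₀, ?_⟩
    rintro b ⟨cx, hcx, rfl⟩
    have h1 := hlef' cx hcx.2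
    have h2 := hf (hCltR cx hcx x₀ hx₀R)
    linarith
  have hℓles : ∀ cx, cx ∈ C → ℓ cx ≤ s := fun cx hcx => le_csSup hbddℓC ⟨cx, hcx, rfl⟩
  set aS : ℝ := sInf (p '' R) with haSdef
  have hpRne : (p '' R).Nonempty := ⟨p x₀, x₀, hx₀R, rfl⟩
  have hpRbdd : BddBelow (p '' R) := by
    refine ⟨p r, ?_⟩
    rintro t ⟨ρ, hρ, rfl⟩
    exact hpmono r hrB ρ hρ.1 (hr ρ)
  have haslep : ∀ ρ, ρ ∈ R → aS ≤ p ρ := fun ρ hρ => csInf_le hpRbdd ⟨ρ, hρ, rfl⟩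
  -- dichotomy: C has a maximum or R has a minimum
  have hMaxMin : (∃ c₀, c₀ ∈ C ∧ ∀ cx, cx ∈ C → cx ≤ c₀) ∨
      (∃ m, m ∈ R ∧ ∀ ρ, ρ ∈ R → m ≤ ρ) := by
    have hpCne : (p '' C).Nonempty := ⟨p r, r, hrC, rfl⟩
    have hpCbdd : BddAbove (p '' C) := by
      refine ⟨p x₀, ?_⟩
      rintro t ⟨cx, hcx, rfl⟩
      exact hpmono cx hcx.1 x₀ hx₀B (le_of_lt (hCltR cx hcx x₀ hx₀R))
    have hu1 : p r ≤ sSup (p '' C) := le_csSup hpCbdd ⟨r, hrC, rfl⟩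
    have hu2 : sSup (p '' C) ≤ p x₀ := csSup_le hpCne (by
      rintro t ⟨cx, hcx, rfl⟩
      exact hpmono cx hcx.1 x₀ hx₀B (le_of_lt (hCltR cx hcx x₀ hx₀R)))
    obtain ⟨z, hzB, hpz, hrz, hzx₀⟩ := hseg r hrB x₀ hx₀B (sSup (p '' C)) hu1 hu2
    by_cases hzS : z ∈ S
    · left
      refine ⟨z, ⟨hzB, hzS⟩, ?_⟩
      intro cx hcx
      have hle : p cx ≤ sSup (p '' C) := le_csSup hpCbdd ⟨cx, hcx, rfl⟩
      rw [← hpz] at hle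
      exact hprefl cx hcx.1 z hzB hle
    · right
      refine ⟨z, ⟨hzB, hzS⟩, ?_⟩
      intro ρ hρ
      have hle : sSup (p '' C) ≤ p ρ := csSup_le hpCne (by
        rintro t ⟨cx, hcx, rfl⟩
        exact hpmono cx hcx.1 ρ hρ.1 (le_of_lt (hCltR cx hcx ρ hρ)))
      rw [← hpz] at hle
      exact hprefl z hzB ρ hρ.1 hle
  have hnotboth : (∃ c₀, c₀ ∈ C ∧ ∀ cx, cx ∈ C → cx ≤ c₀) →
      (∃ m, m ∈ R ∧ ∀ ρ, ρ ∈ R → m ≤ ρ) → False := by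
    rintro ⟨c₀, hc₀C, hc₀max⟩ ⟨m, hmR, hmmin⟩
    have h1 : c₀ < m := hCltR c₀ hc₀C m hmR
    have h2 : p c₀ < p m := hplt c₀ hc₀C.1 m hmR.1 h1
    obtain ⟨z, hzB, hpz, hc₀z, hzm⟩ :=
      hseg c₀ hc₀C.1 m hmR.1 ((p c₀ + p m) / 2) (by linarith) (by linarith)
    by_cases hzS : z ∈ S
    · have := hpmono z hzB c₀ hc₀C.1 (hc₀max z ⟨hzB, hzS⟩)
      rw [hpz] at this; linarith
    · have := hpmono m hmR.1 z hzB (hmmin z ⟨hzB, hzS⟩)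
      rw [hpz] at this; linarith
  -- the new length function on R
  obtain ⟨NN, hNNeq⟩ : ∃ NN : X → ℝ,
      ∀ x, NN x = sInf {v : ℝ | ∃ ρ, ρ ∈ R ∧ ρ ≤ x ∧ v = (f ρ - s) + (p x - p ρ)} :=
    ⟨_, fun _ => rfl⟩
  obtain ⟨MM, hMMeq⟩ : ∃ MM : X → ℝ, ∀ x, MM x = min (NN x) (p x - aS) := ⟨_, fun _ => rfl⟩
  have hDne : ∀ x, x ∈ R →
      Set.Nonempty {v : ℝ | ∃ ρ, ρ ∈ R ∧ ρ ≤ x ∧ v = (f ρ - s) + (p x - p ρ)} :=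
    fun x hx => ⟨f x - s, x, hx, le_refl x, by ring⟩
  have hDlb : ∀ x, x ∈ R →
      ∀ v ∈ {v : ℝ | ∃ ρ, ρ ∈ R ∧ ρ ≤ x ∧ v = (f ρ - s) + (p x - p ρ)}, (0:ℝ) ≤ v := by
    rintro x hx v ⟨ρ, hρ, hρx, rfl⟩
    have h1 := hsleR ρ hρ
    have h2 := hpmono ρ hρ.1 x hx.1 hρx
    linarith
  have hDbdd : ∀ x, x ∈ R →
      BddBelow {v : ℝ | ∃ ρ, ρ ∈ R ∧ ρ ≤ x ∧ v = (f ρ - s) + (p x - p ρ)} :=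
    fun x hx => ⟨0, fun v hv => hDlb x hx v hv⟩
  have hNN0 : ∀ x, x ∈ R → 0 ≤ NN x := by
    intro x hx
    rw [hNNeq]
    exact le_csInf (hDne x hx) (hDlb x hx)
  have hNNlef : ∀ x, x ∈ R → NN x ≤ f x - s := by
    intro x hx
    rw [hNNeq]
    exact csInf_le (hDbdd x hx) ⟨x, hx, le_refl x, by ring⟩
  have hMM0 : ∀ x, x ∈ R → 0 ≤ MM x := by
    intro x hx
    have := haslep x hx
    rw [hMMeq]
    exact le_min (hNN0 x hx) (by linarith)
  have hMMlef : ∀ x, x ∈ R → MM x ≤ f x - s := by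
    intro x hx
    rw [hMMeq]
    exact le_trans (min_le_left _ _) (hNNlef x hx)
  have hNNmono : ∀ x, x ∈ R → ∀ y, y ∈ R → x ≤ y → NN x ≤ NN y := by
    intro x hx y hy hxy
    rw [hNNeq y]
    apply le_csInf (hDne y hy)
    rintro v ⟨ρ, hρ, hρy, rfl⟩
    rcases (hc y).total (hρy : ρ ∈ {w : X | w ≤ y}) (hxy : x ∈ {w : X | w ≤ y}) with h | h
    · have h1 : NN x ≤ (f ρ - s) + (p x - p ρ) := by
        rw [hNNeq]; exact csInf_le (hDbdd x hx) ⟨ρ, hρ, h, rfl⟩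
      have h2 := hpmono x hx.1 y hy.1 hxy
      linarith
    · have h1 := hNNlef x hx
      have h2 := hf.monotone h
      have h3 := hpmono ρ hρ.1 y hy.1 hρy
      linarith
  have hNNlip : ∀ x, x ∈ R → ∀ y, y ∈ R → x ≤ y → NN y ≤ NN x + (p y - p x) := by
    intro x hx y hy hxy
    have key : ∀ v ∈ {v : ℝ | ∃ ρ, ρ ∈ R ∧ ρ ≤ x ∧ v = (f ρ - s) + (p x - p ρ)},
        NN y - (p y - p x) ≤ v := by
      rintro v ⟨ρ, hρ, hρx, rfl⟩
      have h1 : NN y ≤ (f ρ - s) + (p y - p ρ) := by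
        rw [hNNeq]; exact csInf_le (hDbdd y hy) ⟨ρ, hρ, le_trans hρx hxy, rfl⟩
      linarith
    have h2 := le_csInf (hDne x hx) key
    rw [← hNNeq x] at h2
    linarith
  have hNNstrict : ∀ x, x ∈ R → ∀ y, y ∈ R → x < y → NN x < NN y := by
    intro x hx y hy hxy
    have hpxy : p x < p y := hplt x hx.1 y hy.1 hxy
    obtain ⟨m, hmB, hpm, hxm, hmy⟩ :=
      hseg x hx.1 y hy.1 ((p x + p y) / 2) (by linarith) (by linarith)
    have hmR : m ∈ R := hRup x hx m hmB hxm
    have hxmlt : x < m := lt_of_le_of_ne hxm (fun h => by rw [← h] at hpm; linarith)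
    have key : ∀ v ∈ {v : ℝ | ∃ ρ, ρ ∈ R ∧ ρ ≤ y ∧ v = (f ρ - s) + (p y - p ρ)},
        min (NN x + (p y - p m)) (f m - s) ≤ v := by
      rintro v ⟨ρ, hρ, hρy, rfl⟩
      rcases (hc y).total (hρy : ρ ∈ {w : X | w ≤ y})
          ((le_of_lt hxy) : x ∈ {w : X | w ≤ y}) with h | h
      · have h1 : NN x ≤ (f ρ - s) + (p x - p ρ) := by
          rw [hNNeq]; exact csInf_le (hDbdd x hx) ⟨ρ, hρ, h, rfl⟩
        refine le_trans (min_le_left _ _) ?_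
        have h2 : p x ≤ p m := by rw [hpm]; linarith
        linarith
      · rcases (hc y).total (hρy : ρ ∈ {w : X | w ≤ y}) (hmy : m ∈ {w : X | w ≤ y}) with h2 | h2
        · have h3 := hf.monotone h
          have h4 := hpmono ρ hρ.1 m hmB h2
          have h5 := hNNlef x hx
          exact le_trans (min_le_left _ _) (by linarith)
        · have h3 := hf.monotone h2
          have h4 := hpmono ρ hρ.1 y hy.1 hρy
          exact le_trans (min_le_right _ _) (by linarith)
    have hge : min (NN x + (p y - p m)) (f m - s) ≤ NN y := by
      rw [hNNeq y]
      exact le_csInf (hDne y hy) key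
    have h5 : NN x ≤ f x - s := hNNlef x hx
    have h6 : f x < f m := hf hxmlt
    have h7 : p m < p y := by rw [hpm]; linarith
    calc NN x < min (NN x + (p y - p m)) (f m - s) := lt_min (by linarith) (by linarith)
    _ ≤ NN y := hge
  have hMMstrict : ∀ x, x ∈ R → ∀ y, y ∈ R → x < y → MM x < MM y := by
    intro x hx y hy hxy
    have h1 := hNNstrict x hx y hy hxy
    have h2 := hplt x hx.1 y hy.1 hxy
    rw [hMMeq x, hMMeq y]
    exact lt_min (lt_of_le_of_lt (min_le_left _ _) h1)
      (lt_of_le_of_lt (min_le_right _ _) (by linarith))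
  have hMMmono : ∀ x, x ∈ R → ∀ y, y ∈ R → x ≤ y → MM x ≤ MM y := by
    intro x hx y hy hxy
    rcases eq_or_lt_of_le hxy with h | h
    · rw [h]
    · exact le_of_lt (hMMstrict x hx y hy h)
  have hMMlip : ∀ x, x ∈ R → ∀ y, y ∈ R → x ≤ y → MM y ≤ MM x + (p y - p x) := by
    intro x hx y hy hxy
    have h1 : MM y ≤ NN y := by rw [hMMeq]; exact min_le_left _ _
    have h2 : MM y ≤ p y - aS := by rw [hMMeq]; exact min_le_right _ _
    have h3 := hNNlip x hx y hy hxy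
    rw [hMMeq x]
    rcases min_cases (NN x) (p x - aS) with ⟨he, _⟩ | ⟨he, _⟩ <;> rw [he]
    · linarith
    · linarith
  -- intermediate value property of MM along segments of R
  have hMMIVT : ∀ x, x ∈ R → ∀ y, y ∈ R → x ≤ y → ∀ cc : ℝ, MM x ≤ cc → cc ≤ MM y →
      ∃ z, z ∈ R ∧ x ≤ z ∧ z ≤ y ∧ MM z = cc := by
    intro x hx y hy hxy cc h1 h2
    have hpxy : p x ≤ p y := hpmono x hx.1 y hy.1 hxy
    obtain ⟨q, hq⟩ : ∃ q : ℝ → X, ∀ t, p x ≤ t → t ≤ p y →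
        q t ∈ B ∧ p (q t) = t ∧ x ≤ q t ∧ q t ≤ y := by
      refine ⟨fun t => if h : p x ≤ t ∧ t ≤ p y then
        (hseg x hx.1 y hy.1 t h.1 h.2).choose else x, ?_⟩
      intro t ht1 ht2
      simp only [dif_pos (And.intro ht1 ht2)]
      obtain ⟨u1, u2, u3, u4⟩ := (hseg x hx.1 y hy.1 t ht1 ht2).choose_spec
      exact ⟨u1, u2, u3, u4⟩
    have hq1 : q (p x) = x := by
      obtain ⟨hB1, hp1, _, _⟩ := hq (p x) le_rfl hpxy
      exact hpinj _ hB1 x hx.1 hp1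
    have hq2 : q (p y) = y := by
      obtain ⟨hB2, hp2, _, _⟩ := hq (p y) hpxy le_rfl
      exact hpinj _ hB2 y hy.1 hp2
    have hgcont : ContinuousOn (fun t => MM (q t)) (Set.Icc (p x) (p y)) := by
      rw [Metric.continuousOn_iff]
      intro b hb ε hε
      refine ⟨ε, hε, ?_⟩
      intro a ha hab
      have key : ∀ t1 t2 : ℝ, t1 ∈ Set.Icc (p x) (p y) → t2 ∈ Set.Icc (p x) (p y) → t1 ≤ t2 →
          0 ≤ MM (q t2) - MM (q t1) ∧ MM (q t2) - MM (q t1) ≤ t2 - t1 := by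
        intro t1 t2 ht1 ht2 h12
        obtain ⟨hB1, hp1, hx1, hy1⟩ := hq t1 ht1.1 ht1.2
        obtain ⟨hB2, hp2, hx2, hy2⟩ := hq t2 ht2.1 ht2.2
        have hR1 : q t1 ∈ R := hRup x hx (q t1) hB1 hx1
        have hR2 : q t2 ∈ R := hRup x hx (q t2) hB2 hx2
        have h12' : q t1 ≤ q t2 := hprefl _ hB1 _ hB2 (by rw [hp1, hp2]; exact h12)
        constructor
        · have := hMMmono _ hR1 _ hR2 h12'; linarith
        · have := hMMlip _ hR1 _ hR2 h12'; rw [hp1, hp2] at this; linarith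
      rw [Real.dist_eq] at hab
      rw [Real.dist_eq]
      rcases le_total a b with hab' | hab'
      · obtain ⟨k1, k2⟩ := key a b ha hb hab'
        have e1 : |a - b| = b - a := by rw [abs_sub_comm]; exact abs_of_nonneg (by linarith)
        rw [e1] at hab
        have e2 : |MM (q a) - MM (q b)| = MM (q b) - MM (q a) := by
          rw [abs_sub_comm]; exact abs_of_nonneg k1
        rw [e2]; linarith
      · obtain ⟨k1, k2⟩ := key b a hb ha hab'
        have e1 : |a - b| = a - b := abs_of_nonneg (by linarith)
        rw [e1] at hab
        have e2 : |MM (q a) - MM (q b)| = MM (q a) - MM (q b) := abs_of_nonneg (by linarith)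
        rw [e2]; linarith
    have hsub := intermediate_value_Icc hpxy hgcont
    have hmem : cc ∈ Set.Icc ((fun t => MM (q t)) (p x)) ((fun t => MM (q t)) (p y)) := by
      simp only [hq1, hq2]
      exact ⟨h1, h2⟩
    obtain ⟨t, htmem, htval⟩ := hsub hmem
    obtain ⟨hBt, hpt, hxt, hyt⟩ := hq t htmem.1 htmem.2
    exact ⟨q t, hRup x hx (q t) hBt hxt, hxt, hyt, htval⟩
  have hbelow : ¬(∃ m, m ∈ R ∧ ∀ ρ, ρ ∈ R → m ≤ ρ) → ∀ y, y ∈ R → ∃ ρ, ρ ∈ R ∧ ρ < y := by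
    intro hnm y hy
    by_contra hcon
    push_neg at hcon
    apply hnm
    refine ⟨y, hy, ?_⟩
    intro ρ hρ
    rcases eq_or_ne ρ y with h | h
    · rw [h]
    · rcases hBchain hy.1 hρ.1 (Ne.symm h) with hh | hh
      · exact hh
      · exact absurd (lt_of_le_of_ne hh h) (hcon ρ hρ)
  -- the two key facts across the cut
  have main1 : (∀ x, x ∈ C → ∀ y, y ∈ R → ℓ x < s + MM y) ∧
      (∀ x, x ∈ C → ∀ y, y ∈ R → ∀ cc : ℝ, ℓ x ≤ cc → cc ≤ s + MM y →
        ∃ z, ((z, cc) ∈ G ∨ (z ∈ R ∧ cc = s + MM z)) ∧ x ≤ z ∧ z ≤ y) := by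
    rcases hMaxMin with ⟨c₀, hc₀C, hc₀max⟩ | ⟨m, hmR, hmmin⟩
    · -- C has a maximum c₀
      have hnomin : ¬(∃ m, m ∈ R ∧ ∀ ρ, ρ ∈ R → m ≤ ρ) :=
        fun h => hnotboth ⟨c₀, hc₀C, hc₀max⟩ h
      have hbel := hbelow hnomin
      have hMMpos : ∀ y, y ∈ R → 0 < MM y := by
        intro y hy
        obtain ⟨ρ, hρ, hρy⟩ := hbel y hy
        exact lt_of_le_of_lt (hMM0 ρ hρ) (hMMstrict ρ hρ y hy hρy)
      have hseq : s = ℓ c₀ := by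
        rw [hsdef]
        apply le_antisymm
        · apply csSup_le himgne
          rintro b ⟨cx, hcx, rfl⟩
          rcases eq_or_lt_of_le (hc₀max cx hcx) with h | h
          · rw [h]
          · exact le_of_lt (hmono' cx hcx.2 c₀ hc₀C.2 h)
        · exact le_csSup hbddℓC ⟨c₀, hc₀C, rfl⟩
      constructor
      · intro x hx y hy
        have h1 := hℓles x hx
        have h2 := hMMpos y hy
        linarith
      · intro x hx y hy cc h1 h2
        rcases le_or_gt cc s with hcs | hcs
        · rcases eq_or_lt_of_le (hc₀max x hx) with hxc | hxc
          · have he : cc = ℓ x := le_antisymm (by rw [hxc, ← hseq]; exact hcs) h1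
            refine ⟨x, Or.inl ?_, le_refl x, le_of_lt (hCltR x hx y hy)⟩
            rw [he]; exact hℓ x hx.2
          · obtain ⟨z, hz, hxz, hzc₀⟩ := hsurj' x hx.2 c₀ hc₀C.2 hxc cc h1
              (by rw [← hseq]; exact hcs)
            exact ⟨z, Or.inl hz, hxz, le_trans hzc₀ (le_of_lt (hCltR c₀ hc₀C y hy))⟩
        · have hay : aS < p y := by
            obtain ⟨ρ, hρ, hρy⟩ := hbel y hy
            exact lt_of_le_of_lt (haslep ρ hρ) (hplt ρ hρ.1 y hy.1 hρy)
          obtain ⟨t, ht, htlt⟩ := exists_lt_of_csInf_lt hpRne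
            (show sInf (p '' R) < aS + min (cc - s) (p y - aS) by
              rw [← haSdef]
              have := lt_min (show (0:ℝ) < cc - s by linarith) (show (0:ℝ) < p y - aS by linarith)
              linarith)
          obtain ⟨ρ, hρ, rfl⟩ := ht
          have hρy : ρ ≤ y := by
            rcases eq_or_ne ρ y with h | h
            · rw [h]
            · rcases hBchain hρ.1 hy.1 h with hh | hh
              · exact hh
              · exfalso
                have := hpmono y hy.1 ρ hρ.1 hh
                have hmin2 := min_le_right (cc - s) (p y - aS)
                linarith
          have hMρ : MM ρ < cc - s := by
            have hm1 : MM ρ ≤ p ρ - aS := by rw [hMMeq]; exact min_le_right _ _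
            have hmin1 := min_le_left (cc - s) (p y - aS)
            linarith
          obtain ⟨z, hzR, hρz, hzy, hzM⟩ := hMMIVT ρ hρ y hy hρy (cc - s)
            (le_of_lt hMρ) (by linarith)
          exact ⟨z, Or.inr ⟨hzR, by linarith⟩, le_of_lt (hCltR x hx z hzR), hzy⟩
    · -- R has a minimum m
      have hnomax : ∀ cx, cx ∈ C → ∃ c', c' ∈ C ∧ cx < c' := by
        intro cx hcx
        by_contra hcon
        push_neg at hcon
        apply hnotboth _ ⟨m, hmR, hmmin⟩
        refine ⟨cx, hcx, ?_⟩
        intro c' hc'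
        rcases eq_or_ne c' cx with h | h
        · rw [h]
        · rcases hBchain hc'.1 hcx.1 h with hh | hh
          · exact hh
          · exact absurd (lt_of_le_of_ne hh (Ne.symm h)) (hcon c' hc')
      have hℓlts : ∀ x, x ∈ C → ℓ x < s := by
        intro x hx
        obtain ⟨c', hc', hlt⟩ := hnomax x hx
        exact lt_of_lt_of_le (hmono' x hx.2 c' hc'.2 hlt) (hℓles c' hc')
      have hMMm0 : MM m = 0 := by
        have ham : aS = p m := by
          apply le_antisymm (haslep m hmR)
          rw [haSdef]
          apply le_csInf hpRne
          rintro t ⟨ρ, hρ, rfl⟩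
          exact hpmono m hmR.1 ρ hρ.1 (hmmin ρ hρ)
        have hz : p m - aS = 0 := by rw [ham]; ring
        rw [hMMeq, hz]
        exact min_eq_right (hNN0 m hmR)
      constructor
      · intro x hx y hy
        have h1 := hℓlts x hx
        have h2 := hMM0 y hy
        linarith
      · intro x hx y hy cc h1 h2
        rcases lt_trichotomy cc s with hcs | hcs | hcs
        · obtain ⟨b, hb, hcb⟩ := exists_lt_of_lt_csSup himgne
            (show cc < sSup (ℓ '' C) by rw [← hsdef]; exact hcs)
          obtain ⟨c', hc', rfl⟩ := hb
          have hxc' : x < c' := by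
            rcases eq_or_ne x c' with h | h
            · exfalso; rw [h] at h1; linarith
            · rcases hBchain hx.1 hc'.1 h with hh | hh
              · exact lt_of_le_of_ne hh h
              · exfalso
                have hlt : c' < x := lt_of_le_of_ne hh (Ne.symm h)
                have := hmono' c' hc'.2 x hx.2 hlt
                linarith
          obtain ⟨z, hz, hxz, hzc'⟩ := hsurj' x hx.2 c' hc'.2 hxc' cc h1 (le_of_lt hcb)
          exact ⟨z, Or.inl hz, hxz, le_trans hzc' (le_of_lt (hCltR c' hc' y hy))⟩
        · refine ⟨m, Or.inr ⟨hmR, by rw [hMMm0]; linarith⟩,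
            le_of_lt (hCltR x hx m hmR), hmmin y hy⟩
        · obtain ⟨z, hzR, hmz, hzy, hzM⟩ := hMMIVT m hmR y hy (hmmin y hy) (cc - s)
            (by rw [hMMm0]; linarith) (by linarith)
          exact ⟨z, Or.inr ⟨hzR, by linarith⟩, le_of_lt (hCltR x hx z hzR), hzy⟩
  -- the extended graph
  set NP : Set (X × ℝ) := {q : X × ℝ | ∃ x, x ∈ R ∧ q = (x, s + MM x)} with hNPdef
  have hGS : ∀ P, P ∈ G → (P : X × ℝ).1 ∈ S := fun P hP => ⟨P.2, hP⟩
  refine ⟨G ∪ NP, ⟨Or.inl hroot, ?_, ?_, ?_, ?_, ?_⟩, Set.subset_union_left, ?_⟩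
  · -- functional
    intro P hP Q hQ h
    rcases hP with hP | hP <;> rcases hQ with hQ | hQ
    · exact hfun P hP Q hQ h
    · obtain ⟨y, hy, rfl⟩ := hQ
      exact absurd (show y ∈ S by have := hGS P hP; rwa [h] at this) hy.2
    · obtain ⟨x, hx, rfl⟩ := hP
      exact absurd (show (x, s + MM x).1 ∈ S by rw [h]; exact hGS Q hQ) hx.2
    · obtain ⟨x, hx, rfl⟩ := hP
      obtain ⟨y, hy, rfl⟩ := hQ
      have he : x = y := h
      simp only [he]
  · -- downward closed
    rintro P hP y hy
    rcases hP with hP | hP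
    · obtain ⟨b, hb⟩ := hdown P hP y hy
      exact ⟨b, Or.inl hb⟩
    · obtain ⟨x, hx, rfl⟩ := hP
      have hy' : y ≤ x := hy
      have hyB : y ∈ B := hBdown x hx.1 y hy'
      by_cases hyS : y ∈ S
      · exact ⟨ℓ y, Or.inl (hℓ y hyS)⟩
      · exact ⟨s + MM y, Or.inr ⟨y, ⟨hyB, hyS⟩, rfl⟩⟩
  · -- strictly monotone
    intro P hP Q hQ hlt
    rcases hP with hP | hP <;> rcases hQ with hQ | hQ
    · exact hmono P hP Q hQ hlt
    · obtain ⟨y, hy, rfl⟩ := hQ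
      have hPB : (P : X × ℝ).1 ∈ B := hBdown y hy.1 _ (le_of_lt hlt)
      have hPC : (P : X × ℝ).1 ∈ C := ⟨hPB, hGS P hP⟩
      have hPval : (P : X × ℝ).2 = ℓ (P : X × ℝ).1 := (huniq _ _ hP).2
      rw [hPval]
      exact main1.1 _ hPC y hy
    · obtain ⟨x, hx, rfl⟩ := hP
      exact absurd (hSdown _ (hGS Q hQ) x (le_of_lt hlt)) hx.2
    · obtain ⟨x, hx, rfl⟩ := hP
      obtain ⟨y, hy, rfl⟩ := hQ
      have hxy : x < y := hlt
      have := hMMstrict x hx y hy hxy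
      show s + MM x < s + MM y
      linarith
  · -- bounded by f
    rintro P (hP | hP)
    · exact hlef P hP
    · obtain ⟨x, hx, rfl⟩ := hP
      have := hMMlef x hx
      show s + MM x ≤ f x
      linarith
  · -- segment surjectivity
    intro P hP Q hQ hlt cc h1 h2
    rcases hP with hP | hP <;> rcases hQ with hQ | hQ
    · obtain ⟨z, hz, hz1, hz2⟩ := hsurj P hP Q hQ hlt cc h1 h2
      exact ⟨z, Or.inl hz, hz1, hz2⟩
    · obtain ⟨y, hy, rfl⟩ := hQ
      have hPB : (P : X × ℝ).1 ∈ B := hBdown y hy.1 _ (le_of_lt hlt)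
      have hPC : (P : X × ℝ).1 ∈ C := ⟨hPB, hGS P hP⟩
      have hPval : (P : X × ℝ).2 = ℓ (P : X × ℝ).1 := (huniq _ _ hP).2
      rw [hPval] at h1
      have h2' : cc ≤ s + MM y := h2
      obtain ⟨z, hz, hz1, hz2⟩ := main1.2 _ hPC y hy cc h1 h2'
      rcases hz with hz | ⟨hzR, hzeq⟩
      · exact ⟨z, Or.inl hz, hz1, hz2⟩
      · exact ⟨z, Or.inr ⟨z, hzR, by rw [hzeq]⟩, hz1, hz2⟩
    · obtain ⟨x, hx, rfl⟩ := hP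
      exact absurd (hSdown _ (hGS Q hQ) x (le_of_lt hlt)) hx.2
    · obtain ⟨x, hx, rfl⟩ := hP
      obtain ⟨y, hy, rfl⟩ := hQ
      have hxy : x < y := hlt
      have h1' : s + MM x ≤ cc := h1
      have h2' : cc ≤ s + MM y := h2
      obtain ⟨z, hzR, hz1, hz2, hz3⟩ := hMMIVT x hx y hy (le_of_lt hxy) (cc - s)
        (by linarith) (by linarith)
      exact ⟨z, Or.inr ⟨z, hzR, by rw [show cc = s + MM z by linarith]⟩, hz1, hz2⟩
  · -- the new graph is strictly bigger
    intro h
    have hmem : (x₀, s + MM x₀) ∈ G ∪ NP := Set.mem_union_right _ ⟨x₀, hx₀R, rfl⟩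
    rw [h] at hmem
    exact hx₀ _ hmem

lemma exists_total_goodGraph {X : Type} [PartialOrder X]
    (f : X → ℝ) (hf : StrictMono f) (r : X) (hr : ∀ x, r ≤ x)
    (hc : ∀ x : X, IsChain (· ≤ ·) {y : X | y ≤ x})
    (hbr : ∀ B : Set X, IsBranch B → ∃ I : Set ℝ, I.OrdConnected ∧ Nonempty (B ≃o I)) :
    ∃ G : Set (X × ℝ), GoodGraph f r G ∧ ∀ x : X, ∃ b, (x, b) ∈ G := by
  obtain ⟨M, hsub, hMmax⟩ := zorn_subset_nonempty {G : Set (X × ℝ) | GoodGraph f r G}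
    (fun c hcS hchain hne =>
      ⟨⋃₀ c, goodGraph_sUnion f r c hcS hchain hne, fun g hg => Set.subset_sUnion_of_mem hg⟩)
    {(r, f r)} (goodGraph_singleton f r hr)
  refine ⟨M, hMmax.1, ?_⟩
  intro x
  by_contra hcon
  push_neg at hcon
  obtain ⟨G', hG', hsub', hne'⟩ := goodGraph_extend f hf r hr hc hbr M hMmax.1 x hcon
  exact hne' (Set.Subset.antisymm (hMmax.2 hG' hsub') hsub')

/-- A branchwise-real tree is continuously gradable iff it admits a strictly
order-preserving function into the reals. -/
theorem stmt_3 (X : Type) [PartialOrder X] (hX : IsBranchwiseReal X) :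
    ContinuouslyGradable X ↔ ∃ f : X → ℝ, StrictMono f := by
  constructor
  · rintro ⟨ℓ, hℓ⟩
    exact ⟨ℓ, hℓ.1⟩
  · rintro ⟨f, hf⟩
    obtain ⟨⟨⟨r, hr⟩, hch⟩, hbr, -⟩ := hX
    obtain ⟨G, hG, htot⟩ := exists_total_goodGraph f hf r hr hch hbr
    obtain ⟨hroot, hfun, hdown, hmono, hlef, hsurj⟩ := hG
    choose ℓ hℓ using htot
    have hstrict : StrictMono ℓ := fun x y h => hmono (x, ℓ x) (hℓ x) (y, ℓ y) (hℓ y) h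
    refine ⟨ℓ, grading_of_surj hch ℓ hstrict ?_⟩
    intro x y hxy cc h1 h2
    obtain ⟨z, hz, hz1, hz2⟩ := hsurj (x, ℓ x) (hℓ x) (y, ℓ y) (hℓ y) hxy cc h1 h2
    have he : cc = ℓ z := hfun (z, cc) hz (z, ℓ z) (hℓ z) rfl
    exact ⟨z, hz1, hz2, he.symm⟩
end

section
/- Every branchwise-real tree admits a rank function, i.e. there exist an ordinal γ and an order-preserving function ρ : X → γ such that for every branch B the set {ρ(x) : x ∈ B} is downwards-closed, the preimage of any ordinal which is 0 or a limit is an antichain, and the preimage of any successor ordinal is a disjoint union of pairwise incomparable rays. -/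
namespace Stmt4Aux

variable {X : Type} [PartialOrder X]

noncomputable def root (hX : IsBranchwiseReal X) : X := hX.1.1.choose

lemma root_le (hX : IsBranchwiseReal X) (x : X) : root hX ≤ x := hX.1.1.choose_spec x

lemma comp_of_le_le (hX : IsBranchwiseReal X) {a b c : X} (hac : a ≤ c) (hbc : b ≤ c) :
    a ≤ b ∨ b ≤ a := by
  rcases eq_or_ne a b with rfl | h
  · exact Or.inl le_rfl
  · exact hX.1.2 c hac hbc h

noncomputable def meet (hX : IsBranchwiseReal X) (x y : X) : X := (hX.2.2 x y).choose

lemma meet_le_left (hX : IsBranchwiseReal X) (x y : X) : meet hX x y ≤ x :=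
  (hX.2.2 x y).choose_spec.1

lemma meet_le_right (hX : IsBranchwiseReal X) (x y : X) : meet hX x y ≤ y :=
  (hX.2.2 x y).choose_spec.2.1

lemma le_meet (hX : IsBranchwiseReal X) {x y z : X} (hx : z ≤ x) (hy : z ≤ y) :
    z ≤ meet hX x y :=
  (hX.2.2 x y).choose_spec.2.2 z hx hy

lemma meet_self (hX : IsBranchwiseReal X) (x : X) : meet hX x x = x :=
  le_antisymm (meet_le_left hX x x) (le_meet hX le_rfl le_rfl)

/-- every element comparable to all elements of a maximal chain is in it -/
lemma mem_of_forall_comp {B : Set X} (hB : IsBranch B) {c : X}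
    (h : ∀ b ∈ B, b ≠ c → c ≤ b ∨ b ≤ c) : c ∈ B := by
  have hch : IsChain (· ≤ ·) (insert c B) := hB.1.insert (fun b hb hne => h b hb (Ne.symm hne))
  have := hB.2 hch (Set.subset_insert _ _)
  rw [this]
  exact Set.mem_insert _ _

lemma downset_subset (hX : IsBranchwiseReal X) {B : Set X} (hB : IsBranch B) {x : X}
    (hx : x ∈ B) {y : X} (hy : y ≤ x) : y ∈ B := by
  refine mem_of_forall_comp hB (fun b hb _ => ?_)
  rcases eq_or_ne b x with rfl | hbx
  · exact comp_of_le_le hX hy le_rfl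
  · rcases hB.1 hb hx hbx with h | h
    · exact comp_of_le_le hX hy h
    · exact Or.inl (hy.trans h)

lemma exists_branch (x : X) : ∃ B : Set X, IsBranch B ∧ x ∈ B := by
  have hc : IsChain (· ≤ ·) ({x} : Set X) := Set.pairwise_singleton x _
  obtain ⟨B, hB, hsub⟩ := hc.exists_maxChain
  exact ⟨B, hB, hsub rfl⟩

noncomputable def branch (x : X) : Set X := (exists_branch x).choose

lemma branch_isBranch (x : X) : IsBranch (branch x) := (exists_branch x).choose_spec.1

lemma mem_branch (x : X) : x ∈ branch x := (exists_branch x).choose_spec.2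

/-- downward closed set -/
def DC (D : Set X) : Prop := ∀ ⦃a b : X⦄, a ≤ b → b ∈ D → a ∈ D

/-- equivalence on the complement of D -/
def E (hX : IsBranchwiseReal X) (D : Set X) (a b : X) : Prop :=
  a ∉ D ∧ b ∉ D ∧ meet hX a b ∉ D

lemma E.refl (hX : IsBranchwiseReal X) {D : Set X} {a : X} (ha : a ∉ D) : E hX D a a :=
  ⟨ha, ha, by rwa [meet_self]⟩

lemma E.symm' {hX : IsBranchwiseReal X} {D : Set X} (hD : DC D) {a b : X}
    (h : E hX D a b) : E hX D b a := by
  refine ⟨h.2.1, h.1, fun hm => h.2.2 (hD ?_ hm)⟩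
  exact le_meet hX (meet_le_right hX a b) (meet_le_left hX a b)

lemma E.trans' {hX : IsBranchwiseReal X} {D : Set X} (hD : DC D) {a b c : X}
    (h1 : E hX D a b) (h2 : E hX D b c) : E hX D a c := by
  refine ⟨h1.1, h2.2.1, ?_⟩
  have hw : meet hX a b ≤ b := meet_le_right hX a b
  have hw' : meet hX b c ≤ b := meet_le_left hX b c
  rcases comp_of_le_le hX hw hw' with h | h
  · intro hm
    exact h1.2.2 (hD (le_meet hX (meet_le_left hX a b) (h.trans (meet_le_right hX b c))) hm)
  · intro hm
    exact h2.2.2 (hD (le_meet hX (h.trans (meet_le_left hX a b)) (meet_le_right hX b c)) hm)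

/-- representative of the component of y in the complement of D -/
noncomputable def rep (hX : IsBranchwiseReal X) (D : Set X) (y : X) : X :=
  (@IsWellFounded.wf X WellOrderingRel _).min {z : X | E hX D z y ∨ z = y} ⟨y, Or.inr rfl⟩

lemma rep_spec (hX : IsBranchwiseReal X) {D : Set X} {y : X} (hy : y ∉ D) :
    E hX D (rep hX D y) y := by
  have := (@IsWellFounded.wf X WellOrderingRel _).min_mem
    {z : X | E hX D z y ∨ z = y} ⟨y, Or.inr rfl⟩
  rcases this with h | h
  · exact h
  · rw [rep, h]
    exact E.refl hX hy

lemma rep_eq_of_E (hX : IsBranchwiseReal X) {D : Set X} (hD : DC D) {y y' : X}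
    (h : E hX D y y') : rep hX D y = rep hX D y' := by
  have hset : {z : X | E hX D z y ∨ z = y} = {z : X | E hX D z y' ∨ z = y'} := by
    ext z
    constructor
    · rintro (hz | rfl)
      · exact Or.inl (hz.trans' (hD := hD) h)
      · exact Or.inl h
    · rintro (hz | rfl)
      · exact Or.inl (hz.trans' (hD := hD) (h.symm' hD))
      · exact Or.inl (h.symm' hD)
  rw [rep, rep]
  congr 1

/-- one step of the construction: add, for each component of the complement,
the tail of a chosen branch through the representative -/
def nxt (hX : IsBranchwiseReal X) (D : Set X) : Set X :=
  D ∪ {z : X | ∃ y : X, y ∉ D ∧ z ∈ branch (rep hX D y) ∧ z ∉ D}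

/-- minimal elements of the complement -/
def mins (D : Set X) : Set X := {x : X | x ∉ D ∧ ∀ z : X, z < x → z ∈ D}

noncomputable def stage (hX : IsBranchwiseReal X) : Ordinal → Set X := fun o =>
  Ordinal.limitRecOn o ({root hX} : Set X) (fun _ S => nxt hX S)
    (fun l _ f =>
      (⋃ (b : Ordinal) (h : b < l), f b h) ∪ mins (⋃ (b : Ordinal) (h : b < l), f b h))

lemma stage_zero (hX : IsBranchwiseReal X) : stage hX 0 = {root hX} := by
  rw [stage, Ordinal.limitRecOn_zero]

lemma stage_succ (hX : IsBranchwiseReal X) (α : Ordinal) :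
    stage hX (α + 1) = nxt hX (stage hX α) := by
  rw [Ordinal.add_one_eq_succ, stage, Ordinal.limitRecOn_succ]
  rfl

lemma stage_limit (hX : IsBranchwiseReal X) {α : Ordinal} (h : Order.IsSuccLimit α) :
    stage hX α = (⋃ (b : Ordinal) (_ : b < α), stage hX b) ∪
      mins (⋃ (b : Ordinal) (_ : b < α), stage hX b) := by
  rw [stage, Ordinal.limitRecOn_limit _ _ _ _ h]
  rfl

lemma stage_mono (hX : IsBranchwiseReal X) : ∀ (α : Ordinal) {β : Ordinal}, β ≤ α →
    stage hX β ⊆ stage hX α := by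
  intro α
  induction α using Ordinal.limitRecOn with
  | zero =>
    intro β hβ
    rw [nonpos_iff_eq_zero.mp hβ]
  | add_one α ih =>
    intro β hβ
    rcases eq_or_lt_of_le hβ with rfl | hlt
    · rfl
    · have : β ≤ α := Order.lt_succ_iff.mp hlt
      rw [stage_succ]
      exact (ih this).trans Set.subset_union_left
  | limit α hα ih =>
    intro β hβ
    rcases eq_or_lt_of_le hβ with rfl | hlt
    · rfl
    · rw [stage_limit hX hα]
      exact (Set.subset_iUnion₂ (s := fun b (_ : b < α) => stage hX b) β hlt).trans
        Set.subset_union_left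

lemma stage_dc (hX : IsBranchwiseReal X) : ∀ α : Ordinal, DC (stage hX α) := by
  intro α
  induction α using Ordinal.limitRecOn with
  | zero =>
    intro a b hab hb
    rw [stage_zero] at *
    rcases hb with rfl
    exact le_antisymm hab (root_le hX a) ▸ rfl
  | add_one α ih =>
    rw [stage_succ]
    intro a b hab hb
    rcases hb with hb | ⟨y, hy, hbB, hbD⟩
    · exact Or.inl (ih hab hb)
    · by_cases ha : a ∈ stage hX α
      · exact Or.inl ha
      · exact Or.inr ⟨y, hy, downset_subset hX (branch_isBranch _) hbB hab, ha⟩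
  | limit α hα ih =>
    rw [stage_limit hX hα]
    intro a b hab hb
    rcases hb with hb | hb
    · obtain ⟨s, ⟨β, rfl⟩, hs⟩ := hb
      obtain ⟨s', ⟨hβ, rfl⟩, hbs⟩ := hs
      exact Or.inl (Set.mem_iUnion₂.mpr ⟨β, hβ, ih β hβ hab hbs⟩)
    · rcases eq_or_lt_of_le hab with rfl | hlt
      · exact Or.inr hb
      · exact Or.inl (hb.2 a hlt)

lemma exists_stage (hX : IsBranchwiseReal X) (x : X) : ∃ α : Ordinal, x ∈ stage hX α := by
  by_contra hcon
  push_neg at hcon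
  -- stage is injective
  have hnew : ∀ α : Ordinal, rep hX (stage hX α) x ∈ stage hX (α + 1) \ stage hX α := by
    intro α
    have hx : x ∉ stage hX α := hcon α
    have hs := rep_spec hX hx
    refine ⟨?_, hs.1⟩
    rw [stage_succ]
    exact Or.inr ⟨x, hx, mem_branch _, hs.1⟩
  have key : ∀ {α β : Ordinal}, α < β → stage hX α = stage hX β → False := by
    intro α β hlt hab
    have h1 : stage hX (α + 1) ⊆ stage hX β := stage_mono hX β (by
      rwa [Ordinal.add_one_eq_succ, Order.succ_le_iff])
    exact (hnew α).2 ((Set.ext_iff.mp hab _).mpr (h1 (hnew α).1))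
  have hinj : Function.Injective (stage hX) := by
    intro α β hab
    by_contra hne
    rcases lt_or_gt_of_ne hne with hlt | hlt
    · exact key hlt hab
    · exact key hlt hab.symm
  have hli : Function.LeftInverse (Function.invFun (stage hX)) (stage hX) :=
    Function.leftInverse_invFun hinj
  set L := Ordinal.lsub.{0,_} (Function.invFun (stage hX)) with hL
  have : L < L := by
    conv_lhs => rw [← hli L]
    exact Ordinal.lt_lsub _ _
  exact absurd this (lt_irrefl L)

noncomputable def rho (hX : IsBranchwiseReal X) (x : X) : Ordinal :=
  sInf {α : Ordinal | x ∈ stage hX α}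

lemma rho_mem (hX : IsBranchwiseReal X) (x : X) : x ∈ stage hX (rho hX x) :=
  csInf_mem (exists_stage hX x)

lemma rho_le_of_mem (hX : IsBranchwiseReal X) {x : X} {α : Ordinal}
    (h : x ∈ stage hX α) : rho hX x ≤ α := csInf_le' h

lemma mem_iff_rho_le (hX : IsBranchwiseReal X) {x : X} {α : Ordinal} :
    x ∈ stage hX α ↔ rho hX x ≤ α :=
  ⟨rho_le_of_mem hX, fun h => stage_mono hX α h (rho_mem hX x)⟩

lemma rho_mono (hX : IsBranchwiseReal X) : Monotone (rho hX) := by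
  intro a b hab
  exact rho_le_of_mem hX (stage_dc hX _ hab (rho_mem hX b))

lemma rho_root (hX : IsBranchwiseReal X) : rho hX (root hX) = 0 :=
  nonpos_iff_eq_zero.mp (rho_le_of_mem hX (by rw [stage_zero]; rfl))

lemma claimA (hX : IsBranchwiseReal X) {x : X} {δ : Ordinal} (hx : x ∉ stage hX δ) :
    ∃ w : X, w ≤ x ∧ rho hX w = δ + 1 := by
  set p := rep hX (stage hX δ) x with hp
  have hs := rep_spec hX hx
  refine ⟨meet hX p x, meet_le_right hX p x, ?_⟩
  have hmem : meet hX p x ∈ stage hX (δ + 1) := by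
    rw [stage_succ]
    exact Or.inr ⟨x, hx, downset_subset hX (branch_isBranch p) (mem_branch p)
      (meet_le_left hX p x), hs.2.2⟩
  have h1 : rho hX (meet hX p x) ≤ δ + 1 := rho_le_of_mem hX hmem
  have h2 : δ < rho hX (meet hX p x) := by
    by_contra hcon
    push_neg at hcon
    exact hs.2.2 ((mem_iff_rho_le hX).mpr hcon)
  exact le_antisymm h1 (by rwa [Ordinal.add_one_eq_succ, Order.succ_le_iff])

lemma E_of_comp (hX : IsBranchwiseReal X) {D : Set X} {a b : X} (ha : a ∉ D) (hb : b ∉ D)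
    (h : a ≤ b ∨ b ≤ a) : E hX D a b := by
  refine ⟨ha, hb, ?_⟩
  rcases h with h | h
  · have : meet hX a b = a := le_antisymm (meet_le_left hX a b) (le_meet hX le_rfl h)
    rw [this]; exact ha
  · have : meet hX a b = b := le_antisymm (meet_le_right hX a b) (le_meet hX h le_rfl)
    rw [this]; exact hb

lemma chain_comp {C : Set X} (hC : IsChain (· ≤ ·) C) {a b : X} (ha : a ∈ C) (hb : b ∈ C) :
    a ≤ b ∨ b ≤ a := by
  rcases eq_or_ne a b with rfl | hne
  · exact Or.inl le_rfl
  · exact hC ha hb hne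

/-- least upper bounds exist along branches -/
lemma branch_lub (hX : IsBranchwiseReal X) {B : Set X} (hB : IsBranch B) {S : Set X}
    (hS : S ⊆ B) (hne : S.Nonempty) {x : X} (hxB : x ∈ B) (hub : ∀ s ∈ S, s ≤ x) :
    ∃ m ∈ B, (∀ s ∈ S, s ≤ m) ∧ ∀ u ∈ B, (∀ s ∈ S, s ≤ u) → m ≤ u := by
  obtain ⟨I, hI, ⟨e⟩⟩ := hX.2.1 B hB
  obtain ⟨s₀, hs₀⟩ := hne
  set S' : Set ℝ := (fun z : B => (e z : ℝ)) '' {z : B | (z : X) ∈ S} with hS'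
  have hs₀' : ((e ⟨s₀, hS hs₀⟩ : I) : ℝ) ∈ S' := ⟨⟨s₀, hS hs₀⟩, hs₀, rfl⟩
  have hne' : S'.Nonempty := ⟨_, hs₀'⟩
  have hmono : ∀ {z w : B}, z ≤ w ↔ ((e z : I) : ℝ) ≤ ((e w : I) : ℝ) := by
    intro z w
    rw [Subtype.coe_le_coe, e.le_iff_le]
  have hbdd : BddAbove S' := by
    refine ⟨((e ⟨x, hxB⟩ : I) : ℝ), ?_⟩
    rintro t ⟨z, hz, rfl⟩
    exact hmono.mp (Subtype.coe_le_coe.mp (hub _ hz))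
  set t := sSup S' with ht
  have htI : t ∈ I := by
    refine hI.out (e ⟨s₀, hS hs₀⟩).2 (e ⟨x, hxB⟩).2 ⟨le_csSup hbdd hs₀', ?_⟩
    refine csSup_le hne' ?_
    rintro r ⟨z, hz, rfl⟩
    exact hmono.mp (Subtype.coe_le_coe.mp (hub _ hz))
  refine ⟨(e.symm ⟨t, htI⟩ : B), (e.symm ⟨t, htI⟩).2, ?_, ?_⟩
  · intro s hs
    have : (⟨s, hS hs⟩ : B) ≤ e.symm ⟨t, htI⟩ := by
      rw [e.le_symm_apply]
      exact Subtype.coe_le_coe.mp (le_csSup hbdd ⟨⟨s, hS hs⟩, hs, rfl⟩)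
    exact Subtype.coe_le_coe.mpr this
  · intro u huB huub
    have : e.symm ⟨t, htI⟩ ≤ (⟨u, huB⟩ : B) := by
      rw [e.symm_apply_le]
      refine Subtype.coe_le_coe.mp (csSup_le hne' ?_)
      rintro r ⟨z, hz, rfl⟩
      exact hmono.mp (Subtype.coe_le_coe.mp (huub _ hz))
    exact Subtype.coe_le_coe.mpr this

/-- key lemma: the set of ranks below any point is an initial segment -/
lemma exists_rho_eq_below (hX : IsBranchwiseReal X) (x : X) {β : Ordinal}
    (hβ : β ≤ rho hX x) : ∃ y : X, y ≤ x ∧ rho hX y = β := by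
  rcases Ordinal.zero_or_succ_or_isSuccLimit β with rfl | ⟨δ, rfl⟩ | hlim
  · exact ⟨root hX, root_le hX x, rho_root hX⟩
  · have hδ : δ < rho hX x := lt_of_lt_of_le (Order.lt_succ δ) hβ
    have hx : x ∉ stage hX δ := fun h => absurd (rho_le_of_mem hX h) (not_le.mpr hδ)
    obtain ⟨w, hwx, hw⟩ := claimA hX hx
    exact ⟨w, hwx, by rw [hw, Ordinal.add_one_eq_succ]⟩
  · rcases eq_or_lt_of_le hβ with heq | hlt
    · exact ⟨x, le_rfl, heq.symm⟩
    set B := branch x with hBdef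
    have hB : IsBranch B := branch_isBranch x
    have hxB : x ∈ B := mem_branch x
    set L := {y : X | y ≤ x ∧ rho hX y < β} with hLdef
    have hLB : L ⊆ B := fun y hy => downset_subset hX hB hxB hy.1
    have hLne : L.Nonempty := ⟨root hX, root_le hX x, by rw [rho_root]; exact hlim.pos⟩
    obtain ⟨m, hmB, hm1, hm2⟩ := branch_lub hX hB hLB hLne hxB (fun s hs => hs.1)
    have hmx : m ≤ x := hm2 x hxB (fun s hs => hs.1)
    by_cases hcase : β ≤ rho hX m
    · -- m has rank exactly β : it is a minimal element of the complement at stage β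
      refine ⟨m, hmx, le_antisymm (rho_le_of_mem hX ?_) hcase⟩
      rw [stage_limit hX hlim]
      refine Or.inr ⟨?_, ?_⟩
      · intro h
        obtain ⟨s, ⟨γ, rfl⟩, hs⟩ := h
        obtain ⟨s', ⟨hγ, rfl⟩, hms⟩ := hs
        exact absurd ((rho_le_of_mem hX hms).trans_lt hγ) (not_lt.mpr hcase)
      · intro z hzm
        have hzx : z ≤ x := hzm.le.trans hmx
        have hρz : rho hX z < β := by
          by_contra hge
          push_neg at hge
          have hub' : ∀ s ∈ L, s ≤ z := by
            intro l hl
            rcases comp_of_le_le hX hl.1 hzx with h | h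
            · exact h
            · exact absurd ((rho_mono hX h).trans_lt hl.2) (not_lt.mpr hge)
          exact hzm.not_ge (hm2 z (downset_subset hX hB hxB hzx) hub')
        exact Set.mem_iUnion₂.mpr ⟨rho hX z, hρz, rho_mem hX z⟩
    · push_neg at hcase
      exfalso
      have h1 : rho hX m + 1 < β := by
        rw [Ordinal.add_one_eq_succ]
        exact hlim.succ_lt hcase
      have hx1 : x ∉ stage hX (rho hX m + 1) := by
        intro h
        exact absurd ((rho_le_of_mem hX h).trans_lt h1) (not_lt.mpr hlt.le)
      obtain ⟨w, hwx, hw⟩ := claimA hX hx1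
      have hwβ : rho hX w < β := by
        rw [hw, Ordinal.add_one_eq_succ]
        exact hlim.succ_lt h1
      have hle : rho hX w ≤ rho hX m := rho_mono hX (hm1 w ⟨hwx, hwβ⟩)
      rw [hw] at hle
      have : rho hX m < rho hX m + 1 + 1 := by
        rw [Ordinal.add_one_eq_succ, Ordinal.add_one_eq_succ]
        exact (Order.lt_succ _).trans (Order.lt_succ _)
      exact this.not_ge hle

lemma fibre_succ (hX : IsBranchwiseReal X) (β : Ordinal) :
    rho hX ⁻¹' {β + 1} = stage hX (β + 1) \ stage hX β := by
  ext z
  simp only [Set.mem_preimage, Set.mem_singleton_iff, Set.mem_diff]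
  constructor
  · intro h
    refine ⟨(mem_iff_rho_le hX).mpr h.le, fun hz => ?_⟩
    have := rho_le_of_mem hX hz
    rw [h, Ordinal.add_one_eq_succ] at this
    exact (Order.lt_succ β).not_ge this
  · rintro ⟨h1, h2⟩
    have hle : rho hX z ≤ β + 1 := rho_le_of_mem hX h1
    have hgt : β < rho hX z := by
      by_contra hc
      push_neg at hc
      exact h2 ((mem_iff_rho_le hX).mpr hc)
    rw [Ordinal.add_one_eq_succ] at hle ⊢
    exact le_antisymm hle (Order.succ_le_of_lt hgt)

lemma mem_branch_comp {c : X} {a : X} (ha : a ∈ branch c) :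
    a ≤ c ∨ c ≤ a := chain_comp (branch_isBranch c).1 ha (mem_branch c)

/-- the rank function condition at successor ordinals -/
lemma succ_fibre_rays (hX : IsBranchwiseReal X) (α β : Ordinal) (hαβ : α = β + 1) :
    ∃ 𝒮 : Set (Set X), (rho hX ⁻¹' {α} = ⋃₀ 𝒮) ∧ (∀ R ∈ 𝒮, IsRay R) ∧
      ∀ R ∈ 𝒮, ∀ R' ∈ 𝒮, R ≠ R' → ∀ a ∈ R, ∀ b ∈ R', ¬a ≤ b ∧ ¬b ≤ a := by
  subst hαβ
  set D := stage hX β with hD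
  have hDC : DC D := stage_dc hX β
  set 𝒮 : Set (Set X) :=
    {R | ∃ y : X, y ∉ D ∧ R = branch (rep hX D y) \ D} with h𝒮
  have hkey : ∀ R ∈ 𝒮, ∀ R' ∈ 𝒮, ∀ a ∈ R, ∀ b ∈ R', a ≤ b → R = R' := by
    rintro R ⟨y, hy, rfl⟩ R' ⟨y', hy', rfl⟩ a ha b hb hab
    have hEy : E hX D y (rep hX D y) := (rep_spec hX hy).symm' hDC
    have hEy' : E hX D (rep hX D y') y' := rep_spec hX hy'
    have hpa : E hX D (rep hX D y) a :=
      E_of_comp hX (rep_spec hX hy).1 ha.2 (mem_branch_comp ha.1).symm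
    have hab' : E hX D a b := E_of_comp hX ha.2 hb.2 (Or.inl hab)
    have hbp' : E hX D b (rep hX D y') :=
      E_of_comp hX hb.2 (rep_spec hX hy').1 (mem_branch_comp hb.1)
    have hyy' : E hX D y y' :=
      ((((hEy.trans' hDC hpa).trans' hDC hab').trans' hDC hbp').trans' hDC hEy')
    rw [rep_eq_of_E hX hDC hyy']
  refine ⟨𝒮, ?_, ?_, ?_⟩
  · ext z
    simp only [Set.mem_sUnion]
    rw [Set.mem_preimage, Set.mem_singleton_iff]
    constructor
    · intro h
      have hz : z ∈ stage hX (β + 1) \ stage hX β := by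
        rw [← fibre_succ hX β]; exact h
      have := hz.1
      rw [stage_succ] at this
      rcases this with h' | ⟨y, hy, hzB, hzD⟩
      · exact absurd h' hz.2
      · exact ⟨branch (rep hX D y) \ D, ⟨y, hy, rfl⟩, hzB, hzD⟩
    · rintro ⟨R, ⟨y, hy, rfl⟩, hzR⟩
      have hz : z ∈ stage hX (β + 1) \ stage hX β := by
        refine ⟨?_, hzR.2⟩
        rw [stage_succ]
        exact Or.inr ⟨y, hy, hzR.1, hzR.2⟩
      rw [← fibre_succ hX β] at hz
      exact hz
  · rintro R ⟨y, hy, rfl⟩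
    refine ⟨branch (rep hX D y), branch_isBranch _, Set.diff_subset, ?_⟩
    intro a ha b hb hab
    refine ⟨hb, fun hbD => ha.2 (hDC hab hbD)⟩
  · intro R hR R' hR' hne a ha b hb
    exact ⟨fun hab => hne (hkey R hR R' hR' a ha b hb hab),
      fun hba => hne.symm (hkey R' hR' R hR b hb a ha hba)⟩

/-- the rank function condition at 0 and limits -/
lemma fibre_antichain (hX : IsBranchwiseReal X) (α : Ordinal) (h : α = 0 ∨ Order.IsSuccLimit α) :
    IsAntichain (· ≤ ·) (rho hX ⁻¹' {α}) := by
  rcases h with rfl | hlim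
  · intro a ha b hb hne
    exfalso
    apply hne
    have ha' : a ∈ stage hX 0 := (mem_iff_rho_le hX).mpr (le_of_eq ha)
    have hb' : b ∈ stage hX 0 := (mem_iff_rho_le hX).mpr (le_of_eq hb)
    rw [stage_zero] at ha' hb'
    rw [ha', hb']
  · intro a ha b hb hne hab
    rw [Set.mem_preimage, Set.mem_singleton_iff] at ha hb
    have halt : a < b := lt_of_le_of_ne hab (by rintro rfl; exact hne rfl)
    -- b is in mins of the union below α
    have hbm : b ∈ stage hX α := (mem_iff_rho_le hX).mpr hb.le
    rw [stage_limit hX hlim] at hbm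
    have hbU : b ∉ ⋃ (γ : Ordinal) (_ : γ < α), stage hX γ := by
      intro hU
      obtain ⟨s, ⟨γ, rfl⟩, hs⟩ := hU
      obtain ⟨s', ⟨hγ, rfl⟩, hbs⟩ := hs
      exact ((rho_le_of_mem hX hbs).trans_lt hγ).ne hb
    rcases hbm with hU | hmins
    · exact hbU hU
    · have := hmins.2 a halt
      obtain ⟨s, ⟨γ, rfl⟩, hs⟩ := this
      obtain ⟨s', ⟨hγ, rfl⟩, has⟩ := hs
      exact ((rho_le_of_mem hX has).trans_lt hγ).ne ha

end Stmt4Aux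

/-- Every branchwise-real tree admits a rank function into some ordinal `γ`. -/
theorem stmt_4 (X : Type) [PartialOrder X] (hX : IsBranchwiseReal X) :
    ∃ (γ : Ordinal) (ρ : X → Ordinal), (∀ x : X, ρ x < γ) ∧ IsRankFunction ρ := by
  classical
  refine ⟨Ordinal.lsub.{0,_} (fun x : X => Stmt4Aux.rho hX x), Stmt4Aux.rho hX,
    fun x => Ordinal.lt_lsub _ x, ?_, ?_, ?_, ?_⟩
  · exact Stmt4Aux.rho_mono hX
  · rintro B hB α β hβα ⟨x, hxB, rfl⟩
    obtain ⟨y, hyx, hy⟩ := Stmt4Aux.exists_rho_eq_below hX x hβα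
    exact ⟨y, Stmt4Aux.downset_subset hX hB hxB hyx, hy⟩
  · exact Stmt4Aux.fibre_antichain hX
  · exact Stmt4Aux.succ_fibre_rays hX
end

section
/- If a branchwise-real tree X admits a bounded rank function (a rank function ρ : X → ω₁ whose values have supremum strictly less than ω₁), then X is continuously gradable. -/
open Set



namespace BRT

noncomputable def kmap (u : ℝ) : ℝ := ((orderIsoIooNegOneOne ℝ) u : ℝ)

lemma kmap_strictMono : StrictMono kmap := fun a b h => by
  simpa [kmap, Subtype.coe_lt_coe] using (orderIsoIooNegOneOne ℝ).strictMono h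

lemma kmap_mem (u : ℝ) : kmap u ∈ Ioo (-1:ℝ) 1 := ((orderIsoIooNegOneOne ℝ) u).2

lemma kmap_surj {v : ℝ} (hv : v ∈ Ioo (-1:ℝ) 1) : ∃ u, kmap u = v :=
  ⟨(orderIsoIooNegOneOne ℝ).symm ⟨v, hv⟩, by simp [kmap]⟩

lemma kmap_le_iff {a b : ℝ} : kmap a ≤ kmap b ↔ a ≤ b := kmap_strictMono.le_iff_le

variable {X : Type} [PartialOrder X]

/-- A set that is a nonempty chain, embeddable in `ℝ` with interval-complete image. -/
def RayLike (R : Set X) : Prop :=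
  R.Nonempty ∧ IsChain (· ≤ ·) R ∧
    ∃ ψ : X → ℝ, (∀ x ∈ R, ∀ y ∈ R, (x ≤ y ↔ ψ x ≤ ψ y)) ∧
      (∀ x ∈ R, ∀ y ∈ R, ∀ v, ψ x ≤ v → v ≤ ψ y → ∃ z ∈ R, ψ z = v)

lemma lemA (R : Set X) (hR : RayLike R) (s b : ℝ) (hsb : s < b) :
    ∃ φ : X → ℝ,
      (∀ x ∈ R, ∀ y ∈ R, x < y → φ x < φ y) ∧
      (∀ x ∈ R, φ x < b) ∧
      (∀ x ∈ R, s ≤ φ x ∧ (φ x = s ↔ ∀ z ∈ R, x ≤ z)) ∧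
      (∀ y ∈ R, ∀ t, s < t → t ≤ φ y → ∃ z ∈ R, φ z = t ∧ z ≤ y) := by
  classical
  obtain ⟨hne, hch, ψ, hψ1, hψ2⟩ := hR
  obtain ⟨x₀, hx₀⟩ := hne
  set J₁ : Set ℝ := (fun x => kmap (ψ x)) '' R with hJ₁
  have hJ₁ne : J₁.Nonempty := ⟨kmap (ψ x₀), x₀, hx₀, rfl⟩
  have hJ₁bdd : BddBelow J₁ := ⟨-1, by rintro _ ⟨u, _, rfl⟩; exact (kmap_mem _).1.le⟩
  set i : ℝ := sInf J₁ with hi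
  have hilt : ∀ u ∈ R, i ≤ kmap (ψ u) ∧ kmap (ψ u) < 1 := fun u hu =>
    ⟨csInf_le hJ₁bdd ⟨u, hu, rfl⟩, (kmap_mem _).2⟩
  have hi1 : i < 1 := lt_of_le_of_lt (hilt x₀ hx₀).1 (hilt x₀ hx₀).2
  have h1i : (0:ℝ) < 1 - i := by linarith
  have hbs : (0:ℝ) < b - s := by linarith
  have hbs' : b - s ≠ 0 := ne_of_gt hbs
  have h1i' : (1:ℝ) - i ≠ 0 := ne_of_gt h1i
  set φ : X → ℝ := fun x => s + (b - s) * (kmap (ψ x) - i) / (1 - i) with hφ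
  have hc1 : ∀ x ∈ R, ∀ y ∈ R, x < y → φ x < φ y := by
    intro x hx y hy hxy
    have h2 : ψ x < ψ y := by
      rcases lt_or_ge (ψ x) (ψ y) with h | h
      · exact h
      · exact absurd ((hψ1 y hy x hx).2 h) (not_le_of_gt hxy)
    have h3 := kmap_strictMono h2
    have h4 : (b - s) * (kmap (ψ x) - i) / (1 - i) < (b - s) * (kmap (ψ y) - i) / (1 - i) := by
      apply div_lt_div_of_pos_right _ h1i
      nlinarith
    simp only [hφ]; linarith
  have hc2 : ∀ x ∈ R, φ x < b := by
    intro x hx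
    have h1 := (hilt x hx).2
    have h2 : (b - s) * (kmap (ψ x) - i) / (1 - i) < b - s := by
      rw [div_lt_iff₀ h1i]; nlinarith
    simp only [hφ]; linarith
  have hge : ∀ x ∈ R, s ≤ φ x := by
    intro x hx
    have h1 := (hilt x hx).1
    have : 0 ≤ (b - s) * (kmap (ψ x) - i) / (1 - i) :=
      div_nonneg (mul_nonneg hbs.le (by linarith)) h1i.le
    simp only [hφ]; linarith
  have hc3 : ∀ x ∈ R, (φ x = s ↔ ∀ z ∈ R, x ≤ z) := by
    intro x hx
    simp only [hφ]
    constructor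
    · intro h z hz
      have h0 : kmap (ψ x) - i = 0 := by
        have hz0 : (b - s) * (kmap (ψ x) - i) / (1 - i) = 0 := by linarith
        rcases div_eq_zero_iff.1 hz0 with hz' | hz'
        · rcases mul_eq_zero.1 hz' with h' | h'
          · exact absurd h' hbs'
          · exact h'
        · exact absurd hz' h1i'
      have h1 : kmap (ψ x) ≤ kmap (ψ z) := by
        have := (hilt z hz).1; linarith
      exact (hψ1 x hx z hz).2 (kmap_le_iff.1 h1)
    · intro h
      have hlb : kmap (ψ x) ≤ i := by
        apply le_csInf hJ₁ne
        rintro _ ⟨u, hu, rfl⟩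
        exact kmap_le_iff.2 ((hψ1 x hx u hu).1 (h u hu))
      have h0 : kmap (ψ x) = i := le_antisymm hlb (hilt x hx).1
      rw [h0]; simp
  have hc4 : ∀ y ∈ R, ∀ t, s < t → t ≤ φ y → ∃ z ∈ R, φ z = t ∧ z ≤ y := by
    intro y hy t hst hty
    simp only [hφ] at hty
    set ky := kmap (ψ y) with hky
    set w : ℝ := i + (t - s) * (1 - i) / (b - s) with hw
    have hiw : i < w := by
      have : 0 < (t - s) * (1 - i) / (b - s) := div_pos (mul_pos (by linarith) h1i) hbs
      rw [hw]; linarith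
    have hwky : w ≤ ky := by
      have h2 : (t - s) ≤ (b - s) * (ky - i) / (1 - i) := by linarith
      have h3 : (t - s) * (1 - i) ≤ (b - s) * (ky - i) := by
        rw [← le_div_iff₀ h1i]; exact h2
      rw [hw, ← sub_nonneg]
      have h4 : (t - s) * (1 - i) / (b - s) ≤ ky - i := by
        rw [div_le_iff₀ hbs]; nlinarith
      linarith
    obtain ⟨j', hj'J₁, hj'w⟩ := exists_lt_of_csInf_lt hJ₁ne hiw
    obtain ⟨u', hu'R, hu'⟩ := hj'J₁
    have hu'' : kmap (ψ u') = j' := hu'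
    have hwIoo : w ∈ Ioo (-1:ℝ) 1 := by
      constructor
      · have := (kmap_mem (ψ u')).1
        rw [hu''] at this; linarith
      · exact lt_of_le_of_lt hwky (hilt y hy).2
    obtain ⟨u, hu⟩ := kmap_surj hwIoo
    have hu'u : ψ u' ≤ u := by
      apply le_of_lt
      apply kmap_strictMono.lt_iff_lt.1
      rw [hu, hu'']; exact hj'w
    have huy : u ≤ ψ y := by apply kmap_le_iff.1; rw [hu]; exact hwky
    obtain ⟨z, hzR, hzval⟩ := hψ2 u' hu'R y hy u hu'u huy
    have hφz : φ z = t := by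
      simp only [hφ]
      rw [hzval, hu, hw]
      field_simp
      ring
    refine ⟨z, hzR, hφz, ?_⟩
    rcases eq_or_ne z y with h | h
    · exact le_of_eq h
    rcases hch hzR hy h with h' | h'
    · exact h'
    · rcases eq_or_lt_of_le h' with h'' | h''
      · exact le_of_eq h''.symm
      · exfalso
        have := hc1 y hy z hzR h''
        rw [hφz] at this
        simp only [hφ] at this
        linarith
  exact ⟨φ, hc1, hc2, fun x hx => ⟨hge x hx, hc3 x hx⟩, hc4⟩

open Classical in
noncomputable def Phi (R : Set X) (s b : ℝ) : X → ℝ :=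
  if h : s < b ∧ RayLike R then (lemA R h.2 s b h.1).choose else fun _ => 0

lemma Phi_spec {R : Set X} {s b : ℝ} (h1 : s < b) (h2 : RayLike R) :
    (∀ x ∈ R, ∀ y ∈ R, x < y → Phi R s b x < Phi R s b y) ∧
    (∀ x ∈ R, Phi R s b x < b) ∧
    (∀ x ∈ R, s ≤ Phi R s b x ∧ (Phi R s b x = s ↔ ∀ z ∈ R, x ≤ z)) ∧
    (∀ y ∈ R, ∀ t, s < t → t ≤ Phi R s b y → ∃ z ∈ R, Phi R s b z = t ∧ z ≤ y) := by
  have h : s < b ∧ RayLike R := ⟨h1, h2⟩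
  have heq : Phi R s b = (lemA R h.2 s b h.1).choose := by
    unfold Phi
    rw [dif_pos h]
  rw [heq]
  exact (lemA R h.2 s b h.1).choose_spec

end BRT


namespace BRT


/-- A strictly monotone positive real embedding of ordinals up to `δ+1`. -/
lemma exists_e (δ : Ordinal) (hδ : δ < (Cardinal.aleph 1).ord) :
    ∃ e : Ordinal → ℝ, (∀ α β : Ordinal, α < β → β ≤ δ + 1 → e α < e β) ∧ ∀ α, 0 < e α := by
  classical
  have hlim : Order.IsSuccLimit ((Cardinal.aleph 1).ord) :=
    Cardinal.isSuccLimit_ord (Cardinal.aleph0_le_aleph 1)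
  have h1 : δ + 1 < (Cardinal.aleph 1).ord := by
    rw [Ordinal.add_one_eq_succ]
    exact hlim.succ_lt hδ
  have h2 : δ + 2 < (Cardinal.aleph 1).ord := by
    have : δ + 2 = (δ + 1) + 1 := by rw [add_assoc]; norm_num
    rw [this, Ordinal.add_one_eq_succ]
    exact hlim.succ_lt h1
  have hcard : (δ + 2).card ≤ Cardinal.aleph0 := by
    have := Cardinal.lt_ord.1 h2
    rwa [← Cardinal.succ_aleph0, Order.lt_succ_iff] at this
  have hmk : Cardinal.mk (Iio (δ + 2) : Set Ordinal) ≤ Cardinal.aleph0 := by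
    rw [Ordinal.mk_Iio_ordinal]
    exact Cardinal.lift_le_aleph0.2 hcard
  haveI : Countable (Iio (δ + 2) : Set Ordinal) := Cardinal.mk_le_aleph0_iff.1 hmk
  obtain ⟨f⟩ := Order.embedding_from_countable_to_dense (α := (Iio (δ + 2) : Set Ordinal)) (β := ℝ)
  refine ⟨fun o => if h : o < δ + 2 then 1.5 + kmap (f ⟨o, h⟩) / 2 else 2, ?_, ?_⟩
  · intro α β hαβ hβ
    have hβ2 : β < δ + 2 := by
      apply lt_of_le_of_lt hβ
      have : δ + 2 = (δ + 1) + 1 := by rw [add_assoc]; norm_num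
      rw [this]
      exact Order.lt_succ (δ + 1)
    have hα2 : α < δ + 2 := lt_trans hαβ hβ2
    dsimp only
    rw [dif_pos hα2, dif_pos hβ2]
    have hf : f ⟨α, hα2⟩ < f ⟨β, hβ2⟩ := f.strictMono (Subtype.mk_lt_mk.2 hαβ)
    have := kmap_strictMono hf
    linarith
  · intro α
    dsimp only
    by_cases h : α < δ + 2
    · rw [dif_pos h]
      have := (kmap_mem (f ⟨α, h⟩)).1
      linarith
    · rw [dif_neg h]; norm_num

variable {X : Type} [PartialOrder X]

lemma mem_branch_of_comparable {B : Set X} (hB : IsMaxChain (· ≤ ·) B) {w : X}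
    (h : ∀ c ∈ B, w ≤ c ∨ c ≤ w) : w ∈ B := by
  have hch : IsChain (· ≤ ·) (insert w B) := hB.1.insert (fun b hb _ => h b hb)
  have := hB.2 hch (subset_insert w B)
  rw [this]
  exact mem_insert w B

lemma mem_branch_of_le (htree : ∀ x : X, IsChain (· ≤ ·) {y : X | y ≤ x})
    {B : Set X} (hB : IsMaxChain (· ≤ ·) B) {x w : X}
    (hx : x ∈ B) (hwx : w ≤ x) : w ∈ B := by
  apply mem_branch_of_comparable hB
  intro c hc
  rcases eq_or_ne c x with rfl | hne
  · exact Or.inl hwx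
  rcases hB.1 hc hx hne with h' | h'
  · rcases eq_or_ne c w with rfl | hne'
    · exact Or.inl le_rfl
    · rcases htree x h' hwx (by exact hne') with h'' | h''
      · exact Or.inr h''
      · exact Or.inl h''
  · exact Or.inl (le_trans hwx h')

section RayContext

variable {B R : Set X}
variable (htree : ∀ x : X, IsChain (· ≤ ·) {y : X | y ≤ x})
variable (hB : IsMaxChain (· ≤ ·) B) (hRB : R ⊆ B)
variable (hfin : ∀ a ∈ R, ∀ b ∈ B, a ≤ b → b ∈ R)

include htree hB hRB hfin

lemma dset_mono {a a' : X} (ha : a ∈ R) (_ha' : a' ∈ R) (haa' : a ≤ a') :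
    {w | w < a' ∧ w ∉ R} ⊆ {w | w < a ∧ w ∉ R} := by
  rintro w ⟨hw1, hw2⟩
  have hwB : w ∈ B := mem_branch_of_le htree hB (hRB _ha') hw1.le
  have hne : w ≠ a := fun h => hw2 (h ▸ ha)
  rcases hB.1 hwB (hRB ha) hne with h | h
  · exact ⟨lt_of_le_of_ne h hne, hw2⟩
  · exact absurd (hfin a ha w hwB h) hw2

lemma dset_indep {a a' : X} (ha : a ∈ R) (ha' : a' ∈ R) :
    {w | w < a ∧ w ∉ R} = {w | w < a' ∧ w ∉ R} := by
  rcases eq_or_ne a a' with rfl | hne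
  · rfl
  rcases hB.1 (hRB ha) (hRB ha') hne with h | h
  · apply Subset.antisymm
    · intro w hw
      exact ⟨lt_of_lt_of_le hw.1 h, hw.2⟩
    · exact dset_mono htree hB hRB hfin ha ha' h
  · apply Subset.antisymm
    · exact dset_mono htree hB hRB hfin ha' ha h
    · intro w hw
      exact ⟨lt_of_lt_of_le hw.1 h, hw.2⟩

lemma dset_lt {a : X} (ha : a ∈ R) {w : X} (hw : w < a ∧ w ∉ R) :
    ∀ z ∈ R, w < z := by
  intro z hz
  have := dset_indep htree hB hRB hfin ha hz
  exact ((Set.ext_iff.1 this w).1 hw).1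

lemma branch_decomp {a : X} (ha : a ∈ R) :
    B = {w | w < a ∧ w ∉ R} ∪ R := by
  ext b
  constructor
  · intro hb
    rcases eq_or_ne b a with rfl | hne
    · exact Or.inr ha
    rcases hB.1 hb (hRB ha) hne with h | h
    · by_cases hbR : b ∈ R
      · exact Or.inr hbR
      · exact Or.inl ⟨lt_of_le_of_ne h hne, hbR⟩
    · exact Or.inr (hfin a ha b hb h)
  · rintro (hb | hb)
    · exact mem_branch_of_le htree hB (hRB ha) hb.1.le
    · exact hRB hb

end RayContext

/-- From the branch order-isomorphism we extract a function-level embedding. -/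
lemma branch_psi {B : Set X} (h : ∃ I : Set ℝ, I.OrdConnected ∧ Nonempty (↥B ≃o ↥I)) :
    ∃ ψ : X → ℝ, (∀ x ∈ B, ∀ y ∈ B, (x ≤ y ↔ ψ x ≤ ψ y)) ∧
      (∀ x ∈ B, ∀ y ∈ B, ∀ v, ψ x ≤ v → v ≤ ψ y → ∃ z ∈ B, ψ z = v) := by
  classical
  obtain ⟨I, hI, ⟨g⟩⟩ := h
  refine ⟨fun x => if hx : x ∈ B then (g ⟨x, hx⟩ : ℝ) else 0, ?_, ?_⟩
  · intro x hx y hy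
    dsimp only
    rw [dif_pos hx, dif_pos hy]
    constructor
    · intro h'
      exact Subtype.coe_le_coe.2 (g.monotone (Subtype.mk_le_mk.2 h'))
    · intro h'
      exact Subtype.mk_le_mk.1 (g.le_iff_le.1 (Subtype.coe_le_coe.1 h'))
  · intro x hx y hy v h1 h2
    dsimp only at h1 h2 ⊢
    rw [dif_pos hx] at h1
    rw [dif_pos hy] at h2
    have hvI : v ∈ I := hI.out (g ⟨x, hx⟩).2 (g ⟨y, hy⟩).2 ⟨h1, h2⟩
    refine ⟨↑(g.symm ⟨v, hvI⟩), (g.symm ⟨v, hvI⟩).2, ?_⟩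
    rw [dif_pos (g.symm ⟨v, hvI⟩).2]
    have : (⟨↑(g.symm ⟨v, hvI⟩), (g.symm ⟨v, hvI⟩).2⟩ : B) = g.symm ⟨v, hvI⟩ := Subtype.eta _ _
    rw [this, OrderIso.apply_symm_apply]

section Dicho

variable {B R : Set X} {ψ : X → ℝ}
variable (htree : ∀ x : X, IsChain (· ≤ ·) {y : X | y ≤ x})
variable (hB : IsMaxChain (· ≤ ·) B) (hRB : R ⊆ B)
variable (hfin : ∀ a ∈ R, ∀ b ∈ B, a ≤ b → b ∈ R)
variable (hψ1 : ∀ x ∈ B, ∀ y ∈ B, (x ≤ y ↔ ψ x ≤ ψ y))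
variable (hψ2 : ∀ x ∈ B, ∀ y ∈ B, ∀ v, ψ x ≤ v → v ≤ ψ y → ∃ z ∈ B, ψ z = v)

include htree hB hRB hfin hψ1 hψ2

lemma dichotomy {x : X} (hx : x ∈ R) (hD : {w | w < x ∧ w ∉ R}.Nonempty) :
    ((∃ m, (m < x ∧ m ∉ R) ∧ ∀ w, (w < x ∧ w ∉ R) → w ≤ m) ∨
      (∃ m ∈ R, ∀ z ∈ R, m ≤ z)) ∧
    ¬((∃ m, (m < x ∧ m ∉ R) ∧ ∀ w, (w < x ∧ w ∉ R) → w ≤ m) ∧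
      (∃ m ∈ R, ∀ z ∈ R, m ≤ z)) := by
  classical
  set D : Set X := {w | w < x ∧ w ∉ R} with hDdef
  have hDB : ∀ w ∈ D, w ∈ B := fun w hw =>
    mem_branch_of_le htree hB (hRB hx) hw.1.le
  constructor
  · -- at least one
    obtain ⟨d₀, hd₀⟩ := hD
    set D₁ : Set ℝ := ψ '' D with hD₁
    have hD₁ne : D₁.Nonempty := ⟨ψ d₀, d₀, hd₀, rfl⟩
    have hub : ∀ w ∈ D, ψ w ≤ ψ x := fun w hw =>
      (hψ1 w (hDB w hw) x (hRB hx)).1 hw.1.le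
    have hbdd : BddAbove D₁ := ⟨ψ x, by rintro _ ⟨w, hw, rfl⟩; exact hub w hw⟩
    set c : ℝ := sSup D₁ with hc
    have hc1 : ψ d₀ ≤ c := le_csSup hbdd ⟨d₀, hd₀, rfl⟩
    have hc2 : c ≤ ψ x := csSup_le hD₁ne (by rintro _ ⟨w, hw, rfl⟩; exact hub w hw)
    obtain ⟨z, hzB, hzv⟩ := hψ2 d₀ (hDB d₀ hd₀) x (hRB hx) c hc1 hc2
    have hzDR : z ∈ D ∪ R := by
      rw [← branch_decomp htree hB hRB hfin hx]
      exact hzB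
    rcases hzDR with hzD | hzR
    · left
      refine ⟨z, hzD, fun w hw => ?_⟩
      have : ψ w ≤ c := le_csSup hbdd ⟨w, hw, rfl⟩
      rw [← hzv] at this
      exact (hψ1 w (hDB w hw) z (hDB z hzD)).2 this
    · right
      refine ⟨z, hzR, fun z' hz' => ?_⟩
      have hub' : c ≤ ψ z' := by
        apply csSup_le hD₁ne
        rintro _ ⟨w, hw, rfl⟩
        exact (hψ1 w (hDB w hw) z' (hRB hz')).1
          (dset_lt htree hB hRB hfin hx hw z' hz').le
      rw [← hzv] at hub'
      exact (hψ1 z (hRB hzR) z' (hRB hz')).2 hub'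
  · -- not both
    rintro ⟨⟨m, hmD, hmax⟩, ⟨m', hm'R, hmin⟩⟩
    have hmm' : m < m' := dset_lt htree hB hRB hfin hx hmD m' hm'R
    have hle : ψ m ≤ ψ m' := (hψ1 m (hDB m hmD) m' (hRB hm'R)).1 hmm'.le
    have hltψ : ψ m < ψ m' := by
      rcases eq_or_lt_of_le hle with h | h
      · exfalso
        have : m' ≤ m := (hψ1 m' (hRB hm'R) m (hDB m hmD)).2 h.ge
        exact absurd (lt_of_lt_of_le hmm' this) (lt_irrefl m)
      · exact h
    set v : ℝ := (ψ m + ψ m') / 2 with hv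
    obtain ⟨z, hzB, hzv⟩ := hψ2 m (hDB m hmD) m' (hRB hm'R) v (by rw [hv]; linarith)
      (by rw [hv]; linarith)
    have hzDR : z ∈ D ∪ R := by
      rw [← branch_decomp htree hB hRB hfin hx]; exact hzB
    rcases hzDR with hzD | hzR
    · have : ψ z ≤ ψ m := (hψ1 z (hDB z hzD) m (hDB m hmD)).1 (hmax z hzD)
      rw [hzv, hv] at this; linarith
    · have : ψ m' ≤ ψ z := (hψ1 m' (hRB hm'R) z (hRB hzR)).1 (hmin z hzR)
      rw [hzv, hv] at this; linarith

end Dicho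

end BRT



namespace BRT2

variable {X : Type} [PartialOrder X]


noncomputable def Sfam (ρ : X → Ordinal) (hρ : IsRankFunction ρ) (β : Ordinal) :
    Set (Set X) :=
  (hρ.2.2.2 (β + 1) β rfl).choose

lemma Sfam_spec (ρ : X → Ordinal) (hρ : IsRankFunction ρ) (β : Ordinal) :
    (ρ ⁻¹' {β + 1} = ⋃₀ Sfam ρ hρ β) ∧ (∀ R ∈ Sfam ρ hρ β, IsRay R) ∧
      ∀ R ∈ Sfam ρ hρ β, ∀ R' ∈ Sfam ρ hρ β, R ≠ R' →
        ∀ a ∈ R, ∀ b ∈ R', ¬a ≤ b ∧ ¬b ≤ a :=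
  (hρ.2.2.2 (β + 1) β rfl).choose_spec

open Classical in
noncomputable def rayOf (ρ : X → Ordinal) (hρ : IsRankFunction ρ) (x : X) : Set X :=
  if h : ∃ R, (∃ β, ρ x = β + 1 ∧ R ∈ Sfam ρ hρ β) ∧ x ∈ R then h.choose else ∅

lemma succ_inj' {β β' : Ordinal} (h : β + 1 = β' + 1) : β = β' := by
  rwa [Ordinal.add_one_eq_succ, Ordinal.add_one_eq_succ, Order.succ_eq_succ_iff] at h

lemma rayOf_spec (ρ : X → Ordinal) (hρ : IsRankFunction ρ) {x : X} {β : Ordinal}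
    (hx : ρ x = β + 1) : rayOf ρ hρ x ∈ Sfam ρ hρ β ∧ x ∈ rayOf ρ hρ x := by
  have hmem : x ∈ ρ ⁻¹' {β + 1} := by simp [hx]
  rw [(Sfam_spec ρ hρ β).1] at hmem
  obtain ⟨R, hR, hxR⟩ := hmem
  have h : ∃ R, (∃ β, ρ x = β + 1 ∧ R ∈ Sfam ρ hρ β) ∧ x ∈ R := ⟨R, ⟨β, hx, hR⟩, hxR⟩
  rw [rayOf, dif_pos h]
  obtain ⟨⟨β', hβ', hS'⟩, hx'⟩ := h.choose_spec
  have hββ' : β' = β := succ_inj' (hβ'.symm.trans hx)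
  exact ⟨hββ' ▸ hS', hx'⟩

lemma rayOf_unique (ρ : X → Ordinal) (hρ : IsRankFunction ρ) {x : X} {β : Ordinal} {R : Set X}
    (hx : ρ x = β + 1) (hR : R ∈ Sfam ρ hρ β) (hxR : x ∈ R) : R = rayOf ρ hρ x := by
  by_contra hne
  exact ((Sfam_spec ρ hρ β).2.2 R hR (rayOf ρ hρ x) (rayOf_spec ρ hρ hx).1 hne x hxR x
    (rayOf_spec ρ hρ hx).2).1 le_rfl

lemma rayOf_rank (ρ : X → Ordinal) (hρ : IsRankFunction ρ) {x : X} {β : Ordinal}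
    (hx : ρ x = β + 1) : ∀ z ∈ rayOf ρ hρ x, ρ z = β + 1 := by
  intro z hz
  have : z ∈ ⋃₀ Sfam ρ hρ β := ⟨rayOf ρ hρ x, (rayOf_spec ρ hρ hx).1, hz⟩
  rw [← (Sfam_spec ρ hρ β).1] at this
  simpa using this

lemma rayOf_eq_of_mem (ρ : X → Ordinal) (hρ : IsRankFunction ρ) {x z : X} {β : Ordinal}
    (hx : ρ x = β + 1) (hz : z ∈ rayOf ρ hρ x) : rayOf ρ hρ z = rayOf ρ hρ x :=
  (rayOf_unique ρ hρ (rayOf_rank ρ hρ hx z hz) (rayOf_spec ρ hρ hx).1 hz).symm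

def Dset (ρ : X → Ordinal) (hρ : IsRankFunction ρ) (x : X) : Set X :=
  {w | w < x ∧ w ∉ rayOf ρ hρ x}

lemma rank_lt_of_Dset (ρ : X → Ordinal) (hρ : IsRankFunction ρ) {x : X} {β : Ordinal}
    (hx : ρ x = β + 1) : ∀ w ∈ Dset ρ hρ x, ρ w < ρ x := by
  rintro w ⟨hw1, hw2⟩
  have h1 : ρ w ≤ ρ x := hρ.1 hw1.le
  rcases lt_or_eq_of_le h1 with h | h
  · exact h
  · exfalso
    have hwmem : w ∈ ρ ⁻¹' {β + 1} := by simp [h.trans hx]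
    rw [(Sfam_spec ρ hρ β).1] at hwmem
    obtain ⟨R', hR', hwR'⟩ := hwmem
    rcases eq_or_ne R' (rayOf ρ hρ x) with rfl | hne
    · exact hw2 hwR'
    · exact ((Sfam_spec ρ hρ β).2.2 R' hR' (rayOf ρ hρ x) (rayOf_spec ρ hρ hx).1 hne w hwR' x
        (rayOf_spec ρ hρ hx).2).1 hw1.le

lemma rank_lt_of_lt_limit (ρ : X → Ordinal) (hρ : IsRankFunction ρ) {x : X}
    (h0 : ρ x ≠ 0) (hs : ¬∃ β, ρ x = β + 1) : ∀ w, w < x → ρ w < ρ x := by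
  intro w hw
  have hlim : Order.IsSuccLimit (ρ x) := by
    rcases Ordinal.zero_or_succ_or_isSuccLimit (ρ x) with h | ⟨a, ha⟩ | h
    · exact absurd h h0
    · exact absurd ⟨a, by rw [Ordinal.add_one_eq_succ]; exact ha.symm⟩ hs
    · exact h
  have h1 : ρ w ≤ ρ x := hρ.1 hw.le
  rcases lt_or_eq_of_le h1 with h | h
  · exact h
  · exfalso
    have hanti := hρ.2.2.1 (ρ x) (Or.inr hlim)
    exact hanti (by simp [h]) (by simp) (fun hc => absurd (hc ▸ hw) (lt_irrefl x)) hw.le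

open Classical in
noncomputable def ell (ρ : X → Ordinal) (hρ : IsRankFunction ρ) (e : Ordinal → ℝ) : X → ℝ :=
  WellFounded.fix (InvImage.wf ρ Ordinal.lt_wf)
    (fun x rec =>
      if ρ x = 0 then 0
      else if ∃ β, ρ x = β + 1 then
        BRT.Phi (rayOf ρ hρ x)
          (sSup {v | ∃ y, ∃ h' : ρ y < ρ x, y ∈ Dset ρ hρ x ∧ rec y h' = v})
          (e (ρ x + 1)) x
      else sSup {v | ∃ y, ∃ h' : ρ y < ρ x, y < x ∧ rec y h' = v})

open Classical in
lemma ell_eq (ρ : X → Ordinal) (hρ : IsRankFunction ρ) (e : Ordinal → ℝ) (x : X) :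
    ell ρ hρ e x =
      if ρ x = 0 then 0
      else if ∃ β, ρ x = β + 1 then
        BRT.Phi (rayOf ρ hρ x)
          (sSup {v | ∃ y, ∃ _ : ρ y < ρ x, y ∈ Dset ρ hρ x ∧ ell ρ hρ e y = v})
          (e (ρ x + 1)) x
      else sSup {v | ∃ y, ∃ _ : ρ y < ρ x, y < x ∧ ell ρ hρ e y = v} := by
  rw [ell, WellFounded.fix_eq]

open Classical in
lemma ell_zero (ρ : X → Ordinal) (hρ : IsRankFunction ρ) (e : Ordinal → ℝ) {x : X}
    (hx : ρ x = 0) : ell ρ hρ e x = 0 := by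
  rw [ell_eq, if_pos hx]

open Classical in
lemma ell_succ (ρ : X → Ordinal) (hρ : IsRankFunction ρ) (e : Ordinal → ℝ) {x : X} {β : Ordinal}
    (hx : ρ x = β + 1) :
    ell ρ hρ e x = BRT.Phi (rayOf ρ hρ x) (sSup (ell ρ hρ e '' Dset ρ hρ x))
      (e (ρ x + 1)) x := by
  have h0 : ρ x ≠ 0 := by
    rw [hx, Ordinal.add_one_eq_succ]
    exact (Order.succ_ne_bot β)
  have hset : {v | ∃ y, ∃ _ : ρ y < ρ x, y ∈ Dset ρ hρ x ∧ ell ρ hρ e y = v}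
      = ell ρ hρ e '' Dset ρ hρ x := by
    ext v
    constructor
    · rintro ⟨y, h', hyD, hv⟩
      exact ⟨y, hyD, hv⟩
    · rintro ⟨y, hyD, hv⟩
      exact ⟨y, rank_lt_of_Dset ρ hρ hx y hyD, hyD, hv⟩
  rw [ell_eq, if_neg h0, if_pos ⟨β, hx⟩, hset]

open Classical in
lemma ell_limit (ρ : X → Ordinal) (hρ : IsRankFunction ρ) (e : Ordinal → ℝ) {x : X}
    (h0 : ρ x ≠ 0) (hs : ¬∃ β, ρ x = β + 1) :
    ell ρ hρ e x = sSup (ell ρ hρ e '' {y | y < x}) := by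
  have hset : {v | ∃ y, ∃ _ : ρ y < ρ x, y < x ∧ ell ρ hρ e y = v}
      = ell ρ hρ e '' {y | y < x} := by
    ext v
    constructor
    · rintro ⟨y, h', hy, hv⟩
      exact ⟨y, hy, hv⟩
    · rintro ⟨y, hy, hv⟩
      exact ⟨y, rank_lt_of_lt_limit ρ hρ h0 hs y hy, hy, hv⟩
  rw [ell_eq, if_neg h0, if_neg hs, hset]

end BRT2

/-- If a branchwise-real tree admits a bounded rank function into `ω₁`
(one whose values are all at most some `δ < ω₁`), then it is continuously gradable. -/
theorem stmt_5 (X : Type) [PartialOrder X] (hX : IsBranchwiseReal X)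
    (ρ : X → Ordinal) (hρ : IsRankFunction ρ)
    (hω₁ : ∀ x : X, ρ x < (Cardinal.aleph 1).ord)
    (δ : Ordinal) (hδ : δ < (Cardinal.aleph 1).ord) (hbdd : ∀ x : X, ρ x ≤ δ) :
    ContinuouslyGradable X := by
  classical
  obtain ⟨⟨⟨r, hr⟩, htree⟩, hbr, _hmeet⟩ := hX
  obtain ⟨e, he, hepos⟩ := BRT.exists_e δ hδ
  have he' : ∀ α β : Ordinal, α ≤ β → β ≤ δ + 1 → e α ≤ e β := by
    intro α β h1 h2
    rcases eq_or_lt_of_le h1 with rfl | h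
    · exact le_rfl
    · exact (he α β h h2).le
  have hδ1 : ∀ x : X, ρ x + 1 ≤ δ + 1 := fun x => add_le_add_left (hbdd x) 1
  have hlt1 : ∀ o : Ordinal, o < o + 1 := fun o => by
    rw [Ordinal.add_one_eq_succ]; exact Order.lt_succ o
  -- the root has rank 0
  have hr0 : ρ r = 0 := by
    obtain ⟨B, hB, hrB⟩ := (Set.subsingleton_singleton (a := r)).isChain.exists_maxChain
    have hrB' : r ∈ B := hrB rfl
    have h0 : (0 : Ordinal) ∈ ρ '' B :=
      hρ.2.1 B hB (ρ r) 0 zero_le ⟨r, hrB', rfl⟩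
    obtain ⟨b, hbB, hb0⟩ := h0
    have h1 := hρ.1 (hr b)
    rw [hb0] at h1
    exact le_antisymm h1 zero_le
  have hroot : ∀ x : X, ρ x = 0 → x = r := by
    intro x hx
    by_contra hne
    exact hρ.2.2.1 0 (Or.inl rfl) (by simp [hr0]) (by simp [hx])
      (fun h => hne h.symm) (hr x)
  have hrlt : ∀ x : X, ρ x ≠ 0 → r < x := fun x hx =>
    lt_of_le_of_ne (hr x) (fun h => hx (h ▸ hr0))
  have hsucc_ne : ∀ β : Ordinal, β + 1 ≠ 0 := fun β => by
    rw [Ordinal.add_one_eq_succ]; exact Order.succ_ne_bot β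
  -- context for successor-rank points
  have ctx : ∀ y : X, ∀ β : Ordinal, ρ y = β + 1 →
      ∃ B : Set X, ∃ ψ : X → ℝ, IsMaxChain (· ≤ ·) B ∧ BRT2.rayOf ρ hρ y ⊆ B ∧
        (∀ a ∈ BRT2.rayOf ρ hρ y, ∀ b ∈ B, a ≤ b → b ∈ BRT2.rayOf ρ hρ y) ∧
        (∀ u ∈ B, ∀ v ∈ B, (u ≤ v ↔ ψ u ≤ ψ v)) ∧
        (∀ u ∈ B, ∀ v ∈ B, ∀ w, ψ u ≤ w → w ≤ ψ v → ∃ z ∈ B, ψ z = w) := by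
    intro y β hy
    obtain ⟨B, hB, hsub, hfin⟩ := (BRT2.Sfam_spec ρ hρ β).2.1 _ (BRT2.rayOf_spec ρ hρ hy).1
    obtain ⟨ψ, hψ1, hψ2⟩ := BRT.branch_psi (hbr B hB)
    exact ⟨B, ψ, hB, hsub, hfin, hψ1, hψ2⟩
  -- main induction on rank
  have main : ∀ o : Ordinal, ∀ y : X, ρ y ≤ o →
      (BRT2.ell ρ hρ e y < e (ρ y + 1)) ∧
      (∀ x, x < y → BRT2.ell ρ hρ e x < BRT2.ell ρ hρ e y) ∧
      (∀ x, x < y → ∀ t, BRT2.ell ρ hρ e x ≤ t → t ≤ BRT2.ell ρ hρ e y →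
        ∃ z, x ≤ z ∧ z ≤ y ∧ BRT2.ell ρ hρ e z = t) := by
    intro o
    induction o using Ordinal.induction with
    | _ o IH =>
    intro y hy
    rcases lt_or_eq_of_le hy with hlt | heq
    · exact IH (ρ y) hlt y le_rfl
    have IH' : ∀ w : X, ρ w < ρ y →
        (BRT2.ell ρ hρ e w < e (ρ w + 1)) ∧
        (∀ x, x < w → BRT2.ell ρ hρ e x < BRT2.ell ρ hρ e w) ∧
        (∀ x, x < w → ∀ t, BRT2.ell ρ hρ e x ≤ t → t ≤ BRT2.ell ρ hρ e w →
          ∃ z, x ≤ z ∧ z ≤ w ∧ BRT2.ell ρ hρ e z = t) := by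
      intro w hw
      exact IH (ρ w) (heq ▸ hw) w le_rfl
    clear IH heq hy
    rcases Ordinal.zero_or_succ_or_isSuccLimit (ρ y) with h0 | ⟨β, hβ⟩ | hlim
    · -- rank 0 : y is the root
      have hyr := hroot y h0
      subst hyr
      refine ⟨?_, ?_, ?_⟩
      · rw [BRT2.ell_zero ρ hρ e h0, h0]
        exact hepos _
      · intro x hx
        exact absurd (lt_of_lt_of_le hx (hr x)) (lt_irrefl x)
      · intro x hx
        exact absurd (lt_of_lt_of_le hx (hr x)) (lt_irrefl x)
    · -- successor rank
      have hβ' : ρ y = β + 1 := by rw [← hβ, Ordinal.add_one_eq_succ]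
      obtain ⟨B, ψ, hB, hsub, hfin, hψ1, hψ2⟩ := ctx y β hβ'
      have hyR : y ∈ BRT2.rayOf ρ hρ y := (BRT2.rayOf_spec ρ hρ hβ').2
      have hDrank : ∀ w ∈ BRT2.Dset ρ hρ y, ρ w < ρ y := BRT2.rank_lt_of_Dset ρ hρ hβ'
      have hDne : (BRT2.Dset ρ hρ y).Nonempty := by
        refine ⟨r, hrlt y (by rw [hβ']; exact hsucc_ne β), fun hc => ?_⟩
        have := BRT2.rayOf_rank ρ hρ hβ' r hc
        rw [hr0] at this
        exact hsucc_ne β this.symm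
      have hDbound : ∀ w ∈ BRT2.Dset ρ hρ y, BRT2.ell ρ hρ e w ≤ e (ρ y) := by
        intro w hw
        have h1 := (IH' w (hDrank w hw)).1
        have h2 : e (ρ w + 1) ≤ e (ρ y) := by
          apply he'
          · rw [Ordinal.add_one_eq_succ, hβ', Ordinal.add_one_eq_succ]
            exact Order.succ_le_succ (by
              have := hDrank w hw
              rw [hβ', Ordinal.add_one_eq_succ, Order.lt_succ_iff] at this
              exact this)
          · exact le_trans (hbdd y) (hlt1 δ).le
        exact le_trans h1.le h2
      have hDbdd : BddAbove (BRT2.ell ρ hρ e '' BRT2.Dset ρ hρ y) :=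
        ⟨e (ρ y), by rintro _ ⟨w, hw, rfl⟩; exact hDbound w hw⟩
      have hsle : sSup (BRT2.ell ρ hρ e '' BRT2.Dset ρ hρ y) ≤ e (ρ y) :=
        csSup_le (hDne.image _) (by rintro _ ⟨w, hw, rfl⟩; exact hDbound w hw)
      have hsb : sSup (BRT2.ell ρ hρ e '' BRT2.Dset ρ hρ y) < e (ρ y + 1) :=
        lt_of_le_of_lt hsle (he (ρ y) (ρ y + 1) (hlt1 (ρ y)) (hδ1 y))
      have hchR : IsChain (· ≤ ·) (BRT2.rayOf ρ hρ y) :=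
        fun a ha b hb hne => hB.1 (hsub ha) (hsub hb) hne
      have hRayLike : BRT.RayLike (BRT2.rayOf ρ hρ y) := by
        refine ⟨⟨y, hyR⟩, hchR, ψ, fun a ha b hb => hψ1 a (hsub ha) b (hsub hb), ?_⟩
        intro a ha b hb v h1 h2
        obtain ⟨z, hzB, hzv⟩ := hψ2 a (hsub ha) b (hsub hb) v h1 h2
        exact ⟨z, hfin a ha z hzB ((hψ1 a (hsub ha) z hzB).2 (by rw [hzv]; exact h1)), hzv⟩
      have spec := BRT.Phi_spec hsb hRayLike
      set R := BRT2.rayOf ρ hρ y with hRdef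
      set D := BRT2.Dset ρ hρ y with hDdef
      set s := sSup (BRT2.ell ρ hρ e '' D) with hsdef
      set b := e (ρ y + 1) with hbdef
      have hellR : ∀ z ∈ R, BRT2.ell ρ hρ e z = BRT.Phi R s b z := by
        intro z hz
        have hz' : ρ z = β + 1 := BRT2.rayOf_rank ρ hρ hβ' z hz
        have h1 : BRT2.rayOf ρ hρ z = R := BRT2.rayOf_eq_of_mem ρ hρ hβ' hz
        have h2 : BRT2.Dset ρ hρ z = D := by
          show {w | w < z ∧ w ∉ BRT2.rayOf ρ hρ z} = D
          rw [h1]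
          show {w | w < z ∧ w ∉ R} = {w | w < y ∧ w ∉ R}
          exact BRT.dset_indep htree hB hsub hfin hz hyR
        rw [BRT2.ell_succ ρ hρ e hz', h1, h2, hz', ← hβ']
      have hdich := BRT.dichotomy htree hB hsub hfin hψ1 hψ2 hyR hDne
      refine ⟨?_, ?_, ?_⟩
      · rw [hellR y hyR]
        exact spec.2.1 y hyR
      · -- strict monotonicity at y
        intro x hx
        by_cases hxR : x ∈ R
        · rw [hellR x hxR, hellR y hyR]
          exact spec.1 x hxR y hyR hx
        · have hxD : x ∈ D := ⟨hx, hxR⟩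
          have hxs : BRT2.ell ρ hρ e x ≤ s := le_csSup hDbdd ⟨x, hxD, rfl⟩
          have hys : s ≤ BRT.Phi R s b y := (spec.2.2.1 y hyR).1
          by_cases hmax : ∃ m, m ∈ D ∧ ∀ w ∈ D, w ≤ m
          · have hnomin : ¬ ∃ m' ∈ R, ∀ z ∈ R, m' ≤ z := by
              intro hmin
              obtain ⟨m, hmD, hmmax⟩ := hmax
              exact hdich.2 ⟨⟨m, hmD, fun w hw => hmmax w hw⟩, hmin⟩
            have hφys : s < BRT.Phi R s b y := by
              rcases eq_or_lt_of_le hys with h | h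
              · exact absurd ⟨y, hyR, (spec.2.2.1 y hyR).2.1 h.symm⟩ hnomin
              · exact h
            rw [hellR y hyR]
            exact lt_of_le_of_lt hxs hφys
          · push_neg at hmax
            obtain ⟨x', hx'D, hx'⟩ := hmax x hxD
            have hcomp : x < x' := by
              rcases eq_or_ne x' x with rfl | hne
              · exact absurd le_rfl hx'
              rcases htree y hx'D.1.le hx.le hne with h | h
              · exact absurd h hx'
              · exact lt_of_le_of_ne h (Ne.symm hne)
            have h1 : BRT2.ell ρ hρ e x < BRT2.ell ρ hρ e x' :=
              (IH' x' (hDrank x' hx'D)).2.1 x hcomp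
            have h2 : BRT2.ell ρ hρ e x' ≤ s := le_csSup hDbdd ⟨x', hx'D, rfl⟩
            rw [hellR y hyR]
            exact lt_of_lt_of_le h1 (le_trans h2 hys)
      · -- interval surjectivity at y
        intro x hx t ht1 ht2
        rcases eq_or_lt_of_le ht1 with heq | ht1'
        · exact ⟨x, le_rfl, hx.le, heq⟩
        by_cases hxR : x ∈ R
        · have hsx : s ≤ BRT2.ell ρ hρ e x := by
            rw [hellR x hxR]; exact (spec.2.2.1 x hxR).1
          have hst : s < t := lt_of_le_of_lt hsx ht1'
          obtain ⟨z, hzR, hzt, hzy⟩ := spec.2.2.2 y hyR t hst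
            (by rw [← hellR y hyR]; exact ht2)
          have hxz : x ≤ z := by
            rcases eq_or_ne x z with rfl | hne
            · exact le_rfl
            rcases hchR hxR hzR hne with h | h
            · exact h
            · exfalso
              have hzx : z < x := lt_of_le_of_ne h (Ne.symm hne)
              have := spec.1 z hzR x hxR hzx
              rw [hzt, ← hellR x hxR] at this
              exact absurd (lt_trans this ht1') (lt_irrefl t)
          exact ⟨z, hxz, hzy, by rw [hellR z hzR]; exact hzt⟩
        · have hxD : x ∈ D := ⟨hx, hxR⟩
          by_cases hst : s < t
          · obtain ⟨z, hzR, hzt, hzy⟩ := spec.2.2.2 y hyR t hst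
              (by rw [← hellR y hyR]; exact ht2)
            have hxz : x < z := BRT.dset_lt htree hB hsub hfin hyR hxD z hzR
            exact ⟨z, hxz.le, hzy, by rw [hellR z hzR]; exact hzt⟩
          · push_neg at hst
            by_cases hmax : ∃ m, m ∈ D ∧ ∀ w ∈ D, w ≤ m
            · obtain ⟨m, hmD, hmmax⟩ := hmax
              have hsm : s = BRT2.ell ρ hρ e m := by
                apply le_antisymm
                · apply csSup_le (hDne.image _)
                  rintro _ ⟨w, hwD, rfl⟩
                  rcases eq_or_ne w m with rfl | hne
                  · exact le_rfl
                  · exact ((IH' m (hDrank m hmD)).2.1 w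
                      (lt_of_le_of_ne (hmmax w hwD) hne)).le
                · exact le_csSup hDbdd ⟨m, hmD, rfl⟩
              have hxm : x ≤ m := by
                rcases eq_or_ne x m with rfl | hne
                · exact le_rfl
                rcases htree y hmD.1.le hx.le (Ne.symm hne) with h | h
                · exfalso
                  have hmx : m < x := lt_of_le_of_ne h (Ne.symm hne)
                  have := (IH' x (hDrank x hxD)).2.1 m hmx
                  rw [← hsm] at this
                  exact absurd (lt_trans ht1' (lt_of_le_of_lt hst this))
                      (lt_irrefl _)
                · exact h
              rcases eq_or_lt_of_le hst with heqs | hlts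
              · exact ⟨m, hxm, hmD.1.le, by rw [← hsm, ← heqs]⟩
              · have hxm' : x < m := by
                  rcases eq_or_ne x m with rfl | hne
                  · exfalso
                    rw [← hsm] at ht1'
                    exact absurd (lt_trans ht1' hlts) (lt_irrefl _)
                  · exact lt_of_le_of_ne hxm hne
                obtain ⟨z, hz1, hz2, hz3⟩ := (IH' m (hDrank m hmD)).2.2 x hxm' t
                  ht1 (by rw [← hsm]; exact hlts.le)
                exact ⟨z, hz1, le_trans hz2 hmD.1.le, hz3⟩
            · have hmin : ∃ m' ∈ R, ∀ z ∈ R, m' ≤ z := by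
                rcases hdich.1 with h | h
                · exfalso
                  obtain ⟨m, hm1, hm2⟩ := h
                  exact hmax ⟨m, hm1, fun w hw => hm2 w hw⟩
                · exact h
              obtain ⟨m', hm'R, hm'min⟩ := hmin
              have hφm' : BRT2.ell ρ hρ e m' = s := by
                rw [hellR m' hm'R]
                exact (spec.2.2.1 m' hm'R).2.2 hm'min
              rcases eq_or_lt_of_le hst with heqs | hlts
              · exact ⟨m', (BRT.dset_lt htree hB hsub hfin hyR hxD m' hm'R).le,
                  hm'min y hyR, by rw [hφm', ← heqs]⟩
              · obtain ⟨v, hvmem, htv⟩ := exists_lt_of_lt_csSup (hDne.image _) hlts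
                obtain ⟨w, hwD, rfl⟩ := hvmem
                have hxw : x < w := by
                  rcases eq_or_ne x w with rfl | hne
                  · exact absurd (lt_trans ht1' htv) (lt_irrefl _)
                  rcases htree y hwD.1.le hx.le (Ne.symm hne) with h | h
                  · exfalso
                    have hwx : w < x := lt_of_le_of_ne h (Ne.symm hne)
                    have := (IH' x (hDrank x hxD)).2.1 w hwx
                    exact absurd (lt_trans htv (lt_trans this ht1')) (lt_irrefl _)
                  · exact lt_of_le_of_ne h hne
                obtain ⟨z, hz1, hz2, hz3⟩ := (IH' w (hDrank w hwD)).2.2 x hxw t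
                  ht1 htv.le
                exact ⟨z, hz1, le_trans hz2 hwD.1.le, hz3⟩
    · -- limit rank
      have h0 : ρ y ≠ 0 := by simpa using hlim.ne_bot
      have hnsucc : ¬ ∃ β, ρ y = β + 1 := by
        rintro ⟨β, hβ⟩
        rw [hβ, Ordinal.add_one_eq_succ] at hlim
        exact Order.not_isSuccLimit_succ β hlim
      have hrank := BRT2.rank_lt_of_lt_limit ρ hρ h0 hnsucc
      have hell := BRT2.ell_limit ρ hρ e h0 hnsucc
      have hSne : {w : X | w < y}.Nonempty := ⟨r, hrlt y h0⟩
      have hbound : ∀ w, w < y → BRT2.ell ρ hρ e w ≤ e (ρ y) := by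
        intro w hw
        have h1 := (IH' w (hrank w hw)).1
        have h2 : e (ρ w + 1) ≤ e (ρ y) := by
          apply he'
          · rw [Ordinal.add_one_eq_succ]
            exact (hlim.succ_lt (hrank w hw)).le
          · exact le_trans (hbdd y) (hlt1 δ).le
        exact le_trans h1.le h2
      have hSbdd : BddAbove (BRT2.ell ρ hρ e '' {w | w < y}) :=
        ⟨e (ρ y), by rintro _ ⟨w, hw, rfl⟩; exact hbound w hw⟩
      refine ⟨?_, ?_, ?_⟩
      · rw [hell]
        exact lt_of_le_of_lt
          (csSup_le (hSne.image _) (by rintro _ ⟨w, hw, rfl⟩; exact hbound w hw))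
          (he (ρ y) (ρ y + 1) (hlt1 (ρ y)) (hδ1 y))
      · intro x hx
        -- there is a point of rank `ρ x + 1` strictly between `x` and `y`
        have hpairsub : ({x, y} : Set X) ⊆ {z | z ≤ y} := by
          rintro a (rfl | rfl)
          · exact hx.le
          · exact le_rfl
        have hpair : IsChain (· ≤ ·) ({x, y} : Set X) :=
          (htree y).mono hpairsub
        obtain ⟨B', hB', hsubB'⟩ := hpair.exists_maxChain
        have hxB' : x ∈ B' := hsubB' (by simp)
        have hyB' : y ∈ B' := hsubB' (by simp)
        have hsuccle : ρ x + 1 ≤ ρ y := by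
          rw [Ordinal.add_one_eq_succ]
          exact (hlim.succ_lt (hrank x hx)).le
        have hsuccmem : ρ x + 1 ∈ ρ '' B' :=
          hρ.2.1 B' hB' (ρ y) (ρ x + 1) hsuccle ⟨y, hyB', rfl⟩
        obtain ⟨w, hwB', hwρ⟩ := hsuccmem
        have hwne : ρ w ≠ ρ x := by rw [hwρ]; exact (hlt1 (ρ x)).ne'
        have hxw : x < w := by
          have hne : w ≠ x := fun h => hwne (h ▸ rfl)
          rcases hB'.1 hwB' hxB' hne with h | h
          · exfalso
            have := hρ.1 h
            rw [hwρ] at this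
            exact absurd (lt_of_lt_of_le (hlt1 (ρ x)) this) (lt_irrefl _)
          · exact lt_of_le_of_ne h (Ne.symm hne)
        have hwρy : ρ w < ρ y := by
          rw [hwρ, Ordinal.add_one_eq_succ]
          exact hlim.succ_lt (hrank x hx)
        have hwy : w < y := by
          have hne : w ≠ y := fun h => absurd (h ▸ hwρy) (lt_irrefl _)
          rcases hB'.1 hwB' hyB' hne with h | h
          · exact lt_of_le_of_ne h hne
          · exact absurd (lt_of_le_of_lt (hρ.1 h) hwρy) (lt_irrefl _)
        have h1 : BRT2.ell ρ hρ e x < BRT2.ell ρ hρ e w := (IH' w hwρy).2.1 x hxw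
        have h2 : BRT2.ell ρ hρ e w ≤ sSup (BRT2.ell ρ hρ e '' {w | w < y}) :=
          le_csSup hSbdd ⟨w, hwy, rfl⟩
        rw [hell]
        exact lt_of_lt_of_le h1 h2
      · intro x hx t ht1 ht2
        rcases eq_or_lt_of_le ht1 with heq | ht1'
        · exact ⟨x, le_rfl, hx.le, heq⟩
        rcases eq_or_lt_of_le ht2 with heq2 | ht2'
        · exact ⟨y, hx.le, le_rfl, heq2.symm⟩
        rw [hell] at ht2'
        obtain ⟨v, hvmem, htv⟩ := exists_lt_of_lt_csSup (hSne.image _) ht2'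
        obtain ⟨w, hwlt, rfl⟩ := hvmem
        have hxw : x < w := by
          rcases eq_or_ne x w with rfl | hne
          · exact absurd (lt_trans ht1' htv) (lt_irrefl _)
          rcases htree y hwlt.le hx.le (Ne.symm hne) with h | h
          · exfalso
            have hwx : w < x := lt_of_le_of_ne h (Ne.symm hne)
            have := (IH' x (hrank x hx)).2.1 w hwx
            exact absurd (lt_trans htv (lt_trans this ht1')) (lt_irrefl _)
          · exact lt_of_le_of_ne h hne
        obtain ⟨z, hz1, hz2, hz3⟩ := (IH' w (hrank w hwlt)).2.2 x hxw t ht1 htv.le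
        exact ⟨z, hz1, le_trans hz2 hwlt.le, hz3⟩
  -- assemble the continuous grading
  have hsm : StrictMono (BRT2.ell ρ hρ e) :=
    fun a c h => (main (ρ c) c le_rfl).2.1 a h
  have honto : ∀ x y : X, x < y → ∀ t, BRT2.ell ρ hρ e x ≤ t →
      t ≤ BRT2.ell ρ hρ e y → ∃ z, x ≤ z ∧ z ≤ y ∧ BRT2.ell ρ hρ e z = t :=
    fun x y h => (main (ρ y) y le_rfl).2.2 x h
  refine ⟨BRT2.ell ρ hρ e, hsm, ?_⟩
  intro x y hxy
  have hmono := hsm.monotone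
  have hinj : ∀ a c : X, a ≤ y → c ≤ y →
      BRT2.ell ρ hρ e a = BRT2.ell ρ hρ e c → a = c := by
    intro a c ha hc h
    rcases eq_or_ne a c with rfl | hne
    · rfl
    rcases htree y ha hc hne with h' | h'
    · exact absurd h (ne_of_lt (hsm (lt_of_le_of_ne h' hne)))
    · exact absurd h.symm (ne_of_lt (hsm (lt_of_le_of_ne h' (Ne.symm hne))))
  refine ⟨⟨⟨fun z => ⟨BRT2.ell ρ hρ e z, hmono z.2.1, hmono z.2.2⟩,
    fun t => ⟨(honto x y hxy t t.2.1 t.2.2).choose,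
      (honto x y hxy t t.2.1 t.2.2).choose_spec.1,
      (honto x y hxy t t.2.1 t.2.2).choose_spec.2.1⟩, ?_, ?_⟩, ?_⟩, fun z => rfl⟩
  · intro z
    apply Subtype.ext
    exact hinj _ _
      (honto x y hxy _ (hmono z.2.1) (hmono z.2.2)).choose_spec.2.1 z.2.2
      (honto x y hxy _ (hmono z.2.1) (hmono z.2.2)).choose_spec.2.2
  · intro t
    apply Subtype.ext
    exact (honto x y hxy t t.2.1 t.2.2).choose_spec.2.2
  · intro a c
    constructor
    · intro h
      have h' : BRT2.ell ρ hρ e a ≤ BRT2.ell ρ hρ e c := h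
      rcases eq_or_ne (a : X) (c : X) with heq | hne
      · exact le_of_eq (Subtype.ext heq)
      rcases htree y a.2.2 c.2.2 hne with h'' | h''
      · exact Subtype.coe_le_coe.1 h''
      · exfalso
        exact absurd (lt_of_le_of_lt h' (hsm (lt_of_le_of_ne h'' (Ne.symm hne))))
          (lt_irrefl _)
    · intro h
      exact hmono (Subtype.coe_le_coe.2 h)
end

section
/- Let X be a tree order with a rank function ρ, and let x ∈ X be non-terminal with ρ(x) equal to 0 or a limit ordinal. Then every connected component above x has rank ρ(x) + 1. -/
/-- The rank of a component: the minimum rank of its elements. -/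
noncomputable def componentRank {X : Type} [PartialOrder X] (ρ : X → Ordinal) (C : Set X) :
    Ordinal :=
  sInf (ρ '' C)

/-- In a ranked tree order, if `x` is non-terminal and `ρ x` is `0` or a limit,
then every connected component above `x` has rank `ρ x + 1`. -/
theorem stmt_8 (X : Type) [PartialOrder X] (hX : IsTreeOrder X)
    (ρ : X → Ordinal) (hρ : IsRankFunction ρ) (x : X) (hnt : ∃ y : X, x < y)
    (hx : ρ x = 0 ∨ Order.IsSuccLimit (ρ x)) :
    ∀ C ∈ ComponentsAbove x, componentRank ρ C = ρ x + 1 := by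
  rintro C ⟨y, hxy, rfl⟩
  obtain ⟨hmono, hdc, hanti, -⟩ := hρ
  -- every element of C has rank ≥ ρ x + 1
  have hlb : ∀ z ∈ {z : X | ∃ w : X, x < w ∧ w ≤ y ∧ w ≤ z}, ρ x + 1 ≤ ρ z := by
    rintro z ⟨w, hxw, -, hwz⟩
    have hxz : x < z := lt_of_lt_of_le hxw hwz
    have hle : ρ x ≤ ρ z := hmono hxz.le
    rcases eq_or_lt_of_le hle with heq | hlt
    · exact absurd hxz.le (hanti (ρ x) hx rfl (heq.symm ▸ rfl : z ∈ ρ ⁻¹' {ρ x}) hxz.ne)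
    · exact Order.add_one_le_of_lt hlt
  -- find an element of rank exactly ρ x + 1 in C
  have hchain : IsChain (· ≤ ·) ({x, y} : Set X) := by
    rintro a (rfl | rfl) b (rfl | rfl) hab <;> simp [hxy.le]
  obtain ⟨B, hB, hsub⟩ := hchain.exists_maxChain
  have hyB : y ∈ B := hsub (by simp)
  have hxB : x ∈ B := hsub (by simp)
  have hmem : ρ x + 1 ∈ ρ '' B := by
    refine hdc B hB (ρ y) (ρ x + 1) ?_ ⟨y, hyB, rfl⟩
    exact hlb y ⟨y, hxy, le_refl y, le_refl y⟩
  obtain ⟨z, hzB, hz⟩ := hmem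
  have hxz : x < z := by
    rcases hB.1 hxB hzB (fun h => by
      have : ρ z ≤ ρ x := h ▸ le_refl _
      rw [hz] at this
      exact absurd this (by simp [Order.add_one_le_iff])) with h | h
    · refine lt_of_le_of_ne h (fun h' => ?_)
      have : ρ z ≤ ρ x := h' ▸ le_refl _
      rw [hz] at this
      exact absurd this (by simp [Order.add_one_le_iff])
    · exact absurd (hmono h) (by rw [hz]; simp [Order.add_one_le_iff])
  have hzC : z ∈ {z : X | ∃ w : X, x < w ∧ w ≤ y ∧ w ≤ z} := by
    rcases eq_or_ne z y with rfl | hne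
    · exact ⟨z, hxz, le_refl z, le_refl z⟩
    rcases hB.1 hzB hyB hne with h | h
    · exact ⟨z, hxz, h, le_refl z⟩
    · exact ⟨y, hxy, le_refl y, h⟩
  refine le_antisymm (csInf_le' ⟨z, hzC, hz⟩) (le_csInf ⟨ρ z, z, hzC, rfl⟩ ?_)
  rintro b ⟨w, hwC, rfl⟩
  exact hlb w hwC
end

section
/- Let X be a tree order with a rank function ρ, and let x ∈ X be non-terminal with ρ(x) a successor ordinal. Then there is exactly one connected component above x of rank ρ(x), and every other connected component above x has rank ρ(x) + 1. -/
section Aux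
variable {X : Type} [PartialOrder X]

private lemma sim_trans (hX : IsTreeOrder X) {x a b c : X}
    (h1 : ∃ w, x < w ∧ w ≤ a ∧ w ≤ b) (h2 : ∃ w, x < w ∧ w ≤ b ∧ w ≤ c) :
    ∃ w, x < w ∧ w ≤ a ∧ w ≤ c := by
  obtain ⟨w, hw, hwa, hwb⟩ := h1
  obtain ⟨v, hv, hvb, hvc⟩ := h2
  rcases eq_or_ne w v with rfl | hne
  · exact ⟨w, hw, hwa, hvc⟩
  · rcases hX.2 b hwb hvb hne with h | h
    · exact ⟨w, hw, hwa, le_trans h hvc⟩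
    · exact ⟨v, hv, le_trans h hwa, hvc⟩

private lemma class_eq (hX : IsTreeOrder X) {x a b : X}
    (hab : ∃ w, x < w ∧ w ≤ a ∧ w ≤ b) :
    {z : X | ∃ w, x < w ∧ w ≤ a ∧ w ≤ z} = {z : X | ∃ w, x < w ∧ w ≤ b ∧ w ≤ z} := by
  have hba : ∃ w, x < w ∧ w ≤ b ∧ w ≤ a := by
    obtain ⟨w, h1, h2, h3⟩ := hab; exact ⟨w, h1, h3, h2⟩
  ext z
  exact ⟨fun hz => sim_trans hX hba hz, fun hz => sim_trans hX hab hz⟩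

end Aux

/-- In a ranked tree order, if `x` is non-terminal and `ρ x` is a successor, then
exactly one connected component above `x` has rank `ρ x`, and every other
connected component above `x` has rank `ρ x + 1`. -/
theorem stmt_9 (X : Type) [PartialOrder X] (hX : IsTreeOrder X)
    (ρ : X → Ordinal) (hρ : IsRankFunction ρ) (x : X) (hnt : ∃ y : X, x < y)
    (hx : ∃ β : Ordinal, ρ x = β + 1) :
    (∃! C : Set X, C ∈ ComponentsAbove x ∧ componentRank ρ C = ρ x) ∧
      ∀ C ∈ ComponentsAbove x, componentRank ρ C ≠ ρ x → componentRank ρ C = ρ x + 1 := by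
  obtain ⟨β, hβ⟩ := hx
  obtain ⟨hmono, hdc, _hanti, hsucc⟩ := hρ
  -- every component is nonempty and consists of elements above x
  have hmemgt : ∀ y z : X, z ∈ {z : X | ∃ w : X, x < w ∧ w ≤ y ∧ w ≤ z} → x < z := by
    rintro y z ⟨w, hw, _, hwz⟩; exact lt_of_lt_of_le hw hwz
  have hself : ∀ y : X, x < y → y ∈ {z : X | ∃ w : X, x < w ∧ w ≤ y ∧ w ≤ z} := by
    intro y hy; exact ⟨y, hy, le_refl y, le_refl y⟩
  -- the ray containing x
  obtain ⟨𝒮, h𝒮eq, h𝒮ray, h𝒮inc⟩ := hsucc (ρ x) β hβ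
  have hxfib : x ∈ ρ ⁻¹' {ρ x} := rfl
  rw [h𝒮eq] at hxfib
  obtain ⟨R, hR𝒮, hxR⟩ := hxfib
  obtain ⟨B, hB, hRB, hRfinal⟩ := h𝒮ray R hR𝒮
  have hxB : x ∈ B := hRB hxR
  -- B contains some b > x
  obtain ⟨y0, hy0⟩ := hnt
  have hbex : ∃ b ∈ B, x < b := by
    by_contra h
    push_neg at h
    have hle : ∀ b ∈ B, b ≤ x := by
      intro b hb
      rcases eq_or_ne b x with rfl | hne
      · exact le_refl b
      · rcases hB.1 hb hxB hne with h' | h'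
        · exact h'
        · exact absurd (lt_of_le_of_ne h' (Ne.symm hne)) (h b hb)
    have hch : IsChain (· ≤ ·) (insert y0 B) := by
      apply hB.1.insert
      intro b hb _
      exact Or.inr (le_trans (hle b hb) (le_of_lt hy0))
    have heq := hB.2 hch (Set.subset_insert _ _)
    have hy0B : y0 ∈ B := heq ▸ Set.mem_insert _ _
    exact absurd hy0 (not_lt_of_ge (hle y0 hy0B))
  obtain ⟨b, hbB, hxb⟩ := hbex
  have hbR : b ∈ R := hRfinal x hxR b hbB (le_of_lt hxb)
  have hρR : ∀ a ∈ R, ρ a = ρ x := by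
    intro a ha
    have : a ∈ ρ ⁻¹' {ρ x} := h𝒮eq ▸ ⟨R, hR𝒮, ha⟩
    exact this
  have hρb : ρ b = ρ x := hρR b hbR
  -- the distinguished component
  set C₀ : Set X := {z : X | ∃ w : X, x < w ∧ w ≤ b ∧ w ≤ z} with hC₀def
  have hC₀mem : C₀ ∈ ComponentsAbove x := ⟨b, hxb, rfl⟩
  have hbC₀ : b ∈ C₀ := hself b hxb
  -- rank lower bound for any component
  have hrank_ge : ∀ y : X, x < y →
      ρ x ≤ componentRank ρ {z : X | ∃ w : X, x < w ∧ w ≤ y ∧ w ≤ z} := by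
    intro y hy
    apply le_csInf ⟨ρ y, Set.mem_image_of_mem ρ (hself y hy)⟩
    rintro o ⟨z, hz, rfl⟩
    exact hmono (le_of_lt (hmemgt y z hz))
  have hC₀rank : componentRank ρ C₀ = ρ x := by
    apply le_antisymm
    · exact csInf_le' ⟨b, hbC₀, hρb⟩
    · exact hrank_ge b hxb
  -- uniqueness: any component of rank ρ x equals C₀
  have huniq : ∀ C ∈ ComponentsAbove x, componentRank ρ C = ρ x → C = C₀ := by
    rintro C ⟨y, hy, rfl⟩ hrank
    have hne : (ρ '' {z : X | ∃ w : X, x < w ∧ w ≤ y ∧ w ≤ z}).Nonempty :=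
      ⟨ρ y, y, hself y hy, rfl⟩
    have hmem := csInf_mem hne
    rw [show sInf (ρ '' {z : X | ∃ w : X, x < w ∧ w ≤ y ∧ w ≤ z}) =
        componentRank ρ {z : X | ∃ w : X, x < w ∧ w ≤ y ∧ w ≤ z} from rfl, hrank] at hmem
    obtain ⟨b', hb'C, hb'ρ⟩ := hmem
    have hxb' : x < b' := hmemgt y b' hb'C
    -- b' lies in the same ray R
    have hb'fib : b' ∈ ⋃₀ 𝒮 := h𝒮eq ▸ (hb'ρ : ρ b' = ρ x)
    obtain ⟨R', hR'𝒮, hb'R'⟩ := hb'fib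
    have hRR' : R = R' := by
      by_contra hne'
      exact (h𝒮inc R hR𝒮 R' hR'𝒮 hne' x hxR b' hb'R').1 (le_of_lt hxb')
    have hb'R : b' ∈ R := hRR' ▸ hb'R'
    -- b and b' comparable
    have hcomp : b ≤ b' ∨ b' ≤ b := by
      rcases eq_or_ne b b' with rfl | hne'
      · exact Or.inl (le_refl b)
      · exact hB.1 (hRB hbR) (hRB hb'R) hne'
    have hsim : ∃ w, x < w ∧ w ≤ b' ∧ w ≤ b := by
      rcases hcomp with h | h
      · exact ⟨b, hxb, h, le_refl b⟩
      · exact ⟨b', hxb', le_refl b', h⟩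
    obtain ⟨w0, hw0, hw0y, hw0b'⟩ := hb'C
    have h1 : {z : X | ∃ w : X, x < w ∧ w ≤ y ∧ w ≤ z} =
        {z : X | ∃ w : X, x < w ∧ w ≤ b' ∧ w ≤ z} :=
      class_eq hX ⟨w0, hw0, hw0y, hw0b'⟩
    have h2 : {z : X | ∃ w : X, x < w ∧ w ≤ b' ∧ w ≤ z} = C₀ :=
      class_eq hX hsim
    rw [h1, h2]
  constructor
  · exact ⟨C₀, ⟨hC₀mem, hC₀rank⟩, fun C hC => huniq C hC.1 hC.2⟩
  · rintro C ⟨y, hy, rfl⟩ hrank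
    have hge := hrank_ge y hy
    have hgt : ρ x < componentRank ρ {z : X | ∃ w : X, x < w ∧ w ≤ y ∧ w ≤ z} :=
      lt_of_le_of_ne hge (Ne.symm hrank)
    have hgt' : ∀ z ∈ {z : X | ∃ w : X, x < w ∧ w ≤ y ∧ w ≤ z}, ρ x + 1 ≤ ρ z := by
      intro z hz
      exact Order.add_one_le_of_lt (lt_of_lt_of_le hgt (csInf_le' ⟨z, hz, rfl⟩))
    -- find an element of rank ρ x + 1 using downward closure on a branch through x and y
    have hchxy : IsChain (· ≤ ·) ({x, y} : Set X) := by
      intro a ha c hc hne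
      rcases ha with rfl | ha <;> rcases hc with rfl | hc
      · exact absurd rfl hne
      · rw [Set.mem_singleton_iff] at hc; subst hc; exact Or.inl (le_of_lt hy)
      · rw [Set.mem_singleton_iff] at ha; subst ha; exact Or.inr (le_of_lt hy)
      · rw [Set.mem_singleton_iff] at ha hc; subst ha; subst hc; exact absurd rfl hne
    obtain ⟨B', hB', hsub⟩ := hchxy.exists_maxChain
    have hxB' : x ∈ B' := hsub (Set.mem_insert _ _)
    have hyB' : y ∈ B' := hsub (Set.mem_insert_of_mem _ rfl)
    have hyC : y ∈ {z : X | ∃ w : X, x < w ∧ w ≤ y ∧ w ≤ z} := hself y hy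
    have hle1 : ρ x + 1 ≤ ρ y := hgt' y hyC
    obtain ⟨w, hwB', hwρ⟩ := hdc B' hB' (ρ y) (ρ x + 1) hle1 ⟨y, hyB', rfl⟩
    have hlt1 : ρ x < ρ x + 1 := by
      rw [Ordinal.add_one_eq_succ]; exact Order.lt_succ _
    have hxw : x < w := by
      have hwnex : w ≠ x := by
        intro h; rw [h] at hwρ
        exact absurd hwρ (ne_of_lt hlt1)
      rcases hB'.1 hwB' hxB' hwnex with h | h
      · exact absurd (hmono h) (not_le_of_gt (hwρ ▸ hlt1))
      · exact lt_of_le_of_ne h (Ne.symm hwnex)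
    have hwy : w ≤ y ∨ y ≤ w := by
      rcases eq_or_ne w y with rfl | hne'
      · exact Or.inl (le_refl w)
      · exact hB'.1 hwB' hyB' hne'
    have hmem1 : ρ x + 1 ∈ ρ '' {z : X | ∃ w : X, x < w ∧ w ≤ y ∧ w ≤ z} := by
      rcases hwy with h | h
      · exact ⟨w, ⟨w, hxw, h, le_refl w⟩, hwρ⟩
      · have : ρ y = ρ x + 1 := le_antisymm (hwρ ▸ hmono h) hle1
        exact ⟨y, hyC, this⟩
    exact le_antisymm (csInf_le' hmem1) (le_csInf ⟨ρ x + 1, hmem1⟩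
      (by rintro o ⟨z, hz, rfl⟩; exact hgt' z hz))
end

section
/- Let X be a tree order with a rank function ρ, let f : X → X be an order-automorphism, let x ∈ X, and suppose f maps the connected component C above x onto the connected component f(C) above f(x). Then there is a coinitial interval I ⊆ C on which ρ is constantly equal to the rank ρ(C), such that f(I) is a coinitial interval of f(C) on which ρ is constantly equal to the rank ρ(f(C)). -/
/-- If an order-automorphism `f` of a ranked tree order maps the component `C` above `x`
onto the component `f '' C` above `f x`, then there is a coinitial interval `I ⊆ C` of
constant rank `componentRank ρ C` whose image `f '' I` is a coinitial interval of
`f '' C` of constant rank `componentRank ρ (f '' C)`. -/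
theorem stmt_11 (X : Type) [PartialOrder X] (hX : IsTreeOrder X)
    (ρ : X → Ordinal) (hρ : IsRankFunction ρ) (f : X ≃o X) (x : X)
    (C : Set X) (hC : C ∈ ComponentsAbove x) (hfC : f '' C ∈ ComponentsAbove (f x)) :
    ∃ I : Set X, I ⊆ C ∧
      (∀ a ∈ I, ∀ b ∈ I, Set.Icc a b ⊆ I) ∧
      (∀ c ∈ C, ∃ i ∈ I, i ≤ c) ∧
      (∀ i ∈ I, ρ i = componentRank ρ C) ∧
      (∀ a ∈ f '' I, ∀ b ∈ f '' I, Set.Icc a b ⊆ f '' I) ∧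
      (∀ c ∈ f '' C, ∃ j ∈ f '' I, j ≤ c) ∧
      (∀ j ∈ f '' I, ρ j = componentRank ρ (f '' C)) := by
  obtain ⟨y, hxy, hCdef⟩ := hC
  have hyC : y ∈ C := by rw [hCdef]; exact ⟨y, hxy, le_refl y, le_refl y⟩
  have hup : ∀ c ∈ C, ∀ z : X, c ≤ z → z ∈ C := by
    intro c hc z hcz
    rw [hCdef] at hc ⊢
    obtain ⟨w, h1, h2, h3⟩ := hc
    exact ⟨w, h1, h2, h3.trans hcz⟩
  have hdir : ∀ c₁ ∈ C, ∀ c₂ ∈ C, ∃ w ∈ C, w ≤ c₁ ∧ w ≤ c₂ := by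
    intro c₁ hc₁ c₂ hc₂
    rw [hCdef] at hc₁ hc₂
    obtain ⟨w₁, hw₁x, hw₁y, hw₁c⟩ := hc₁
    obtain ⟨w₂, hw₂x, hw₂y, hw₂c⟩ := hc₂
    have hw₁C : w₁ ∈ C := by rw [hCdef]; exact ⟨w₁, hw₁x, hw₁y, le_refl _⟩
    have hw₂C : w₂ ∈ C := by rw [hCdef]; exact ⟨w₂, hw₂x, hw₂y, le_refl _⟩
    rcases eq_or_ne w₁ w₂ with rfl | hne
    · exact ⟨w₁, hw₁C, hw₁c, hw₂c⟩
    rcases hX.2 y hw₁y hw₂y hne with h | h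
    · exact ⟨w₁, hw₁C, hw₁c, h.trans hw₂c⟩
    · exact ⟨w₂, hw₂C, h.trans hw₁c, hw₂c⟩
  set α := componentRank ρ C with hα
  set β := componentRank ρ (f '' C) with hβ
  have hmono := hρ.1
  have hαle : ∀ c ∈ C, α ≤ ρ c := fun c hc => csInf_le' ⟨c, hc, rfl⟩
  have hβle : ∀ c ∈ C, β ≤ ρ (f c) := fun c hc => csInf_le' ⟨f c, ⟨c, hc, rfl⟩, rfl⟩
  have hαmem : ∃ e ∈ C, ρ e = α := csInf_mem (s := ρ '' C) ⟨ρ y, y, hyC, rfl⟩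
  have hβmem : ∃ e ∈ C, ρ (f e) = β := by
    obtain ⟨u, ⟨e, heC, rfl⟩, hu⟩ := csInf_mem (s := ρ '' (f '' C)) ⟨ρ (f y), f y, ⟨y, hyC, rfl⟩, rfl⟩
    exact ⟨e, heC, hu⟩
  obtain ⟨e₁, he₁C, he₁⟩ := hαmem
  obtain ⟨e₂, he₂C, he₂⟩ := hβmem
  refine ⟨{c | c ∈ C ∧ ρ c = α ∧ ρ (f c) = β}, fun c hc => hc.1, ?_, ?_, fun i hi => hi.2.1, ?_, ?_, ?_⟩
  · -- interval
    rintro a ⟨haC, haα, haβ⟩ b ⟨hbC, hbα, hbβ⟩ z ⟨haz, hzb⟩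
    have hzC : z ∈ C := hup a haC z haz
    refine ⟨hzC, le_antisymm ?_ (hαle z hzC), le_antisymm ?_ (hβle z hzC)⟩
    · rw [← hbα]; exact hmono hzb
    · rw [← hbβ]; exact hmono (f.le_iff_le.mpr hzb)
  · -- coinitial
    intro c hc
    obtain ⟨w₀, hw₀C, hw₀e₁, hw₀e₂⟩ := hdir e₁ he₁C e₂ he₂C
    obtain ⟨w, hwC, hww₀, hwc⟩ := hdir w₀ hw₀C c hc
    refine ⟨w, ⟨hwC, le_antisymm ?_ (hαle w hwC), le_antisymm ?_ (hβle w hwC)⟩, hwc⟩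
    · rw [← he₁]; exact hmono (hww₀.trans hw₀e₁)
    · rw [← he₂]; exact hmono (f.le_iff_le.mpr (hww₀.trans hw₀e₂))
  · -- image interval
    rintro a ⟨a₀, ⟨ha₀C, ha₀α, ha₀β⟩, rfl⟩ b ⟨b₀, ⟨hb₀C, hb₀α, hb₀β⟩, rfl⟩ z ⟨haz, hzb⟩
    set z₀ := f.symm z with hz₀
    have hfz₀ : f z₀ = z := f.apply_symm_apply z
    have ha₀z₀ : a₀ ≤ z₀ := f.le_iff_le.mp (by rw [hfz₀]; exact haz)
    have hz₀b₀ : z₀ ≤ b₀ := f.le_iff_le.mp (by rw [hfz₀]; exact hzb)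
    have hz₀C : z₀ ∈ C := hup a₀ ha₀C z₀ ha₀z₀
    refine ⟨z₀, ⟨hz₀C, le_antisymm ?_ (hαle z₀ hz₀C), le_antisymm ?_ (hβle z₀ hz₀C)⟩, hfz₀⟩
    · rw [← hb₀α]; exact hmono hz₀b₀
    · rw [← hb₀β]; exact hmono (f.le_iff_le.mpr hz₀b₀)
  · -- image coinitial
    rintro c ⟨c₀, hc₀C, rfl⟩
    obtain ⟨w₀, hw₀C, hw₀e₁, hw₀e₂⟩ := hdir e₁ he₁C e₂ he₂C
    obtain ⟨w, hwC, hww₀, hwc⟩ := hdir w₀ hw₀C c₀ hc₀C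
    refine ⟨f w, ⟨w, ⟨hwC, le_antisymm ?_ (hαle w hwC), le_antisymm ?_ (hβle w hwC)⟩, rfl⟩,
      f.le_iff_le.mpr hwc⟩
    · rw [← he₁]; exact hmono (hww₀.trans hw₀e₁)
    · rw [← he₂]; exact hmono (f.le_iff_le.mpr (hww₀.trans hw₀e₂))
  · rintro j ⟨i, hi, rfl⟩
    exact hi.2.2
end

section
/- Let X be a tree order with a rank function ρ, let x ∈ X be non-terminal, and let C be a connected component above x. Then the rank ρ(C) = min{ρ(y) : y ∈ C} is a successor ordinal. -/
private lemma ord_lt_add_one (a : Ordinal) : a < a + 1 := by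
  rw [Ordinal.add_one_eq_succ]; exact Order.lt_succ a

/-- In a ranked tree order, the rank of any connected component above a
non-terminal point is a successor ordinal. -/
theorem stmt_12 (X : Type) [PartialOrder X] (hX : IsTreeOrder X)
    (ρ : X → Ordinal) (hρ : IsRankFunction ρ) (x : X) (hnt : ∃ y : X, x < y)
    (C : Set X) (hC : C ∈ ComponentsAbove x) :
    ∃ β : Ordinal, componentRank ρ C = β + 1 := by
  obtain ⟨y, hxy, hCdef⟩ := hC
  obtain ⟨hmono, hdown, hanti, _⟩ := hρ
  have hyC : y ∈ C := by
    rw [hCdef]; exact ⟨y, hxy, le_refl y, le_refl y⟩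
  have hne : (ρ '' C).Nonempty := ⟨ρ y, y, hyC, rfl⟩
  set α := componentRank ρ C with hα
  have hmem : α ∈ ρ '' C := csInf_mem hne
  obtain ⟨z₀, hz₀C, hz₀⟩ := hmem
  obtain ⟨w, hxw, hwy, hwz⟩ := hCdef ▸ hz₀C
  have hxz : x < z₀ := lt_of_lt_of_le hxw hwz
  rcases Ordinal.zero_or_succ_or_isSuccLimit α with h0 | hs | hlim
  · exfalso
    have hρx : ρ x = α := by
      have := hmono hxz.le
      rw [hz₀, h0] at this
      rw [h0]
      exact nonpos_iff_eq_zero.mp this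
    exact hanti α (Or.inl h0) hρx hz₀ hxz.ne hxz.le
  · obtain ⟨β, hβ⟩ := hs; exact ⟨β, by rw [← hβ, Order.succ_eq_add_one]⟩
  · exfalso
    by_cases hxα : ρ x = α
    · exact hanti α (Or.inr hlim) hxα hz₀ hxz.ne hxz.le
    · have hlt : ρ x < α := lt_of_le_of_ne (hz₀ ▸ hmono hxz.le) hxα
      have hβlt : ρ x + 1 < α := hlim.succ_lt hlt
      have hch : IsChain (· ≤ ·) {x, z₀} := by
        intro a ha b hb hab
        rcases ha with rfl | ha <;> rcases hb with rfl | hb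
        · exact absurd rfl hab
        · rw [Set.mem_singleton_iff] at hb; subst hb; exact Or.inl hxz.le
        · rw [Set.mem_singleton_iff] at ha; subst ha; exact Or.inr hxz.le
        · rw [Set.mem_singleton_iff] at ha hb; subst ha; subst hb; exact Or.inl le_rfl
      obtain ⟨B, hB, hsub⟩ := hch.exists_maxChain
      have hxB : x ∈ B := hsub (by simp)
      have hzB : z₀ ∈ B := hsub (by simp)
      obtain ⟨b, hbB, hbρ⟩ := hdown B hB α (ρ x + 1) hβlt.le ⟨z₀, hzB, hz₀⟩
      have hbx_ne : b ≠ x := by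
        intro h; rw [h] at hbρ; exact (ord_lt_add_one (ρ x)).ne hbρ
      have hxb : x < b := by
        rcases hB.1 hxB hbB (Ne.symm hbx_ne) with h | h
        · exact lt_of_le_of_ne h (fun e => hbx_ne e.symm)
        · have := hmono h
          rw [hbρ] at this
          exact absurd this (not_le.mpr (ord_lt_add_one (ρ x)))
      have hbz : b ≤ z₀ := by
        have hbz_ne : b ≠ z₀ := by
          intro h; rw [h, hz₀] at hbρ; exact hβlt.ne hbρ.symm
        rcases hB.1 hbB hzB hbz_ne with h | h
        · exact h
        · have := hmono h
          rw [hbρ, hz₀] at this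
          exact absurd this (not_le.mpr hβlt)
      have hbC : b ∈ C := by
        rw [hCdef]
        by_cases hwb : w ≤ b
        · exact ⟨w, hxw, hwy, hwb⟩
        · rcases hX.2 z₀ (Set.mem_setOf.mpr hwz) (Set.mem_setOf.mpr hbz)
              (fun e => hwb (le_of_eq e)) with h | h
          · exact absurd h hwb
          · exact ⟨b, hxb, h.trans hwy, le_refl b⟩
      have : α ≤ ρ b := csInf_le (OrderBot.bddBelow _) ⟨b, hbC, rfl⟩
      rw [hbρ] at this
      exact absurd this (not_le.mpr hβlt)
end

section
/- There exists a family (S_A)_{A ⊆ ω} of subsets of (0,∞), indexed by the subsets of ω, such that each S_A is dense in (0,∞) and for any two distinct A, B ⊆ ω the linear orders S_A and S_B (with the order inherited from ℝ) are not order-isomorphic. -/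
noncomputable def ee (n : ℕ) : ℝ := 3 * n + Real.sqrt 2

def SS (A : Set ℕ) : Set ℝ :=
  {x | (0 < x ∧ ∃ q : ℚ, (q : ℝ) = x) ∨
       (∃ n, x ∈ Set.Ioo (ee n) (ee n + 1/2) ∧ Irrational x) ∨
       (∃ n, x = ee n) ∨
       (∃ n ∈ A, x = ee n + 1/2)}

lemma sqrt2_gt : (1:ℝ) < Real.sqrt 2 := by
  nlinarith [Real.sq_sqrt (show (0:ℝ) ≤ 2 by norm_num), Real.sqrt_nonneg 2]

lemma ee_pos (n : ℕ) : 0 < ee n := by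
  unfold ee
  have h := sqrt2_gt
  positivity

lemma ee_add3 {m n : ℕ} (h : m < n) : ee m + 3 ≤ ee n := by
  unfold ee
  have : (m : ℝ) + 1 ≤ n := by exact_mod_cast h
  linarith

lemma ee_strict : StrictMono ee := fun m n h => by have := ee_add3 h; linarith

lemma irr_ee_half (n : ℕ) : Irrational (ee n + 1/2) := by
  have h : ee n + 1/2 = ((3 * n + 1/2 : ℚ) : ℝ) + Real.sqrt 2 := by
    unfold ee; push_cast; ring
  rw [h]
  exact irrational_sqrt_two.ratCast_add _

lemma mem_SS_rat (A : Set ℕ) {x : ℝ} (hx : 0 < x) (q : ℚ) (hq : (q:ℝ) = x) : x ∈ SS A :=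
  Or.inl ⟨hx, q, hq⟩

lemma mem_SS_ee (A : Set ℕ) (n : ℕ) : ee n ∈ SS A := Or.inr (Or.inr (Or.inl ⟨n, rfl⟩))

lemma mem_SS_half {A : Set ℕ} {n : ℕ} (h : n ∈ A) : ee n + 1/2 ∈ SS A :=
  Or.inr (Or.inr (Or.inr ⟨n, h, rfl⟩))

lemma SS_pos {A : Set ℕ} {x : ℝ} (h : x ∈ SS A) : 0 < x := by
  rcases h with ⟨h, _⟩ | ⟨n, ⟨h1, _⟩, _⟩ | ⟨n, rfl⟩ | ⟨n, _, rfl⟩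
  · exact h
  · exact (ee_pos n).trans h1
  · exact ee_pos n
  · have := ee_pos n; linarith

lemma uncount_blk {l r : ℝ} (h : l < r) :
    ¬ (Set.Ioo l r ∩ {x | Irrational x}).Countable := by
  intro hc
  have h1 : (Set.Ioo l r).Countable := by
    refine (hc.union (Set.countable_range ((↑) : ℚ → ℝ))).mono ?_
    intro x hx
    by_cases hh : Irrational x
    · exact Or.inl ⟨hx, hh⟩
    · right; simpa [Irrational] using hh
  rw [← Cardinal.le_aleph0_iff_set_countable, Cardinal.mk_Ioo_real h] at h1
  exact absurd (h1.trans_lt Cardinal.aleph0_lt_continuum) (lt_irrefl _)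

lemma key_count (A : Set ℕ) {u v : ℝ} (h : ∀ m, ¬(ee m < v ∧ u < ee m + 1/2)) :
    (SS A ∩ Set.Ioo u v).Countable := by
  have hsub : SS A ∩ Set.Ioo u v ⊆
      (Set.range ((↑) : ℚ → ℝ) ∪ Set.range ee) ∪ Set.range (fun n => ee n + 1/2) := by
    rintro x ⟨hS, hu, hv⟩
    rcases hS with ⟨_, q, hq⟩ | ⟨n, ⟨h1, h2⟩, _⟩ | ⟨n, rfl⟩ | ⟨n, _, rfl⟩
    · exact Or.inl (Or.inl ⟨q, hq⟩)
    · exact (h n ⟨h1.trans hv, hu.trans h2⟩).elim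
    · exact Or.inl (Or.inr ⟨n, rfl⟩)
    · exact Or.inr ⟨n, rfl⟩
  exact (((Set.countable_range _).union (Set.countable_range _)).union
    (Set.countable_range _)).mono hsub

lemma key_uncount (A : Set ℕ) {u v : ℝ} (m : ℕ) (huv : u < v) (h1 : ee m < v)
    (h2 : u < ee m + 1/2) : ¬ (SS A ∩ Set.Ioo u v).Countable := by
  intro hc
  have hlt : max u (ee m) < min v (ee m + 1/2) := by
    rw [max_lt_iff]
    constructor <;> rw [lt_min_iff]
    · exact ⟨huv, h2⟩
    · exact ⟨h1, by linarith⟩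
  apply uncount_blk hlt
  refine hc.mono ?_
  rintro x ⟨⟨hx1, hx2⟩, hirr⟩
  refine ⟨Or.inr (Or.inl ⟨m, ⟨?_, ?_⟩, hirr⟩), ?_, ?_⟩
  · exact (le_max_right u (ee m)).trans_lt hx1
  · exact hx2.trans_le (min_le_right v (ee m + 1/2))
  · exact (le_max_left u (ee m)).trans_lt hx1
  · exact hx2.trans_le (min_le_left v (ee m + 1/2))

lemma key_uncount' (A : Set ℕ) {u v : ℝ} (h : ¬ (SS A ∩ Set.Ioo u v).Countable) :
    ∃ m, ee m < v ∧ u < ee m + 1/2 := by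
  by_contra hc
  push_neg at hc
  exact h (key_count A (by intro m hm; exact absurd hm.2 (not_lt.mpr (hc m hm.1))))

/-- "left condensation edge" predicate, purely order-theoretic on a suborder. -/
def Pt {S : Set ℝ} (x : ↥S) : Prop :=
  (∃ a : ↥S, a < x ∧ (Set.Ioo a x).Countable) ∧
  ∀ b : ↥S, x < b → ¬ (Set.Ioo x b).Countable

/-- "right condensation edge" predicate. -/
def Qt {S : Set ℝ} (x : ↥S) : Prop :=
  (∀ a : ↥S, a < x → ¬ (Set.Ioo a x).Countable) ∧
  ∃ b : ↥S, x < b ∧ (Set.Ioo x b).Countable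

lemma bridge {S : Set ℝ} (a b : ↥S) :
    (Set.Ioo a b).Countable ↔ (S ∩ Set.Ioo (a:ℝ) (b:ℝ)).Countable := by
  have himg : Subtype.val '' Set.Ioo a b = S ∩ Set.Ioo (a:ℝ) (b:ℝ) := by
    ext x
    constructor
    · rintro ⟨y, ⟨h1, h2⟩, rfl⟩
      exact ⟨y.2, Subtype.coe_lt_coe.mpr h1, Subtype.coe_lt_coe.mpr h2⟩
    · rintro ⟨hxS, h1, h2⟩
      exact ⟨⟨x, hxS⟩, ⟨Subtype.coe_lt_coe.mp h1, Subtype.coe_lt_coe.mp h2⟩, rfl⟩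
  constructor
  · intro hc; rw [← himg]; exact hc.image _
  · intro hc
    rw [← himg] at hc
    exact ((hc.preimage Subtype.val_injective).mono (Set.subset_preimage_image _ _))

lemma Pt_map {S T : Set ℝ} (f : ↥S ≃o ↥T) {x : ↥S} (h : Pt x) : Pt (f x) := by
  obtain ⟨⟨a, hax, hac⟩, hR⟩ := h
  constructor
  · refine ⟨f a, f.lt_iff_lt.mpr hax, ?_⟩
    rw [← f.image_Ioo]
    exact hac.image _
  · intro b hb hc
    apply hR (f.symm b)
    · have := f.symm.lt_iff_lt.mpr hb
      rwa [f.symm_apply_apply] at this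
    · have : Set.Ioo x (f.symm b) = f.symm '' Set.Ioo (f x) b := by
        rw [f.symm.image_Ioo, f.symm_apply_apply]
      rw [this]
      exact hc.image _

lemma Qt_map {S T : Set ℝ} (f : ↥S ≃o ↥T) {x : ↥S} (h : Qt x) : Qt (f x) := by
  obtain ⟨hL, b, hxb, hbc⟩ := h
  constructor
  · intro a ha hc
    apply hL (f.symm a)
    · have := f.symm.lt_iff_lt.mpr ha
      rwa [f.symm_apply_apply] at this
    · have : Set.Ioo (f.symm a) x = f.symm '' Set.Ioo a (f x) := by
        rw [f.symm.image_Ioo, f.symm_apply_apply]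
      rw [this]
      exact hc.image _
  · refine ⟨f b, f.lt_iff_lt.mpr hxb, ?_⟩
    rw [← f.image_Ioo]
    exact hbc.image _

lemma Pt_iff (A : Set ℕ) (x : ↥(SS A)) : Pt x ↔ ∃ n, (x:ℝ) = ee n := by
  constructor
  · rintro ⟨⟨a, hax, hac⟩, hR⟩
    have hax' : (a:ℝ) < x := Subtype.coe_lt_coe.mpr hax
    have hx0 : (0:ℝ) < x := SS_pos x.2
    have hL : ∀ m, ¬(ee m < (x:ℝ) ∧ (a:ℝ) < ee m + 1/2) := by
      intro m hm
      exact key_uncount A m hax' hm.1 hm.2 ((bridge a x).mp hac)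
    -- from right condition: for every ε > 0 there is m with x ≤ ee m < x + ε
    have hRR : ∀ ε : ℝ, 0 < ε → ∃ m, (x:ℝ) ≤ ee m ∧ ee m < (x:ℝ) + ε := by
      intro ε hε
      obtain ⟨q, hq1, hq2⟩ := exists_rat_btwn (show (x:ℝ) < (x:ℝ) + ε by linarith)
      have hqS : (q:ℝ) ∈ SS A := mem_SS_rat A (hx0.trans hq1) q rfl
      have hb := hR ⟨(q:ℝ), hqS⟩ (Subtype.coe_lt_coe.mp hq1)
      rw [bridge] at hb
      obtain ⟨m, hm1, hm2⟩ := key_uncount' A hb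
      refine ⟨m, ?_, hm1.trans hq2⟩
      by_contra hlt
      push_neg at hlt
      exact hL m ⟨hlt, hax'.trans hm2⟩
    obtain ⟨n, hn1, hn2⟩ := hRR (1/2) (by norm_num)
    refine ⟨n, le_antisymm hn1 ?_⟩
    by_contra hlt
    push_neg at hlt
    obtain ⟨m, hm1, hm2⟩ := hRR (ee n - (x:ℝ)) (by linarith)
    have hmn : ee m < ee n := by linarith
    have : m < n := ee_strict.lt_iff_lt.mp hmn
    have := ee_add3 this
    linarith
  · rintro ⟨n, hxn⟩
    have hxe : (x:ℝ) = ee n := hxn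
    constructor
    · have h0 : (0:ℝ) < ee n - 1/2 := by have := ee_pos n; have := sqrt2_gt; unfold ee at *; nlinarith [Real.sqrt_nonneg 2]
      obtain ⟨q, hq1, hq2⟩ := exists_rat_btwn (show ee n - 1/2 < ee n by linarith)
      have hqS : (q:ℝ) ∈ SS A := mem_SS_rat A (h0.trans hq1) q rfl
      refine ⟨⟨(q:ℝ), hqS⟩, Subtype.coe_lt_coe.mp (by rw [hxe]; exact hq2), ?_⟩
      rw [bridge]
      apply key_count
      intro m hm
      rw [hxe] at hm
      have hmn : m < n := ee_strict.lt_iff_lt.mp hm.1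
      have := ee_add3 hmn
      simp only [Subtype.coe_mk] at hm
      linarith [hm.2]
    · intro b hb hc
      rw [bridge] at hc
      have hb' : (x:ℝ) < b := Subtype.coe_lt_coe.mpr hb
      exact key_uncount A n hb' (by rw [← hxe]; exact hb') (by rw [hxe]; linarith) hc

lemma Qt_iff (A : Set ℕ) (x : ↥(SS A)) : Qt x ↔ ∃ n ∈ A, (x:ℝ) = ee n + 1/2 := by
  constructor
  · rintro ⟨hL, b, hxb, hbc⟩
    have hxb' : (x:ℝ) < b := Subtype.coe_lt_coe.mpr hxb
    have hx0 : (0:ℝ) < x := SS_pos x.2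
    have hRc : ∀ m, ¬(ee m < (b:ℝ) ∧ (x:ℝ) < ee m + 1/2) := by
      intro m hm
      exact key_uncount A m hxb' hm.1 hm.2 ((bridge x b).mp hbc)
    have hLL : ∀ ε : ℝ, 0 < ε → ∃ m, (x:ℝ) - ε < ee m + 1/2 ∧ ee m + 1/2 ≤ (x:ℝ) := by
      intro ε hε
      have hδ : 0 < min ε ((x:ℝ)/2) := lt_min hε (by linarith)
      obtain ⟨q, hq1, hq2⟩ := exists_rat_btwn (show (x:ℝ) - min ε ((x:ℝ)/2) < (x:ℝ) by linarith)
      have hq0 : (0:ℝ) < q := by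
        have : (x:ℝ) - min ε ((x:ℝ)/2) ≥ (x:ℝ)/2 := by
          have := min_le_right ε ((x:ℝ)/2); linarith
        linarith
      have hqS : (q:ℝ) ∈ SS A := mem_SS_rat A hq0 q rfl
      have ha := hL ⟨(q:ℝ), hqS⟩ (Subtype.coe_lt_coe.mp hq2)
      rw [bridge] at ha
      obtain ⟨m, hm1, hm2⟩ := key_uncount' A ha
      refine ⟨m, ?_, ?_⟩
      · have : (x:ℝ) - ε ≤ (x:ℝ) - min ε ((x:ℝ)/2) := by
          have := min_le_left ε ((x:ℝ)/2); linarith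
        linarith
      · by_contra hlt
        push_neg at hlt
        exact hRc m ⟨hm1.trans hxb', hlt⟩
    obtain ⟨n, hn1, hn2⟩ := hLL (1/2) (by norm_num)
    have hxeq : (x:ℝ) = ee n + 1/2 := by
      rcases eq_or_lt_of_le hn2 with h | h
      · exact h.symm
      · exfalso
        obtain ⟨m, hm1, hm2⟩ := hLL ((x:ℝ) - (ee n + 1/2)) (by linarith)
        have hnm : ee n + 1/2 < ee m + 1/2 := by linarith
        have : n < m := ee_strict.lt_iff_lt.mp (by linarith)
        have := ee_add3 this
        linarith
    -- now show n ∈ A using x ∈ SS A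
    rcases x.2 with ⟨_, q, hq⟩ | ⟨m, ⟨h1, h2⟩, _⟩ | ⟨m, hm⟩ | ⟨m, hmA, hm⟩
    · exact absurd ⟨q, hq.trans hxeq⟩ (irr_ee_half n)
    · exfalso
      rw [hxeq] at h1 h2
      rcases lt_trichotomy m n with h | h | h
      · have := ee_add3 h; linarith
      · subst h; linarith
      · have := ee_add3 h; linarith
    · exfalso
      rw [hxeq] at hm
      rcases lt_trichotomy m n with h | h | h
      · have := ee_add3 h; linarith
      · subst h; linarith
      · have := ee_add3 h; linarith
    · rw [hxeq] at hm
      have : m = n := by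
        rcases lt_trichotomy m n with h | h | h
        · have := ee_add3 h; exfalso; linarith
        · exact h
        · have := ee_add3 h; exfalso; linarith
      exact ⟨n, this ▸ hmA, hxeq⟩
  · rintro ⟨n, hnA, hxn⟩
    have hxe : (x:ℝ) = ee n + 1/2 := hxn
    constructor
    · intro a ha hc
      rw [bridge] at hc
      have ha' : (a:ℝ) < x := Subtype.coe_lt_coe.mpr ha
      exact key_uncount A n ha' (by rw [hxe]; linarith) (by rw [← hxe]; exact ha') hc
    · obtain ⟨q, hq1, hq2⟩ := exists_rat_btwn (show (x:ℝ) < ee n + 1 by rw [hxe]; linarith)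
      have hqS : (q:ℝ) ∈ SS A := mem_SS_rat A ((SS_pos x.2).trans hq1) q rfl
      refine ⟨⟨(q:ℝ), hqS⟩, Subtype.coe_lt_coe.mp hq1, ?_⟩
      rw [bridge]
      apply key_count
      intro m hm
      rw [hxe] at hm
      obtain ⟨hm1, hm2⟩ := hm
      rcases lt_or_ge n m with h | h
      · have := ee_add3 h; linarith
      · rcases lt_or_eq_of_le h with h | h
        · have := ee_add3 h; linarith
        · subst h; linarith
  
lemma no_iso {A B : Set ℕ} {n : ℕ} (hA : n ∈ A) (hB : n ∉ B)
    (f : ↥(SS A) ≃o ↥(SS B)) : False := by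
  -- the enumeration of P-points is preserved
  have hPA : ∀ k : ℕ, Pt (⟨ee k, mem_SS_ee A k⟩ : ↥(SS A)) := by
    intro k; rw [Pt_iff]; exact ⟨k, rfl⟩
  have hPB : ∀ k : ℕ, Pt (⟨ee k, mem_SS_ee B k⟩ : ↥(SS B)) := by
    intro k; rw [Pt_iff]; exact ⟨k, rfl⟩
  have hg : ∀ k : ℕ, ∃ m, ((f ⟨ee k, mem_SS_ee A k⟩ : ↥(SS B)) : ℝ) = ee m := by
    intro k
    exact (Pt_iff B _).mp (Pt_map f (hPA k))
  have hh : ∀ k : ℕ, ∃ m, ((f.symm ⟨ee k, mem_SS_ee B k⟩ : ↥(SS A)) : ℝ) = ee m := by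
    intro k
    exact (Pt_iff A _).mp (Pt_map f.symm (hPB k))
  choose g hgspec using hg
  choose h hhspec using hh
  have hgs : StrictMono g := by
    intro k l hkl
    have : (⟨ee k, mem_SS_ee A k⟩ : ↥(SS A)) < ⟨ee l, mem_SS_ee A l⟩ :=
      Subtype.coe_lt_coe.mp (ee_strict hkl)
    have := f.lt_iff_lt.mpr this
    have := Subtype.coe_lt_coe.mpr this
    rw [hgspec k, hgspec l] at this
    exact ee_strict.lt_iff_lt.mp this
  have hhs : StrictMono h := by
    intro k l hkl
    have : (⟨ee k, mem_SS_ee B k⟩ : ↥(SS B)) < ⟨ee l, mem_SS_ee B l⟩ :=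
      Subtype.coe_lt_coe.mp (ee_strict hkl)
    have := f.symm.lt_iff_lt.mpr this
    have := Subtype.coe_lt_coe.mpr this
    rw [hhspec k, hhspec l] at this
    exact ee_strict.lt_iff_lt.mp this
  have hgh : ∀ k, h (g k) = k := by
    intro k
    have h1 : f ⟨ee k, mem_SS_ee A k⟩ = ⟨ee (g k), mem_SS_ee B (g k)⟩ :=
      Subtype.ext (hgspec k)
    have h2 : f.symm ⟨ee (g k), mem_SS_ee B (g k)⟩ = ⟨ee k, mem_SS_ee A k⟩ := by
      rw [← h1, f.symm_apply_apply]
    have := hhspec (g k)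
    rw [h2] at this
    exact (ee_strict.injective this.symm)
  have hgid : ∀ k, g k = k := by
    intro k
    have h1 : k ≤ g k := hgs.le_apply
    have h2 : g k ≤ h (g k) := hhs.le_apply
    rw [hgh k] at h2
    omega
  -- now transport the Q-point at ee n + 1/2
  have hQ : Qt (⟨ee n + 1/2, mem_SS_half hA⟩ : ↥(SS A)) := by
    rw [Qt_iff]; exact ⟨n, hA, rfl⟩
  obtain ⟨m, hmB, hm⟩ := (Qt_iff B _).mp (Qt_map f hQ)
  -- position: between f(ee n) = ee n and f(ee (n+1)) = ee (n+1)
  have hlow : (⟨ee n, mem_SS_ee A n⟩ : ↥(SS A)) < ⟨ee n + 1/2, mem_SS_half hA⟩ :=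
    Subtype.coe_lt_coe.mp (by norm_num)
  have hhigh : (⟨ee n + 1/2, mem_SS_half hA⟩ : ↥(SS A)) < ⟨ee (n+1), mem_SS_ee A (n+1)⟩ :=
    Subtype.coe_lt_coe.mp (by have := ee_add3 (Nat.lt_succ_self n); simp only []; linarith)
  have h1 := Subtype.coe_lt_coe.mpr (f.lt_iff_lt.mpr hlow)
  have h2 := Subtype.coe_lt_coe.mpr (f.lt_iff_lt.mpr hhigh)
  rw [hgspec n, hm] at h1
  rw [hgspec (n+1), hm] at h2
  rw [hgid n] at h1
  rw [hgid (n+1)] at h2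
  have hee : ee (n+1) = ee n + 3 := by unfold ee; push_cast; ring
  rw [hee] at h2
  have hmn : m = n := by
    rcases lt_trichotomy m n with hc | hc | hc
    · have := ee_add3 hc; exfalso; linarith
    · exact hc
    · have := ee_add3 hc; exfalso; linarith
  exact hB (hmn ▸ hmB)

/-- There is a family `(S_A)_{A ⊆ ω}` of subsets of `(0,∞)`, each dense in `(0,∞)`,
which are pairwise non-order-isomorphic as suborders of ℝ. -/
theorem stmt_14 :
    ∃ S : Set ℕ → Set ℝ,
      (∀ A : Set ℕ, S A ⊆ Set.Ioi (0:ℝ)) ∧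
      (∀ A : Set ℕ, ∀ a b : ℝ, 0 ≤ a → a < b → ∃ x ∈ S A, a < x ∧ x < b) ∧
      (∀ A B : Set ℕ, A ≠ B → IsEmpty ((S A) ≃o (S B))) := by
  refine ⟨SS, ?_, ?_, ?_⟩
  · intro A x hx
    exact SS_pos hx
  · intro A a b ha hab
    obtain ⟨q, hq1, hq2⟩ := exists_rat_btwn hab
    exact ⟨(q:ℝ), mem_SS_rat A (lt_of_le_of_lt ha hq1) q rfl, hq1, hq2⟩
  · intro A B hAB
    constructor
    intro f
    have : ∃ n, ¬(n ∈ A ↔ n ∈ B) := by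
      by_contra hc
      push_neg at hc
      exact hAB (Set.ext fun n => hc n)
    obtain ⟨n, hn⟩ := this
    rcases Classical.em (n ∈ A) with h | h
    · exact no_iso h (fun hb => hn ⟨fun _ => hb, fun _ => h⟩) f
    · have hB : n ∈ B := by tauto
      exact no_iso hB h f.symm
end

section
/- Fix a cardinal κ ≥ 2 and let U_κ be the set of all functions r : [0,a) → κ, for nonnegative reals a, which are piecewise constant to the right (for every t ∈ [0,a) there is ε > 0 such that r is constant on [t, t+ε)), partially ordered by function extension. Then U_κ is a branchwise-real tree, and the function ℓ sending r : [0,a) → κ to a is a continuous ℝ-grading of U_κ. -/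
/-- The universal tree `U_κ` over a type `C` of colours: functions `r : [0,a) → C`
(coded as total `Option C`-valued functions on ℝ which are `some` exactly on `[0,a)`)
which are piecewise constant to the right. -/
@[ext]
structure UTree (C : Type) : Type where
  dom : ℝ
  fn : ℝ → Option C
  dom_nonneg : 0 ≤ dom
  isSome_iff : ∀ t : ℝ, (fn t).isSome ↔ (0 ≤ t ∧ t < dom)
  piecewise_const : ∀ t : ℝ, 0 ≤ t → t < dom →
    ∃ ε > (0:ℝ), ∀ s : ℝ, t ≤ s → s < t + ε → s < dom → fn s = fn t

/-- `U_κ` is ordered by function extension. -/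
instance (C : Type) : PartialOrder (UTree C) where
  le r s := r.dom ≤ s.dom ∧ ∀ t : ℝ, 0 ≤ t → t < r.dom → s.fn t = r.fn t
  le_refl r := ⟨le_rfl, fun _ _ _ => rfl⟩
  le_trans r s t hrs hst :=
    ⟨hrs.1.trans hst.1, fun u hu hur =>
      (hst.2 u hu (hur.trans_le hrs.1)).trans (hrs.2 u hu hur)⟩
  le_antisymm r s hrs hsr := by
    have hd : r.dom = s.dom := le_antisymm hrs.1 hsr.1
    have hf : r.fn = s.fn := by
      funext t
      by_cases ht : 0 ≤ t ∧ t < r.dom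
      · exact (hrs.2 t ht.1 ht.2).symm
      · have h1 : r.fn t = none := by
          rw [← Option.not_isSome_iff_eq_none, r.isSome_iff]; exact ht
        have h2 : s.fn t = none := by
          rw [← Option.not_isSome_iff_eq_none, s.isSome_iff, ← hd]; exact ht
        rw [h1, h2]
    ext : 1
    · exact hd
    · exact hf

namespace UTree

variable {C : Type}

lemma le_def {r s : UTree C} :
    r ≤ s ↔ r.dom ≤ s.dom ∧ ∀ t : ℝ, 0 ≤ t → t < r.dom → s.fn t = r.fn t := Iff.rfl

lemma fn_eq_none {r : UTree C} {t : ℝ} (h : ¬(0 ≤ t ∧ t < r.dom)) : r.fn t = none := by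
  rw [← Option.not_isSome_iff_eq_none, r.isSome_iff]; exact h

/-- Restriction of `y` to `[0, d)`. -/
noncomputable def restrict (y : UTree C) (d : ℝ) (h0 : 0 ≤ d) (hd : d ≤ y.dom) : UTree C where
  dom := d
  fn t := if t < d then y.fn t else none
  dom_nonneg := h0
  isSome_iff t := by
    by_cases h : t < d
    · rw [if_pos h, y.isSome_iff]
      exact ⟨fun ht => ⟨ht.1, h⟩, fun ht => ⟨ht.1, lt_of_lt_of_le h hd⟩⟩
    · rw [if_neg h]
      simp only [Option.isSome_none, Bool.false_eq_true, false_iff]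
      exact fun ht => h ht.2
  piecewise_const t ht htd := by
    obtain ⟨ε, hε, hc⟩ := y.piecewise_const t ht (lt_of_lt_of_le htd hd)
    refine ⟨ε, hε, fun s hts hsε hsd => ?_⟩
    rw [if_pos hsd, if_pos htd]
    exact hc s hts hsε (lt_of_lt_of_le hsd hd)

@[simp] lemma restrict_dom (y : UTree C) (d : ℝ) (h0 : 0 ≤ d) (hd : d ≤ y.dom) :
    (restrict y d h0 hd).dom = d := rfl

lemma restrict_fn_of_lt (y : UTree C) {d t : ℝ} (h0 : 0 ≤ d) (hd : d ≤ y.dom)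
    (ht : t < d) : (restrict y d h0 hd).fn t = y.fn t := if_pos ht

lemma restrict_le (y : UTree C) (d : ℝ) (h0 : 0 ≤ d) (hd : d ≤ y.dom) :
    restrict y d h0 hd ≤ y :=
  ⟨hd, fun t _ htd => (restrict_fn_of_lt y h0 hd htd).symm⟩

lemma le_restrict {x y : UTree C} (hxy : x ≤ y) {d : ℝ} (h0 : 0 ≤ d) (hd : d ≤ y.dom)
    (hxd : x.dom ≤ d) : x ≤ restrict y d h0 hd := by
  refine ⟨hxd, fun t ht htx => ?_⟩
  rw [restrict_fn_of_lt y h0 hd (lt_of_lt_of_le htx hxd)]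
  exact hxy.2 t ht htx

lemma eq_restrict {z y : UTree C} (h : z ≤ y) (h0 : 0 ≤ z.dom) (hd : z.dom ≤ y.dom) :
    z = restrict y z.dom h0 hd := by
  have hfn : ∀ t, z.fn t = (restrict y z.dom h0 hd).fn t := by
    intro t
    show z.fn t = if t < z.dom then y.fn t else none
    by_cases ht : t < z.dom
    · rw [if_pos ht]
      by_cases ht0 : 0 ≤ t
      · exact (h.2 t ht0 ht).symm
      · rw [fn_eq_none (r := z) (fun hh => ht0 hh.1),
          fn_eq_none (r := y) (fun hh => ht0 hh.1)]
    · rw [if_neg ht, fn_eq_none (r := z) (fun hh => ht hh.2)]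
  ext : 1
  · rfl
  · funext t; exact hfn t

lemma restrict_mono (y : UTree C) {a b : ℝ} (h0a : 0 ≤ a) (ha : a ≤ y.dom)
    (h0b : 0 ≤ b) (hb : b ≤ y.dom) (hab : a ≤ b) :
    restrict y a h0a ha ≤ restrict y b h0b hb := by
  refine ⟨hab, fun t _ hta => ?_⟩
  rw [restrict_fn_of_lt y h0a ha hta, restrict_fn_of_lt y h0b hb (lt_of_lt_of_le hta hab)]

lemma le_of_ge_of_dom_le {r s : UTree C} (h : s ≤ r) (hd : r.dom ≤ s.dom) : r ≤ s :=
  ⟨hd, fun t ht htr => (h.2 t ht (lt_of_lt_of_le htr hd)).symm⟩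

lemma dom_strictMono : StrictMono (fun r : UTree C => r.dom) := by
  intro r s hrs
  rcases lt_or_eq_of_le hrs.le.1 with h | h
  · exact h
  · exact absurd (le_antisymm hrs.le (le_of_ge_of_dom_le hrs.le h.ge)) hrs.ne

/-- The root of the tree: the empty function. -/
def root : UTree C where
  dom := 0
  fn _ := none
  dom_nonneg := le_rfl
  isSome_iff t := by
    simp only [Option.isSome_none, Bool.false_eq_true, false_iff]
    exact fun h => absurd (h.1.trans_lt h.2) (lt_irrefl 0)
  piecewise_const t ht htd := absurd (ht.trans_lt htd) (lt_irrefl 0)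

lemma root_le (x : UTree C) : (root : UTree C) ≤ x :=
  ⟨x.dom_nonneg, fun t ht htd => absurd htd (not_lt.2 ht)⟩

lemma predecessors_chain (x : UTree C) : IsChain (· ≤ ·) {y : UTree C | y ≤ x} := by
  intro r hr s hs _
  rcases le_total r.dom s.dom with h | h
  · exact Or.inl ⟨h, fun t ht htr => ((hs : s ≤ x).2 t ht (lt_of_lt_of_le htr h)).symm.trans
      ((hr : r ≤ x).2 t ht htr)⟩
  · exact Or.inr ⟨h, fun t ht hts => ((hr : r ≤ x).2 t ht (lt_of_lt_of_le hts h)).symm.trans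
      ((hs : s ≤ x).2 t ht hts)⟩

/-- Meets exist. -/
lemma exists_meet (x y : UTree C) :
    ∃ m : UTree C, m ≤ x ∧ m ≤ y ∧ ∀ z : UTree C, z ≤ x → z ≤ y → z ≤ m := by
  set S : Set ℝ := {t | 0 ≤ t ∧ t ≤ min x.dom y.dom ∧
    ∀ s : ℝ, 0 ≤ s → s < t → x.fn s = y.fn s} with hS
  have hS0 : (0:ℝ) ∈ S :=
    ⟨le_rfl, le_min x.dom_nonneg y.dom_nonneg, fun s hs hs0 => absurd (hs.trans_lt hs0)
      (lt_irrefl 0)⟩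
  have hSne : S.Nonempty := ⟨0, hS0⟩
  have hSbdd : BddAbove S := ⟨min x.dom y.dom, fun t ht => ht.2.1⟩
  set d : ℝ := sSup S with hd
  have hd0 : 0 ≤ d := le_csSup hSbdd hS0
  have hdm : d ≤ min x.dom y.dom := csSup_le hSne fun t ht => ht.2.1
  have hdx : d ≤ x.dom := hdm.trans (min_le_left _ _)
  have hdy : d ≤ y.dom := hdm.trans (min_le_right _ _)
  have hkey : ∀ s : ℝ, 0 ≤ s → s < d → x.fn s = y.fn s := by
    intro s hs hsd
    obtain ⟨t, htS, hst⟩ := exists_lt_of_lt_csSup hSne hsd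
    exact htS.2.2 s hs hst
  refine ⟨restrict x d hd0 hdx, restrict_le x d hd0 hdx, ⟨hdy, fun t ht htd => ?_⟩,
    fun z hzx hzy => ?_⟩
  · rw [restrict_fn_of_lt x hd0 hdx htd]
    exact (hkey t ht htd).symm
  · have hzS : z.dom ∈ S := ⟨z.dom_nonneg, le_min hzx.1 hzy.1,
      fun s hs hsz => (hzx.2 s hs hsz).trans (hzy.2 s hs hsz).symm⟩
    exact le_restrict hzx hd0 hdx (le_csSup hSbdd hzS)

/-- Any element of `[0, s.dom]` is the domain of some predecessor of `s` that stays
in a maximal chain containing `s`. -/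
lemma restrict_mem_branch {B : Set (UTree C)} (hB : IsBranch B) {s : UTree C}
    (hs : s ∈ B) {c : ℝ} (h0 : 0 ≤ c) (hc : c ≤ s.dom) :
    restrict s c h0 hc ∈ B := by
  set m := restrict s c h0 hc with hm
  have hchain : IsChain (· ≤ ·) (insert m B) := by
    refine hB.1.insert fun u hu _ => ?_
    rcases hB.1.total hs hu with h | h
    · exact Or.inl ((restrict_le s c h0 hc).trans h)
    · -- u ≤ s
      rcases le_total u.dom c with h' | h'
      · exact Or.inr (by
          rw [eq_restrict h u.dom_nonneg h.1, hm]
          exact restrict_mono s u.dom_nonneg h.1 h0 hc h')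
      · exact Or.inl (by
          rw [eq_restrict h u.dom_nonneg h.1, hm]
          exact restrict_mono s h0 hc u.dom_nonneg h.1 h')
  have := hB.2 hchain (Set.subset_insert m B)
  rw [this]
  exact Set.mem_insert m B

lemma branch_iso {B : Set (UTree C)} (hB : IsBranch B) :
    ∃ I : Set ℝ, I.OrdConnected ∧ Nonempty (B ≃o I) := by
  refine ⟨(fun r : UTree C => r.dom) '' B, ?_, ?_⟩
  · refine Set.ordConnected_of_Ioo fun a ha b hb _ c hc => ?_
    obtain ⟨s, hsB, hsb⟩ := hb
    obtain ⟨r, hrB, hra⟩ := ha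
    have hra' : r.dom = a := hra
    have hsb' : s.dom = b := hsb
    have h0 : 0 ≤ c := le_of_lt (lt_of_le_of_lt (hra' ▸ r.dom_nonneg) hc.1)
    have hcs : c ≤ s.dom := hsb' ▸ hc.2.le
    exact ⟨restrict s c h0 hcs, restrict_mem_branch hB hsB h0 hcs, rfl⟩
  · -- order isomorphism onto image
    have hinj : ∀ r ∈ B, ∀ s ∈ B, r.dom ≤ s.dom → r ≤ s := by
      intro r hr s hs hds
      rcases hB.1.total hr hs with h | h
      · exact h
      · exact le_of_ge_of_dom_le h hds
    refine ⟨RelIso.mk (Equiv.ofBijective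
      (fun r : B => (⟨r.1.dom, ⟨r.1, r.2, rfl⟩⟩ : (fun r : UTree C => r.dom) '' B))
      ⟨fun r s hrs => ?_, fun c => ?_⟩) ?_⟩
    · have h : r.1.dom = s.1.dom := congrArg Subtype.val hrs
      exact Subtype.ext (le_antisymm (hinj r.1 r.2 s.1 s.2 h.le) (hinj s.1 s.2 r.1 r.2 h.ge))
    · obtain ⟨r, hrB, hrc⟩ := c.2
      exact ⟨⟨r, hrB⟩, Subtype.ext hrc⟩
    · intro r s
      show r.1.dom ≤ s.1.dom ↔ r.1 ≤ s.1
      exact ⟨fun h => hinj r.1 r.2 s.1 s.2 h, fun h => h.1⟩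

lemma continuous_grading : IsContinuousGrading (fun r : UTree C => r.dom) := by
  refine ⟨dom_strictMono, fun x y hxy => ?_⟩
  have hmem : ∀ z : Set.Icc x y, x.dom ≤ z.1.dom ∧ z.1.dom ≤ y.dom :=
    fun z => ⟨z.2.1.1, z.2.2.1⟩
  have h0 : ∀ c : Set.Icc x.dom y.dom, (0:ℝ) ≤ c.1 :=
    fun c => x.dom_nonneg.trans c.2.1
  refine ⟨RelIso.mk
    ⟨fun z => ⟨z.1.dom, (hmem z).1, (hmem z).2⟩,
     fun c => ⟨restrict y c.1 (h0 c) c.2.2,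
       le_restrict hxy.le (h0 c) c.2.2 c.2.1, restrict_le y c.1 (h0 c) c.2.2⟩,
     fun z => Subtype.ext (eq_restrict z.2.2 z.1.dom_nonneg z.2.2.1).symm,
     fun c => Subtype.ext rfl⟩
    ?_, fun z => rfl⟩
  intro z w
  simp only [Equiv.coe_fn_mk, Subtype.mk_le_mk]
  constructor
  · intro h
    have hz := eq_restrict z.2.2 z.1.dom_nonneg z.2.2.1
    have hw := eq_restrict w.2.2 w.1.dom_nonneg w.2.2.1
    show z.1 ≤ w.1
    rw [hz, hw]
    exact restrict_mono y _ _ _ _ h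
  · exact fun h => h.1

end UTree

/-- For any type of colours `C` with `2 ≤ #C`, the universal tree `U_C` is a
branchwise-real tree, and the map sending `r : [0,a) → C` to `a` is a continuous
ℝ-grading of it. -/
theorem stmt_17 (C : Type) (hC : 2 ≤ Cardinal.mk C) :
    IsBranchwiseReal (UTree C) ∧ IsContinuousGrading (fun r : UTree C => r.dom) := by
  refine ⟨⟨⟨⟨UTree.root, UTree.root_le⟩, UTree.predecessors_chain⟩,
    fun B hB => UTree.branch_iso hB, UTree.exists_meet⟩, UTree.continuous_grading⟩
end

section
/- Let a ≥ 0 be real, let κ be a nonempty set, and let r : [0,a) → κ be piecewise constant to the right: for every t ∈ [0,a) there is ε > 0 such that r is constant on [t, t+ε). Then the set of value-change points of r — those t ∈ [0,a) such that for every ε > 0 there is s ∈ (t−ε, t) ∩ [0,a) with r(s) ≠ r(t) — is well-ordered by the usual order on ℝ. -/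
/-- If `r : [0,a) → C` is piecewise constant to the right, then its set of
value-change points is well-ordered by the usual order on ℝ: every nonempty
subset of it has a least element. -/
theorem stmt_19 (C : Type) (hne : Nonempty C) (a : ℝ) (ha : 0 ≤ a) (r : ℝ → C)
    (hr : ∀ t : ℝ, 0 ≤ t → t < a →
      ∃ ε > (0:ℝ), ∀ s : ℝ, t ≤ s → s < t + ε → s < a → r s = r t) :
    ∀ S : Set ℝ,
      S ⊆ {t : ℝ | (0 ≤ t ∧ t < a) ∧
        ∀ ε > (0:ℝ), ∃ s : ℝ, t - ε < s ∧ s < t ∧ 0 ≤ s ∧ r s ≠ r t} →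
      S.Nonempty → ∃ m ∈ S, ∀ s ∈ S, m ≤ s := by
  intro S hS ⟨t₀, ht₀⟩
  set m := sInf S with hm
  have hbdd : BddBelow S := ⟨0, fun x hx => (hS hx).1.1⟩
  have hlb : ∀ s ∈ S, m ≤ s := fun s hs => csInf_le hbdd hs
  have hm0 : 0 ≤ m := le_csInf ⟨t₀, ht₀⟩ (fun x hx => (hS hx).1.1)
  have hma : m < a := lt_of_le_of_lt (hlb t₀ ht₀) (hS ht₀).1.2
  obtain ⟨ε, hε, hconst⟩ := hr m hm0 hma
  -- there is t ∈ S with t < m + ε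
  obtain ⟨t, htS, htlt⟩ := exists_lt_of_csInf_lt ⟨t₀, ht₀⟩ (by linarith : m < m + ε)
  have hmt : m ≤ t := hlb t htS
  rcases eq_or_lt_of_le hmt with heq | hlt
  · exact ⟨m, heq ▸ htS, hlb⟩
  · exfalso
    obtain ⟨s, hs1, hs2, hs3, hs4⟩ := (hS htS).2 (t - m) (by linarith)
    have hms : m ≤ s := by linarith
    have hta : t < a := (hS htS).1.2
    have h1 : r s = r m := hconst s hms (by linarith) (by linarith)
    have h2 : r t = r m := hconst t hmt htlt hta
    exact hs4 (h1.trans h2.symm)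
end
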